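/- arXiv:1612.05833 — 4 statements merged into one kernel-verified Lean document; each statement's English description precedes it below -/
import Mathlib

section
/- Fix d ≥ 1, a free action a : ℤ^d ↷ X, and f : X → ℝ. Suppose there is a function Φ : ℕ → ℝ such that for every y ∈ X and every n ≥ 0, |∑_{z ∈ R_{2^n} · y} f(z)| < Φ(2^n), and the constant c = 2^{−(d−1)} ∑_{n=0}^{∞} Φ(2^n)/2^{n(d−1)} is finite. Then the function ψ defined by ψ(y,z) = ψ_y(y,z) is an f-flow on the graph G_a bounded by the constant c (i.e., |ψ(y,z)| ≤ c on every edge). -/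
open Finset

/-- `Γ₁ = {γ ∈ ℤᵈ : ‖γ‖_∞ = 1}`, the generators of the graph `G_a`. -/
def Gamma1 (d : ℕ) : Finset (Fin d → ℤ) :=
  (Fintype.piFinset fun _ : Fin d => ({-1, 0, 1} : Finset ℤ)).erase 0

/-- `R_N = {(n_1, …, n_d) ∈ ℤᵈ : 0 ≤ n_i < N}`. -/
noncomputable def boxZ (d N : ℕ) : Finset (Fin d → ℤ) :=
  Fintype.piFinset fun _ : Fin d => Finset.Ico (0 : ℤ) (N : ℤ)

/-- For a coset `h + (2ⁿℤ)ᵈ` of `ℤᵈ/(2ⁿℤ)ᵈ` (given by a representative `h`) and `g ∈ ℤᵈ`,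
the unique `h' ∈ h + (2ⁿℤ)ᵈ` with `g ∈ h' + R_{2ⁿ}`; so `h' + R_{2ⁿ}` is the block of the
partition `P_{x,h}` (in coordinates) containing `g`.  This depends only on `h mod 2ⁿ`. -/
def latticeBase (d n : ℕ) (h g : Fin d → ℤ) : Fin d → ℤ :=
  fun i => g i - (g i - h i) % ((2 : ℤ) ^ n)

/-- `∑_{z ∈ [y]_{(x,h)}} f(z)` where `y = a g x` and the block is at level `n` with coset
(representative) `h`. -/
noncomputable def blockSum {X : Type*} (d : ℕ) (a : (Fin d → ℤ) → X → X) (f : X → ℝ) (x : X)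
    (n : ℕ) (h g : Fin d → ℤ) : ℝ :=
  ∑ r ∈ boxZ d (2 ^ n), f (a (latticeBase d n h g + r) x)

/-- The set `U_{x,h}(y,γ)` in coordinates: for `y = a g x`, the element
`z = a (g − i•γ) x ∈ U_{x,h}(y,γ)` is recorded by the index `i ∈ [0, 2^{n−1})`;
the conditions say `z ∈ [y]_{(x,h)}`, `(2^{n−1}γ)·z ∈ [y]_{(x,h)}` and `y = (iγ)·z`. -/
noncomputable def Uidx (d n : ℕ) (h g γ : Fin d → ℤ) : Finset ℤ :=
  (Finset.Ico (0 : ℤ) ((2 : ℤ) ^ (n - 1))).filter fun i =>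
    latticeBase d n h (g - i • γ) = latticeBase d n h g ∧
    latticeBase d n h ((g - i • γ) + ((2 : ℤ) ^ (n - 1)) • γ) = latticeBase d n h g

/-- `φ_{x,h}(y, γ·y) = 2^{−nd} · n_{x,h}(y, γ·y) · ∑_{z ∈ Q_{x,h}(y,γ)} f(z)` in
coordinates (`y = a g x`); here `Q_{x,h}(y,γ)` is the (unique) level-`(n−1)` subblock
containing the elements of `U_{x,h}(y,γ)`, computed from its least index. -/
noncomputable def phiFlow {X : Type*} (d : ℕ) (a : (Fin d → ℤ) → X → X) (f : X → ℝ)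
    (x : X) (n : ℕ) (h g γ : Fin d → ℤ) : ℝ :=
  if hs : (Uidx d n h g γ).Nonempty then
    ((Uidx d n h g γ).card : ℝ) / 2 ^ (n * d) *
      blockSum d a f x (n - 1) h (g - ((Uidx d n h g γ).min' hs) • γ)
  else 0

/-- `ψ_x(y, z) = ∑_{n > 0} 2^{−nd} ∑_{h ∈ ℤᵈ/(2ⁿℤ)ᵈ} (φ_{x,h}(y,z) − φ_{x,h}(z,y))`,
in coordinates: `y = a g x` and `z = γ·y` has coordinate `g + γ`; the sum over the
cosets `h ∈ ℤᵈ/(2ⁿℤ)ᵈ` is taken over the transversal `R_{2ⁿ}`. -/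
noncomputable def psiX {X : Type*} (d : ℕ) (a : (Fin d → ℤ) → X → X) (f : X → ℝ)
    (x : X) (g γ : Fin d → ℤ) : ℝ :=
  ∑' n : ℕ, (1 / 2 ^ ((n + 1) * d)) *
    ∑ h ∈ boxZ d (2 ^ (n + 1)),
      (phiFlow d a f x (n + 1) h g γ - phiFlow d a f x (n + 1) h (g + γ) (-γ))

def lb1 (N a x : ℤ) : ℤ := x - (x - a) % N

lemma latticeBase_apply (d n : ℕ) (h g : Fin d → ℤ) (j : Fin d) :
    latticeBase d n h g j = lb1 ((2:ℤ)^n) (h j) (g j) := rfl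

lemma lb1_sub_nonneg {N : ℤ} (hN : 0 < N) (a x : ℤ) : 0 ≤ x - lb1 N a x := by
  simp only [lb1]; have := Int.emod_nonneg (x - a) (ne_of_gt hN); omega

lemma lb1_sub_lt {N : ℤ} (hN : 0 < N) (a x : ℤ) : x - lb1 N a x < N := by
  simp only [lb1]; have := Int.emod_lt_of_pos (x - a) hN; omega

lemma lb1_dvd (N a x : ℤ) : N ∣ lb1 N a x - a := by
  simp only [lb1]
  have h := Int.emod_def (x - a) N
  have : x - (x - a) % N - a = N * ((x - a) / N) := by omega
  exact Dvd.intro _ this.symm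

lemma lb1_unique {N c a x : ℤ} (hc : N ∣ c - a) (h0 : 0 ≤ x - c) (h1 : x - c < N) :
    lb1 N a x = c := by
  obtain ⟨k, hk⟩ := hc
  have : x - a = (x - c) + N * k := by omega
  simp only [lb1, this, Int.add_mul_emod_self_left, Int.emod_eq_of_lt h0 h1]
  omega

lemma lb1_eq_iff {N : ℤ} (hN : 0 < N) (a x y : ℤ) :
    lb1 N a y = lb1 N a x ↔ 0 ≤ y - lb1 N a x ∧ y - lb1 N a x < N := by
  constructor
  · intro h; rw [← h]; exact ⟨lb1_sub_nonneg hN a y, lb1_sub_lt hN a y⟩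
  · rintro ⟨h0, h1⟩; exact lb1_unique (lb1_dvd N a x) h0 h1

lemma lb1_congr {N a a' : ℤ} (x : ℤ) (hd : N ∣ a - a') : lb1 N a x = lb1 N a' x := by
  obtain ⟨k, hk⟩ := hd
  have : x - a' = (x - a) + N * k := by omega
  simp only [lb1, this, Int.add_mul_emod_self_left]

-- vector versions
lemma lb_dvd (d n : ℕ) (h g : Fin d → ℤ) (j : Fin d) :
    ((2:ℤ)^n) ∣ latticeBase d n h g j - h j := lb1_dvd _ _ _

lemma two_pow_pos (n : ℕ) : (0:ℤ) < 2 ^ n := by positivity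

lemma lb_sub_nonneg (d n : ℕ) (h g : Fin d → ℤ) (j : Fin d) :
    0 ≤ g j - latticeBase d n h g j := lb1_sub_nonneg (two_pow_pos n) _ _

lemma lb_sub_lt (d n : ℕ) (h g : Fin d → ℤ) (j : Fin d) :
    g j - latticeBase d n h g j < 2^n := lb1_sub_lt (two_pow_pos n) _ _

lemma lb_eq_iff (d n : ℕ) (h g u : Fin d → ℤ) :
    latticeBase d n h u = latticeBase d n h g ↔
      ∀ j, 0 ≤ u j - latticeBase d n h g j ∧ u j - latticeBase d n h g j < 2^n := by
  rw [funext_iff]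
  exact forall_congr' fun j => lb1_eq_iff (two_pow_pos n) _ _ _

lemma lb_unique {d n : ℕ} {h u c : Fin d → ℤ}
    (hc : ∀ j, ((2:ℤ)^n) ∣ c j - h j)
    (hb : ∀ j, 0 ≤ u j - c j ∧ u j - c j < 2^n) :
    latticeBase d n h u = c :=
  funext fun j => lb1_unique (hc j) (hb j).1 (hb j).2

lemma lb_congr {d n : ℕ} {h h' : Fin d → ℤ} (g : Fin d → ℤ)
    (hd : ∀ j, ((2:ℤ)^n) ∣ h j - h' j) :
    latticeBase d n h g = latticeBase d n h' g :=
  funext fun j => lb1_congr _ (hd j)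

lemma lb_shift (d n : ℕ) (h g s : Fin d → ℤ) :
    latticeBase d n (h + s) (g + s) = latticeBase d n h g + s := by
  funext j
  simp only [latticeBase, Pi.add_apply]
  ring_nf

-- convexity
lemma lb_conv {d n : ℕ} {h z γ : Fin d → ℤ} {K k : ℤ}
    (hk0 : 0 ≤ k) (hkK : k ≤ K)
    (hK : latticeBase d n h (z + K • γ) = latticeBase d n h z) :
    latticeBase d n h (z + k • γ) = latticeBase d n h z := by
  rw [lb_eq_iff] at hK ⊢
  intro j
  have h1 := hK j
  have h2 := lb_sub_nonneg d n h z j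
  have h3 := lb_sub_lt d n h z j
  simp only [Pi.add_apply, Pi.smul_apply, smul_eq_mul] at h1 ⊢
  rcases le_or_gt 0 (γ j) with hγ | hγ
  · have : k * γ j ≤ K * γ j := mul_le_mul_of_nonneg_right hkK hγ
    have : 0 ≤ k * γ j := mul_nonneg hk0 hγ
    omega
  · have : K * γ j ≤ k * γ j := by
      apply mul_le_mul_of_nonpos_right hkK (le_of_lt hγ)
    have : k * γ j ≤ 0 := mul_nonpos_of_nonneg_of_nonpos hk0 (le_of_lt hγ)
    omega

section
variable {X : Type*} (d : ℕ) (a : (Fin d → ℤ) → X → X) (f : X → ℝ) (x : X)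

lemma mem_Uidx (n : ℕ) (h g γ : Fin d → ℤ) (i : ℤ) :
    i ∈ Uidx d (n+1) h g γ ↔ (0 ≤ i ∧ i < 2^n) ∧
      latticeBase d (n+1) h (g - i • γ) = latticeBase d (n+1) h g ∧
      latticeBase d (n+1) h ((g - i • γ) + ((2:ℤ)^n) • γ) = latticeBase d (n+1) h g := by
  simp [Uidx, Nat.add_sub_cancel, mem_filter, mem_Ico, and_assoc]

lemma blockSum_congr {n : ℕ} {h u v : Fin d → ℤ}
    (huv : latticeBase d n h u = latticeBase d n h v) :
    blockSum d a f x n h u = blockSum d a f x n h v := by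
  unfold blockSum; rw [huv]

/-- the level-`n` base of points recorded by `Uidx` at level `n+1` doesn't depend on `i`. -/
lemma lb_of_mem_Uidx {n : ℕ} {h g γ : Fin d → ℤ}
    (hγ : ∀ j, γ j = -1 ∨ γ j = 0 ∨ γ j = 1) {i : ℤ}
    (hi : i ∈ Uidx d (n+1) h g γ) :
    latticeBase d n h (g - i • γ) =
      fun j => if γ j = 1 then latticeBase d (n+1) h g j
        else if γ j = -1 then latticeBase d (n+1) h g j + 2^n
        else latticeBase d n h g j := by
  rw [mem_Uidx] at hi
  obtain ⟨⟨hi0, hi1⟩, hc1, hc2⟩ := hi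
  rw [lb_eq_iff] at hc1 hc2
  apply lb_unique
  · intro j
    have hdv : ((2:ℤ)^n) ∣ latticeBase d (n+1) h g j - h j :=
      dvd_trans (pow_dvd_pow 2 (Nat.le_succ n)) (lb_dvd d (n+1) h g j)
    rcases hγ j with h' | h' | h'
    · rw [if_neg (by rw [h']; decide), if_pos h']
      have he : latticeBase d (n+1) h g j + 2^n - h j
          = (latticeBase d (n+1) h g j - h j) + 2^n := by ring
      rw [he]; exact dvd_add hdv dvd_rfl
    · rw [if_neg (by rw [h']; decide), if_neg (by rw [h']; decide)]
      exact lb_dvd d n h g j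
    · rw [if_pos h']; exact hdv
  · intro j
    have h1 := hc1 j
    have h2 := hc2 j
    have hp : ((2:ℤ)^(n+1)) = 2^n * 2 := by rw [pow_succ]
    have h3 := lb_sub_nonneg d n h g j
    have h4 := lb_sub_lt d n h g j
    simp only [Pi.sub_apply, Pi.add_apply, Pi.smul_apply, smul_eq_mul] at h1 h2 ⊢
    rcases hγ j with h' | h' | h'
    · rw [if_neg (by rw [h']; decide), if_pos h']
      rw [h'] at h1 h2 ⊢
      simp only [mul_neg_one] at h1 h2 ⊢
      omega
    · rw [if_neg (by rw [h']; decide), if_neg (by rw [h']; decide)]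
      rw [h'] at h1 h2 ⊢
      simp only [mul_zero] at h1 h2 ⊢
      omega
    · rw [if_pos h']
      rw [h'] at h1 h2 ⊢
      simp only [mul_one] at h1 h2 ⊢
      omega

lemma phiFlow_eq {n : ℕ} {h g γ : Fin d → ℤ}
    (hγ : ∀ j, γ j = -1 ∨ γ j = 0 ∨ γ j = 1) :
    phiFlow d a f x (n+1) h g γ =
      (∑ i ∈ Uidx d (n+1) h g γ, blockSum d a f x n h (g - i • γ)) / 2^((n+1)*d) := by
  unfold phiFlow
  split_ifs with hs
  · have hmin := Finset.min'_mem _ hs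
    have hconst : ∀ i ∈ Uidx d (n+1) h g γ,
        blockSum d a f x n h (g - i • γ) =
        blockSum d a f x n h (g - ((Uidx d (n+1) h g γ).min' hs) • γ) := by
      intro i hi
      exact blockSum_congr d a f x
        ((lb_of_mem_Uidx d hγ hi).trans (lb_of_mem_Uidx d hγ hmin).symm)
    rw [Finset.sum_congr rfl hconst, Finset.sum_const, Nat.add_sub_cancel]
    rw [nsmul_eq_mul]
    ring
  · rw [Finset.not_nonempty_iff_eq_empty] at hs
    rw [hs]
    simp

/-- the per-direction telescoping identity. -/
lemma tele (n : ℕ) (h g γ : Fin d → ℤ) :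
    (∑ i ∈ Uidx d (n+1) h g γ, blockSum d a f x n h (g - i • γ))
    - (∑ i ∈ Uidx d (n+1) h (g - γ) γ, blockSum d a f x n h ((g - γ) - i • γ))
    = (if latticeBase d (n+1) h (g + ((2:ℤ)^n) • γ) = latticeBase d (n+1) h g
        then blockSum d a f x n h g else 0)
    - (if latticeBase d (n+1) h (g - ((2:ℤ)^n) • γ) = latticeBase d (n+1) h g
        then blockSum d a f x n h (g - ((2:ℤ)^n) • γ) else 0) := by
  set M : ℤ := (2:ℤ)^n with hM
  have hM0 : 0 < M := by positivity
  set C : ℤ → Prop := fun j =>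
    latticeBase d (n+1) h ((g - j • γ) + M • γ) = latticeBase d (n+1) h (g - j • γ) with hC
  set S : ℤ → ℝ := fun j => blockSum d a f x n h (g - j • γ) with hS
  have key : ∀ j : ℤ, 0 ≤ j → j ≤ M → C j → ∀ k : ℤ, 0 ≤ k → k ≤ j →
      latticeBase d (n+1) h (g - j • γ + k • γ) = latticeBase d (n+1) h (g - j • γ) := by
    intro j hj0 hjM hCj k hk0 hkj
    exact lb_conv hk0 (le_trans hkj hjM) hCj
  have veqA : ∀ i : ℤ, g - i • γ + i • γ = g := by
    intro i; funext j
    simp only [Pi.sub_apply, Pi.add_apply, Pi.smul_apply, smul_eq_mul]; ring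
  have veqB : ∀ i : ℤ, (g - γ) - i • γ = g - (i+1) • γ := by
    intro i; funext j
    simp only [Pi.sub_apply, Pi.smul_apply, smul_eq_mul]; ring
  have veqC : ∀ j : ℤ, g - j • γ + (j-1) • γ = g - γ := by
    intro j; funext j'
    simp only [Pi.sub_apply, Pi.add_apply, Pi.smul_apply, smul_eq_mul]; ring
  have veq0 : g - (0:ℤ) • γ = g := by simp
  have veqE : g - M • γ + M • γ = g := veqA M
  -- first sum
  have e1 : (∑ i ∈ Uidx d (n+1) h g γ, blockSum d a f x n h (g - i • γ))
      = ∑ j ∈ (Finset.Ico (0:ℤ) M).filter C, S j := by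
    apply Finset.sum_congr _ (fun _ _ => rfl)
    ext i
    rw [mem_Uidx, mem_filter, mem_Ico]
    constructor
    · rintro ⟨⟨h0, h1⟩, hc1, hc2⟩
      exact ⟨⟨h0, h1⟩, hc2.trans hc1.symm⟩
    · rintro ⟨⟨h0, h1⟩, hCi⟩
      have hg : latticeBase d (n+1) h (g - i • γ + i • γ) = latticeBase d (n+1) h (g - i • γ) :=
        key i h0 (le_of_lt h1) hCi i h0 le_rfl
      rw [veqA i] at hg
      exact ⟨⟨h0, h1⟩, hg.symm, hCi.trans hg.symm⟩
  -- second sum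
  have e2 : (∑ i ∈ Uidx d (n+1) h (g - γ) γ, blockSum d a f x n h ((g - γ) - i • γ))
      = ∑ j ∈ (Finset.Ico (1:ℤ) (M+1)).filter C, S j := by
    apply Finset.sum_nbij' (fun i => i + 1) (fun j => j - 1)
    · intro i hi
      rw [mem_Uidx] at hi
      obtain ⟨⟨h0, h1⟩, hc1, hc2⟩ := hi
      rw [mem_filter, mem_Ico]
      refine ⟨⟨by omega, by omega⟩, ?_⟩
      show latticeBase d (n+1) h ((g - (i+1) • γ) + M • γ) = latticeBase d (n+1) h (g - (i+1) • γ)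
      rw [← veqB i]
      exact hc2.trans hc1.symm
    · intro j hj
      rw [mem_filter, mem_Ico] at hj
      obtain ⟨⟨h0, h1⟩, hCj⟩ := hj
      rw [mem_Uidx]
      have hgm : latticeBase d (n+1) h (g - j • γ + (j-1) • γ) = latticeBase d (n+1) h (g - j • γ) :=
        key j (by omega) (by omega) hCj (j-1) (by omega) (by omega)
      rw [veqC j] at hgm
      have hq2 : (g - γ) - (j-1) • γ = g - j • γ := by
        rw [veqB (j-1)]; norm_num
      refine ⟨⟨by omega, by omega⟩, ?_, ?_⟩
      · rw [hq2]; exact hgm.symm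
      · rw [hq2]; exact hCj.trans hgm.symm
    · intro i _; ring
    · intro j _; ring
    · intro i _
      simp only [hS]
      rw [veqB i]
  rw [e1, e2]
  -- telescope
  have i1 : Finset.Ico (0:ℤ) (M+1) = insert M (Finset.Ico (0:ℤ) M) := by
    ext j; simp only [mem_Ico, mem_insert]; omega
  have i2 : Finset.Ico (0:ℤ) (M+1) = insert 0 (Finset.Ico (1:ℤ) (M+1)) := by
    ext j; simp only [mem_Ico, mem_insert]; omega
  have hs1 : ∀ (T : Finset ℤ), ∑ j ∈ T.filter C, S j = ∑ j ∈ T, if C j then S j else 0 := by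
    intro T; rw [Finset.sum_filter]
  have hMnot : M ∉ Finset.Ico (0:ℤ) M := by simp
  have h0not : (0:ℤ) ∉ Finset.Ico (1:ℤ) (M+1) := by simp
  have e3 : ∑ j ∈ Finset.Ico (0:ℤ) (M+1), (if C j then S j else 0)
      = (∑ j ∈ Finset.Ico (0:ℤ) M, if C j then S j else 0) + (if C M then S M else 0) := by
    rw [i1, Finset.sum_insert hMnot, add_comm]
  have e4 : ∑ j ∈ Finset.Ico (0:ℤ) (M+1), (if C j then S j else 0)
      = (if C 0 then S 0 else 0) + ∑ j ∈ Finset.Ico (1:ℤ) (M+1), (if C j then S j else 0) := by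
    rw [i2, Finset.sum_insert h0not]
  have c0 : C 0 = (latticeBase d (n+1) h (g + M • γ) = latticeBase d (n+1) h g) := by
    simp only [hC]; rw [veq0]
  have cM : C M = (latticeBase d (n+1) h (g - M • γ) = latticeBase d (n+1) h g) := by
    simp only [hC]; rw [veqE]; apply propext; exact eq_comm
  have hS0 : S 0 = blockSum d a f x n h g := by simp only [hS]; rw [veq0]
  have hSM : S M = blockSum d a f x n h (g - M • γ) := by simp only [hS]
  rw [hs1, hs1]
  simp only [← c0, ← cM, ← hS0, ← hSM]
  linarith [e3, e4]

end

section
variable {X : Type*} (d : ℕ) (a : (Fin d → ℤ) → X → X) (f : X → ℝ) (x : X)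

lemma cast_two_pow (n : ℕ) : ((2^n : ℕ) : ℤ) = (2:ℤ)^n := by push_cast; ring

lemma mem_boxZ (N : ℕ) (r : Fin d → ℤ) :
    r ∈ boxZ d (2^N) ↔ ∀ j, 0 ≤ r j ∧ r j < (2:ℤ)^N := by
  simp [boxZ, Fintype.mem_piFinset, mem_Ico, cast_two_pow]

lemma boxsplit (n : ℕ) (F : (Fin d → ℤ) → ℝ) :
    ∑ r ∈ boxZ d (2^(n+1)), F r
    = ∑ q ∈ Fintype.piFinset (fun _ : Fin d => ({0,1} : Finset ℤ)),
        ∑ r ∈ boxZ d (2^n), F (((2:ℤ)^n) • q + r) := by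
  rw [← Finset.sum_product']
  have hM0 : (0:ℤ) < 2^n := by positivity
  apply Finset.sum_nbij' (i := fun r => (fun j => r j / 2^n, fun j => r j % 2^n))
    (j := fun p => ((2:ℤ)^n) • p.1 + p.2)
  · intro r hr
    rw [mem_boxZ] at hr
    rw [Finset.mem_product]
    constructor
    · rw [Fintype.mem_piFinset]
      intro j
      have h1 := (hr j).1
      have h2 := (hr j).2
      have q0 : 0 ≤ r j / 2^n := Int.ediv_nonneg h1 (le_of_lt hM0)
      have q1 : r j / 2^n < 2 := by
        rw [Int.ediv_lt_iff_lt_mul hM0]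
        have : (2:ℤ)^(n+1) = 2 * 2^n := by ring
        omega
      simp only [mem_insert, mem_singleton]
      omega
    · rw [mem_boxZ]
      intro j
      exact ⟨Int.emod_nonneg _ (ne_of_gt hM0), Int.emod_lt_of_pos _ hM0⟩
  · rintro ⟨q, r⟩ hp
    rw [Finset.mem_product, Fintype.mem_piFinset] at hp
    obtain ⟨hq, hr⟩ := hp
    rw [mem_boxZ] at hr ⊢
    intro j
    have hqj := hq j
    simp only [mem_insert, mem_singleton] at hqj
    have h1 : (0:ℤ) ≤ r j := (hr j).1
    have h2 : r j < (2:ℤ)^n := (hr j).2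
    have : (2:ℤ)^(n+1) = 2 * 2^n := by ring
    simp only [Pi.add_apply, Pi.smul_apply, smul_eq_mul]
    rcases hqj with h' | h' <;> rw [h'] <;> omega
  · intro r hr
    rw [mem_boxZ] at hr
    funext j
    simp only [Pi.add_apply, Pi.smul_apply, smul_eq_mul]
    exact Int.mul_ediv_add_emod (r j) ((2:ℤ)^n)
  · rintro ⟨q, r⟩ hp
    rw [Finset.mem_product, Fintype.mem_piFinset] at hp
    obtain ⟨hq, hr⟩ := hp
    rw [mem_boxZ] at hr
    have he : ∀ j, ((2:ℤ)^n * q j + r j) / 2^n = q j := by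
      intro j
      rw [add_comm, Int.add_mul_ediv_left _ _ (ne_of_gt hM0),
        Int.ediv_eq_zero_of_lt (hr j).1 (hr j).2, zero_add]
    have he2 : ∀ j, ((2:ℤ)^n * q j + r j) % 2^n = r j := by
      intro j
      rw [add_comm, Int.add_mul_emod_self_left, Int.emod_eq_of_lt (hr j).1 (hr j).2]
    simp only [Pi.add_apply, Pi.smul_apply, smul_eq_mul]
    exact Prod.ext (funext he) (funext he2)
  · intro r hr
    congr 1
    funext j
    simp only [Pi.add_apply, Pi.smul_apply, smul_eq_mul]
    exact (Int.mul_ediv_add_emod (r j) ((2:ℤ)^n)).symm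

lemma lb_fix (n : ℕ) (h b : Fin d → ℤ) (q : Fin d → ℤ)
    (hb : ∀ j, ((2:ℤ)^(n+1)) ∣ b j - h j) :
    latticeBase d n h (b + ((2:ℤ)^n) • q) = b + ((2:ℤ)^n) • q := by
  apply lb_unique
  · intro j
    simp only [Pi.add_apply, Pi.smul_apply, smul_eq_mul]
    have h1 : ((2:ℤ)^n) ∣ b j - h j :=
      dvd_trans (pow_dvd_pow 2 (Nat.le_succ n)) (hb j)
    have : b j + 2^n * q j - h j = (b j - h j) + 2^n * q j := by ring
    rw [this]
    exact dvd_add h1 (Dvd.intro _ rfl)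
  · intro j
    simp only [Pi.add_apply, Pi.smul_apply, smul_eq_mul, sub_self]
    constructor
    · omega
    · positivity

lemma split (n : ℕ) (h g : Fin d → ℤ) :
    blockSum d a f x (n+1) h g
    = ∑ q ∈ Fintype.piFinset (fun _ : Fin d => ({0,1} : Finset ℤ)),
        blockSum d a f x n h (latticeBase d (n+1) h g + ((2:ℤ)^n) • q) := by
  set b := latticeBase d (n+1) h g with hbdef
  show (∑ r ∈ boxZ d (2^(n+1)), f (a (b + r) x)) = _
  rw [boxsplit d n (fun r => f (a (b + r) x))]
  apply Finset.sum_congr rfl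
  intro q _
  unfold blockSum
  rw [lb_fix d n h b q (fun j => lb_dvd d (n+1) h g j)]
  apply Finset.sum_congr rfl
  intro r _
  rw [← add_assoc]
end

section
variable {X : Type*} (d : ℕ) (a : (Fin d → ℤ) → X → X) (f : X → ℝ) (x : X)

lemma mem_Gamma1 (γ : Fin d → ℤ) :
    γ ∈ Gamma1 d ↔ γ ≠ 0 ∧ ∀ j, γ j = -1 ∨ γ j = 0 ∨ γ j = 1 := by
  simp only [Gamma1, mem_erase, Fintype.mem_piFinset, mem_insert, mem_singleton]

section PerH
variable (n : ℕ) (h g : Fin d → ℤ)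

noncomputable def epsF : Fin d → ℤ :=
  fun j => if (2:ℤ)^n ≤ g j - latticeBase d (n+1) h g j then 1 else 0

lemma heps : ∀ j, (epsF d n h g j = 1 ∧ (2:ℤ)^n ≤ g j - latticeBase d (n+1) h g j)
    ∨ (epsF d n h g j = 0 ∧ g j - latticeBase d (n+1) h g j < (2:ℤ)^n) := by
  intro j
  unfold epsF
  split_ifs with hc
  · exact Or.inl ⟨rfl, hc⟩
  · exact Or.inr ⟨rfl, by omega⟩

lemma eps_mem : epsF d n h g ∈ Fintype.piFinset (fun _ : Fin d => ({0,1} : Finset ℤ)) := by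
  rw [Fintype.mem_piFinset]
  intro j
  rcases heps d n h g j with ⟨he, _⟩ | ⟨he, _⟩ <;> simp [he]

lemma lb_eps : latticeBase d n h g
    = latticeBase d (n+1) h g + ((2:ℤ)^n) • epsF d n h g := by
  apply lb_unique
  · intro j
    simp only [Pi.add_apply, Pi.smul_apply, smul_eq_mul]
    have h1 : ((2:ℤ)^n) ∣ latticeBase d (n+1) h g j - h j :=
      dvd_trans (pow_dvd_pow 2 (Nat.le_succ n)) (lb_dvd d (n+1) h g j)
    have : latticeBase d (n+1) h g j + 2^n * epsF d n h g j - h j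
        = (latticeBase d (n+1) h g j - h j) + 2^n * epsF d n h g j := by ring
    rw [this]
    exact dvd_add h1 (Dvd.intro _ rfl)
  · intro j
    have h1 := lb_sub_nonneg d (n+1) h g j
    have h2 := lb_sub_lt d (n+1) h g j
    have hNM : (2:ℤ)^(n+1) = 2*2^n := by ring
    simp only [Pi.add_apply, Pi.smul_apply, smul_eq_mul]
    rcases heps d n h g j with ⟨he, hi⟩ | ⟨he, hi⟩ <;> rw [he] <;> omega

lemma E2 : ∑ γ ∈ Gamma1 d,
      (if latticeBase d (n+1) h (g - ((2:ℤ)^n) • γ) = latticeBase d (n+1) h g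
        then blockSum d a f x n h (g - ((2:ℤ)^n) • γ) else 0)
    = blockSum d a f x (n+1) h g - blockSum d a f x n h g := by
  rw [← Finset.sum_filter]
  have hNM : (2:ℤ)^(n+1) = 2*2^n := by ring
  have heps' := heps d n h g
  have ht0 := lb_sub_nonneg d (n+1) h g
  have ht1 := lb_sub_lt d (n+1) h g
  have epsmem := eps_mem d n h g
  have key : ((Gamma1 d).filter (fun γ =>
        latticeBase d (n+1) h (g - ((2:ℤ)^n) • γ) = latticeBase d (n+1) h g)).sum
        (fun γ => blockSum d a f x n h (g - ((2:ℤ)^n) • γ))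
      = ∑ q ∈ (Fintype.piFinset (fun _ : Fin d => ({0,1} : Finset ℤ))).erase (epsF d n h g),
          blockSum d a f x n h (latticeBase d (n+1) h g + ((2:ℤ)^n) • q) := by
    apply Finset.sum_nbij'
      (i := fun γ => fun j => if γ j = 0 then epsF d n h g j else 1 - epsF d n h g j)
      (j := fun q => fun j => if q j = epsF d n h g j then 0 else 2 * epsF d n h g j - 1)
    · intro γ hγ
      rw [mem_filter, mem_Gamma1] at hγ
      obtain ⟨⟨hne, hval⟩, _⟩ := hγ
      rw [Finset.mem_erase]
      constructor
      · obtain ⟨j, hj⟩ := Function.ne_iff.mp hne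
        have hj' : γ j ≠ 0 := hj
        apply Function.ne_iff.mpr
        refine ⟨j, ?_⟩
        rw [if_neg hj']
        rcases heps' j with ⟨he, _⟩ | ⟨he, _⟩ <;> rw [he] <;> omega
      · rw [Fintype.mem_piFinset]
        intro j
        simp only [mem_insert, mem_singleton]
        rcases heps' j with ⟨he, _⟩ | ⟨he, _⟩ <;> rw [he] <;> split_ifs <;> omega
    · intro q hq
      rw [Finset.mem_erase, Fintype.mem_piFinset] at hq
      obtain ⟨hne, hq01⟩ := hq
      rw [mem_filter, mem_Gamma1]
      refine ⟨⟨?_, ?_⟩, ?_⟩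
      · obtain ⟨j, hj⟩ := Function.ne_iff.mp hne
        apply Function.ne_iff.mpr
        refine ⟨j, ?_⟩
        show (if q j = epsF d n h g j then 0 else 2 * epsF d n h g j - 1) ≠ (0:Fin d → ℤ) j
        rw [if_neg hj]
        show 2 * epsF d n h g j - 1 ≠ 0
        rcases heps' j with ⟨he, _⟩ | ⟨he, _⟩ <;> rw [he] <;> omega
      · intro j
        rcases heps' j with ⟨he, _⟩ | ⟨he, _⟩ <;> rw [he] <;> split_ifs <;> omega
      · rw [lb_eq_iff]
        intro j
        simp only [Pi.sub_apply, Pi.smul_apply, smul_eq_mul]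
        have h1 := ht0 j
        have h2 := ht1 j
        by_cases hqe : q j = epsF d n h g j
        · rw [if_pos hqe, mul_zero]; omega
        · rw [if_neg hqe]
          rcases heps' j with ⟨he, hi⟩ | ⟨he, hi⟩ <;> rw [he] <;> norm_num <;> omega
    · intro γ hγ
      rw [mem_filter, mem_Gamma1] at hγ
      obtain ⟨⟨hne, hval⟩, hcond⟩ := hγ
      rw [lb_eq_iff] at hcond
      funext j
      beta_reduce
      have hcj := hcond j
      simp only [Pi.sub_apply, Pi.smul_apply, smul_eq_mul] at hcj
      have h1 := ht0 j
      have h2 := ht1 j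
      by_cases hz : γ j = 0
      · rw [if_pos hz, if_pos rfl]; omega
      · rw [if_neg hz]
        have hqne : (1 - epsF d n h g j) ≠ epsF d n h g j := by
          rcases heps' j with ⟨he, _⟩ | ⟨he, _⟩ <;> rw [he] <;> omega
        rw [if_neg hqne]
        rcases hval j with hv | hv | hv
        · rw [hv] at hcj ⊢
          rcases heps' j with ⟨he, hi⟩ | ⟨he, hi⟩ <;> rw [he] <;> norm_num at hcj ⊢ <;> omega
        · exact absurd hv hz
        · rw [hv] at hcj ⊢
          rcases heps' j with ⟨he, hi⟩ | ⟨he, hi⟩ <;> rw [he] <;> norm_num at hcj ⊢ <;> omega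
    · intro q hq
      rw [Finset.mem_erase, Fintype.mem_piFinset] at hq
      obtain ⟨hne, hq01⟩ := hq
      funext j
      beta_reduce
      have hmem := hq01 j
      simp only [mem_insert, mem_singleton] at hmem
      by_cases hz : q j = epsF d n h g j
      · rw [if_pos hz, if_pos rfl, hz]
      · rw [if_neg hz]
        have hne0 : 2 * epsF d n h g j - 1 ≠ 0 := by
          rcases heps' j with ⟨he, _⟩ | ⟨he, _⟩ <;> rw [he] <;> omega
        rw [if_neg hne0]
        rcases heps' j with ⟨he, _⟩ | ⟨he, _⟩ <;> rw [he] at hz ⊢ <;> omega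
    · intro γ hγ
      rw [mem_filter, mem_Gamma1] at hγ
      obtain ⟨⟨hne, hval⟩, hcond⟩ := hγ
      rw [lb_eq_iff] at hcond
      apply blockSum_congr
      rw [lb_fix d n h _ _ (fun j => lb_dvd d (n+1) h g j)]
      apply lb_unique
      · intro j
        simp only [Pi.add_apply, Pi.smul_apply, smul_eq_mul]
        have h1 : ((2:ℤ)^n) ∣ latticeBase d (n+1) h g j - h j :=
          dvd_trans (pow_dvd_pow 2 (Nat.le_succ n)) (lb_dvd d (n+1) h g j)
        have heq : latticeBase d (n+1) h g j
            + 2^n * (if γ j = 0 then epsF d n h g j else 1 - epsF d n h g j) - h j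
            = (latticeBase d (n+1) h g j - h j)
            + 2^n * (if γ j = 0 then epsF d n h g j else 1 - epsF d n h g j) := by ring
        rw [heq]
        exact dvd_add h1 (Dvd.intro _ rfl)
      · intro j
        have hcj := hcond j
        simp only [Pi.sub_apply, Pi.add_apply, Pi.smul_apply, smul_eq_mul] at hcj ⊢
        have h1 := ht0 j
        have h2 := ht1 j
        by_cases hz : γ j = 0
        · rw [if_pos hz]
          rw [hz] at hcj ⊢
          rcases heps' j with ⟨he, hi⟩ | ⟨he, hi⟩ <;> rw [he] <;> norm_num at hcj ⊢ <;> omega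
        · rw [if_neg hz]
          rcases hval j with hv | hv | hv
          · rw [hv] at hcj ⊢
            rcases heps' j with ⟨he, hi⟩ | ⟨he, hi⟩ <;> rw [he] <;> norm_num at hcj ⊢ <;> omega
          · exact absurd hv hz
          · rw [hv] at hcj ⊢
            rcases heps' j with ⟨he, hi⟩ | ⟨he, hi⟩ <;> rw [he] <;> norm_num at hcj ⊢ <;> omega
  rw [key, Finset.sum_erase_eq_sub epsmem, ← split]
  congr 1
  apply blockSum_congr
  rw [lb_fix d n h _ _ (fun j => lb_dvd d (n+1) h g j), ← lb_eps]

lemma E1 : ((Gamma1 d).filter (fun γ =>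
      latticeBase d (n+1) h (g + ((2:ℤ)^n) • γ) = latticeBase d (n+1) h g)).card
    = 2^d - 1 := by
  have hNM : (2:ℤ)^(n+1) = 2*2^n := by ring
  have heps' := heps d n h g
  have ht0 := lb_sub_nonneg d (n+1) h g
  have ht1 := lb_sub_lt d (n+1) h g
  have epsmem := eps_mem d n h g
  have hcard : ((Gamma1 d).filter (fun γ =>
      latticeBase d (n+1) h (g + ((2:ℤ)^n) • γ) = latticeBase d (n+1) h g)).card
      = ((Fintype.piFinset (fun _ : Fin d => ({0,1} : Finset ℤ))).erase (epsF d n h g)).card := by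
    apply Finset.card_bij'
      (i := fun γ _ => fun j => if γ j = 0 then epsF d n h g j else 1 - epsF d n h g j)
      (j := fun q _ => fun j => if q j = epsF d n h g j then 0 else 1 - 2 * epsF d n h g j)
    · intro γ hγ
      rw [mem_filter, mem_Gamma1] at hγ
      obtain ⟨⟨hne, hval⟩, _⟩ := hγ
      rw [Finset.mem_erase]
      constructor
      · obtain ⟨j, hj⟩ := Function.ne_iff.mp hne
        have hj' : γ j ≠ 0 := hj
        apply Function.ne_iff.mpr
        refine ⟨j, ?_⟩
        rw [if_neg hj']
        rcases heps' j with ⟨he, _⟩ | ⟨he, _⟩ <;> rw [he] <;> omega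
      · rw [Fintype.mem_piFinset]
        intro j
        simp only [mem_insert, mem_singleton]
        rcases heps' j with ⟨he, _⟩ | ⟨he, _⟩ <;> rw [he] <;> split_ifs <;> omega
    · intro q hq
      rw [Finset.mem_erase, Fintype.mem_piFinset] at hq
      obtain ⟨hne, hq01⟩ := hq
      rw [mem_filter, mem_Gamma1]
      refine ⟨⟨?_, ?_⟩, ?_⟩
      · obtain ⟨j, hj⟩ := Function.ne_iff.mp hne
        apply Function.ne_iff.mpr
        refine ⟨j, ?_⟩
        show (if q j = epsF d n h g j then 0 else 1 - 2 * epsF d n h g j) ≠ (0:Fin d → ℤ) j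
        rw [if_neg hj]
        show 1 - 2 * epsF d n h g j ≠ 0
        rcases heps' j with ⟨he, _⟩ | ⟨he, _⟩ <;> rw [he] <;> omega
      · intro j
        rcases heps' j with ⟨he, _⟩ | ⟨he, _⟩ <;> rw [he] <;> split_ifs <;> omega
      · rw [lb_eq_iff]
        intro j
        simp only [Pi.add_apply, Pi.smul_apply, smul_eq_mul]
        have h1 := ht0 j
        have h2 := ht1 j
        by_cases hqe : q j = epsF d n h g j
        · rw [if_pos hqe, mul_zero]; omega
        · rw [if_neg hqe]
          rcases heps' j with ⟨he, hi⟩ | ⟨he, hi⟩ <;> rw [he] <;> norm_num <;> omega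
    · intro γ hγ
      rw [mem_filter, mem_Gamma1] at hγ
      obtain ⟨⟨hne, hval⟩, hcond⟩ := hγ
      rw [lb_eq_iff] at hcond
      funext j
      beta_reduce
      have hcj := hcond j
      simp only [Pi.add_apply, Pi.smul_apply, smul_eq_mul] at hcj
      have h1 := ht0 j
      have h2 := ht1 j
      by_cases hz : γ j = 0
      · rw [if_pos hz, if_pos rfl]; omega
      · rw [if_neg hz]
        have hqne : (1 - epsF d n h g j) ≠ epsF d n h g j := by
          rcases heps' j with ⟨he, _⟩ | ⟨he, _⟩ <;> rw [he] <;> omega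
        rw [if_neg hqne]
        rcases hval j with hv | hv | hv
        · rw [hv] at hcj ⊢
          rcases heps' j with ⟨he, hi⟩ | ⟨he, hi⟩ <;> rw [he] <;> norm_num at hcj ⊢ <;> omega
        · exact absurd hv hz
        · rw [hv] at hcj ⊢
          rcases heps' j with ⟨he, hi⟩ | ⟨he, hi⟩ <;> rw [he] <;> norm_num at hcj ⊢ <;> omega
    · intro q hq
      rw [Finset.mem_erase, Fintype.mem_piFinset] at hq
      obtain ⟨hne, hq01⟩ := hq
      funext j
      beta_reduce
      have hmem := hq01 j
      simp only [mem_insert, mem_singleton] at hmem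
      by_cases hz : q j = epsF d n h g j
      · rw [if_pos hz, if_pos rfl, hz]
      · rw [if_neg hz]
        have hne0 : 1 - 2 * epsF d n h g j ≠ 0 := by
          rcases heps' j with ⟨he, _⟩ | ⟨he, _⟩ <;> rw [he] <;> omega
        rw [if_neg hne0]
        rcases heps' j with ⟨he, _⟩ | ⟨he, _⟩ <;> rw [he] at hz ⊢ <;> omega
  rw [hcard, Finset.card_erase_of_mem epsmem, Fintype.card_piFinset]
  have hc2 : (({0,1} : Finset ℤ)).card = 2 := rfl
  simp [hc2]

end PerH
end

section
variable {X : Type*} (d : ℕ) (a : (Fin d → ℤ) → X → X) (f : X → ℝ) (x : X)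

lemma lb_congr_h {n : ℕ} {h h' : Fin d → ℤ} (g : Fin d → ℤ)
    (hd : ∀ j, ((2:ℤ)^n) ∣ h j - h' j) :
    latticeBase d n h g = latticeBase d n h' g :=
  funext fun j => lb1_congr _ (hd j)

lemma Uidx_shift (n : ℕ) (h g s γ : Fin d → ℤ) :
    Uidx d n (h + s) (g + s) γ = Uidx d n h g γ := by
  have hv1 : ∀ i : ℤ, (g + s) - i • γ = (g - i • γ) + s := by
    intro i; funext j
    simp only [Pi.sub_apply, Pi.add_apply, Pi.smul_apply, smul_eq_mul]; ring
  have hv2 : ∀ i : ℤ, ((g - i • γ) + s) + ((2:ℤ)^(n-1)) • γ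
      = ((g - i • γ) + ((2:ℤ)^(n-1)) • γ) + s := by
    intro i; funext j
    simp only [Pi.sub_apply, Pi.add_apply, Pi.smul_apply, smul_eq_mul]; ring
  unfold Uidx
  apply Finset.filter_congr
  intro i _
  rw [hv1, hv2, lb_shift, lb_shift, lb_shift]
  constructor
  · rintro ⟨h1, h2⟩
    exact ⟨add_right_cancel h1, add_right_cancel h2⟩
  · rintro ⟨h1, h2⟩
    rw [h1, h2]
    exact ⟨rfl, rfl⟩

lemma blockSum_shift (haadd : ∀ (g g' : Fin d → ℤ) (y : X), a (g + g') y = a g (a g' y))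
    (n : ℕ) (h g s : Fin d → ℤ) :
    blockSum d a f (a s x) n h g = blockSum d a f x n (h + s) (g + s) := by
  unfold blockSum
  rw [lb_shift]
  apply Finset.sum_congr rfl
  intro r _
  congr 1
  rw [← haadd]
  congr 1
  funext j
  simp only [Pi.add_apply]
  ring

lemma phiFlow_shift (haadd : ∀ (g g' : Fin d → ℤ) (y : X), a (g + g') y = a g (a g' y))
    (n : ℕ) (h g s γ : Fin d → ℤ) :
    phiFlow d a f (a s x) n h g γ = phiFlow d a f x n (h + s) (g + s) γ := by
  unfold phiFlow
  rw [Uidx_shift]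
  split_ifs with hs
  · congr 1
    rw [blockSum_shift d a f x haadd]
    congr 1
    funext j
    simp only [Pi.sub_apply, Pi.add_apply, Pi.smul_apply, smul_eq_mul]
    ring
  · rfl

lemma Uidx_congr_h {n : ℕ} {h h' : Fin d → ℤ} (g γ : Fin d → ℤ)
    (hd : ∀ j, ((2:ℤ)^n) ∣ h j - h' j) :
    Uidx d n h g γ = Uidx d n h' g γ := by
  unfold Uidx
  apply Finset.filter_congr
  intro i _
  rw [lb_congr_h d _ hd, lb_congr_h d _ hd, lb_congr_h d _ hd]

lemma blockSum_congr_h {n : ℕ} {h h' : Fin d → ℤ} (g : Fin d → ℤ)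
    (hd : ∀ j, ((2:ℤ)^n) ∣ h j - h' j) :
    blockSum d a f x n h g = blockSum d a f x n h' g := by
  unfold blockSum
  rw [lb_congr_h d _ hd]

lemma phiFlow_congr_h {n : ℕ} {h h' : Fin d → ℤ} (g γ : Fin d → ℤ)
    (hd : ∀ j, ((2:ℤ)^(n+1)) ∣ h j - h' j) :
    phiFlow d a f x (n+1) h g γ = phiFlow d a f x (n+1) h' g γ := by
  have hd' : ∀ j, ((2:ℤ)^n) ∣ h j - h' j :=
    fun j => dvd_trans (pow_dvd_pow 2 (Nat.le_succ n)) (hd j)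
  unfold phiFlow
  rw [Uidx_congr_h d g γ hd]
  split_ifs with hs
  · congr 1
    rw [Nat.add_sub_cancel]
    exact blockSum_congr_h d a f x _ hd'
  · rfl

lemma mem_boxZ' (N : ℕ) (r : Fin d → ℤ) :
    r ∈ boxZ d N ↔ ∀ j, 0 ≤ r j ∧ r j < (N:ℤ) := by
  simp [boxZ, Fintype.mem_piFinset, mem_Ico]

lemma sum_box_shift (N : ℕ) (hN : 0 < N) (F : (Fin d → ℤ) → ℝ)
    (hF : ∀ h h', (∀ j, (N:ℤ) ∣ h j - h' j) → F h = F h') (s : Fin d → ℤ) :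
    ∑ h ∈ boxZ d N, F (h + s) = ∑ h ∈ boxZ d N, F h := by
  have hN' : (0:ℤ) < (N:ℤ) := by exact_mod_cast hN
  have hsub : ∀ A c : ℤ, (A % N - c) % (N:ℤ) = (A - c) % N := by
    intro A c
    conv_rhs => rw [Int.sub_emod]
    conv_lhs => rw [Int.sub_emod, Int.emod_emod_of_dvd _ dvd_rfl]
  have hdvd : ∀ A : ℤ, (N:ℤ) ∣ A - A % N := by
    intro A
    have hh := Int.emod_def A (N:ℤ)
    exact ⟨A / N, by rw [hh]; ring⟩
  apply Finset.sum_nbij' (i := fun h => fun j => (h j + s j) % N)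
    (j := fun h => fun j => (h j - s j) % N)
  · intro h _
    rw [mem_boxZ']
    intro j
    exact ⟨Int.emod_nonneg _ (ne_of_gt hN'), Int.emod_lt_of_pos _ hN'⟩
  · intro h _
    rw [mem_boxZ']
    intro j
    exact ⟨Int.emod_nonneg _ (ne_of_gt hN'), Int.emod_lt_of_pos _ hN'⟩
  · intro h hh
    rw [mem_boxZ'] at hh
    funext j
    dsimp only
    rw [hsub]
    have : h j + s j - s j = h j := by ring
    rw [this, Int.emod_eq_of_lt (hh j).1 (hh j).2]
  · intro h hh
    rw [mem_boxZ'] at hh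
    funext j
    dsimp only
    have hadd : ∀ A c : ℤ, (A % N + c) % (N:ℤ) = (A + c) % N := by
      intro A c
      conv_rhs => rw [Int.add_emod]
      conv_lhs => rw [Int.add_emod, Int.emod_emod_of_dvd _ dvd_rfl]
    rw [hadd]
    have : h j - s j + s j = h j := by ring
    rw [this, Int.emod_eq_of_lt (hh j).1 (hh j).2]
  · intro h _
    apply hF
    intro j
    simp only [Pi.add_apply]
    exact hdvd (h j + s j)

lemma sum_box_period (n : ℕ) (F : (Fin d → ℤ) → ℝ)
    (hF : ∀ h h', (∀ j, ((2:ℤ)^n) ∣ h j - h' j) → F h = F h') :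
    ∑ h ∈ boxZ d (2^(n+1)), F h = 2^d * ∑ h ∈ boxZ d (2^n), F h := by
  rw [boxsplit d n F]
  have : ∀ q ∈ Fintype.piFinset (fun _ : Fin d => ({0,1} : Finset ℤ)),
      ∑ r ∈ boxZ d (2^n), F (((2:ℤ)^n) • q + r) = ∑ r ∈ boxZ d (2^n), F r := by
    intro q _
    apply Finset.sum_congr rfl
    intro r _
    apply hF
    intro j
    simp only [Pi.add_apply, Pi.smul_apply, smul_eq_mul]
    exact ⟨q j, by ring⟩
  rw [Finset.sum_congr rfl this, Finset.sum_const, Fintype.card_piFinset]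
  have hc2 : (({0,1} : Finset ℤ)).card = 2 := rfl
  simp only [hc2, Finset.prod_const, Finset.card_univ, Fintype.card_fin, nsmul_eq_mul]
  push_cast
  ring
end

section
variable (d : ℕ)

lemma filter_pi_card (N : ℕ) (j₀ : Fin d) (P : ℤ → Prop) [DecidablePred P] :
    ((boxZ d N).filter (fun h => P (h j₀))).card
    = ((Finset.Ico (0:ℤ) (N:ℤ)).filter P).card * N^(d-1) := by
  have hset : (boxZ d N).filter (fun h => P (h j₀))
      = Fintype.piFinset (Function.update (fun _ : Fin d => Finset.Ico (0:ℤ) (N:ℤ)) j₀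
          ((Finset.Ico (0:ℤ) (N:ℤ)).filter P)) := by
    ext h
    rw [mem_filter, Fintype.mem_piFinset]
    unfold boxZ
    rw [Fintype.mem_piFinset]
    constructor
    · rintro ⟨hb, hp⟩ j
      by_cases hj : j = j₀
      · subst hj
        rw [Function.update_self]
        exact mem_filter.mpr ⟨hb j, hp⟩
      · rw [Function.update_of_ne hj]
        exact hb j
    · intro hall
      constructor
      · intro j
        have hj' := hall j
        by_cases hj : j = j₀
        · subst hj
          rw [Function.update_self] at hj'
          exact (mem_filter.mp hj').1
        · rwa [Function.update_of_ne hj] at hj'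
      · have hj' := hall j₀
        rw [Function.update_self] at hj'
        exact (mem_filter.mp hj').2
  rw [hset, Fintype.card_piFinset]
  have happ : ∀ j, (Function.update (fun _ : Fin d => Finset.Ico (0:ℤ) (N:ℤ)) j₀
      ((Finset.Ico (0:ℤ) (N:ℤ)).filter P) j).card
      = Function.update (fun _ : Fin d => (Finset.Ico (0:ℤ) (N:ℤ)).card) j₀
          (((Finset.Ico (0:ℤ) (N:ℤ)).filter P).card) j := by
    intro j
    exact (Function.apply_update (fun _ s => Finset.card s) _ j₀ _ j)
  rw [Finset.prod_congr rfl (fun j _ => happ j)]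
  rw [Finset.prod_update_of_mem (Finset.mem_univ j₀)]
  rw [Finset.prod_const, Int.card_Ico]
  have hsd : (univ \ {j₀} : Finset (Fin d)).card = d - 1 := by
    rw [Finset.sdiff_singleton_eq_erase, Finset.card_erase_of_mem (Finset.mem_univ j₀),
      Finset.card_univ, Fintype.card_fin]
  rw [hsd]
  have hN0 : ((N:ℤ) - 0).toNat = N := by simp
  rw [hN0]

lemma count_bound (n : ℕ) (g γ : Fin d → ℤ) (hγ : γ ∈ Gamma1 d) :
    ∑ h ∈ boxZ d (2^(n+1)), (Uidx d (n+1) h g γ).card ≤ 2^n * (2^n * (2^(n+1))^(d-1)) := by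
  obtain ⟨hne, hval⟩ := (mem_Gamma1 d γ).mp hγ
  obtain ⟨j₀, hj₀⟩ := Function.ne_iff.mp hne
  have hj₀' : γ j₀ ≠ 0 := hj₀
  have hN : (0:ℤ) < 2^(n+1) := by positivity
  have hNc : ((2^(n+1) : ℕ) : ℤ) = (2:ℤ)^(n+1) := by push_cast; ring
  have hNM : (2:ℤ)^(n+1) = 2*2^n := by ring
  -- pointwise: card of Uidx as a filtered card over Ico
  have hUc : ∀ h : Fin d → ℤ, (Uidx d (n+1) h g γ).card
      = ((Finset.Ico (0:ℤ) ((2:ℤ)^n)).filter (fun i =>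
          latticeBase d (n+1) h (g - i • γ) = latticeBase d (n+1) h g ∧
          latticeBase d (n+1) h ((g - i • γ) + ((2:ℤ)^n) • γ) = latticeBase d (n+1) h g)).card := by
    intro h
    unfold Uidx
    simp only [Nat.add_sub_cancel]
  -- the per-i coordinate condition
  set P : ℤ → ℤ → Prop := fun i v =>
    lb1 ((2:ℤ)^(n+1)) v (g j₀ - i * γ j₀) = lb1 ((2:ℤ)^(n+1)) v (g j₀) ∧
    lb1 ((2:ℤ)^(n+1)) v (g j₀ - i * γ j₀ + 2^n * γ j₀) = lb1 ((2:ℤ)^(n+1)) v (g j₀)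
    with hP
  have hPdec : ∀ i, DecidablePred (P i) := fun i v => by rw [hP]; infer_instance
  -- count of v satisfying P i is at most 2^n
  have hPcard : ∀ i : ℤ, 0 ≤ i → i < 2^n →
      (((Finset.Ico (0:ℤ) ((2^(n+1):ℕ):ℤ)).filter (P i)).card : ℕ) ≤ 2^n := by
    intro i hi0 hi1
    set lo : ℤ := if γ j₀ = 1 then i else 2^n - i with hlo
    have hmap : ∀ v ∈ (Finset.Ico (0:ℤ) ((2^(n+1):ℕ):ℤ)).filter (P i),
        (g j₀ - v) % ((2:ℤ)^(n+1)) ∈ Finset.Ico lo (lo + 2^n) := by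
      intro v hv
      rw [mem_filter] at hv
      obtain ⟨hvmem, hp1, hp2⟩ := hv
      rw [lb1_eq_iff hN] at hp1 hp2
      have hlb : lb1 ((2:ℤ)^(n+1)) v (g j₀) = g j₀ - (g j₀ - v) % ((2:ℤ)^(n+1)) := rfl
      rw [hlb] at hp1 hp2
      rw [mem_Ico]
      rcases hval j₀ with hv1 | hv1 | hv1
      · rw [hv1] at hp1 hp2
        rw [hlo, if_neg (by rw [hv1]; decide)]
        omega
      · exact absurd hv1 hj₀'
      · rw [hv1] at hp1 hp2
        rw [hlo, if_pos hv1]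
        omega
    have hinj : Set.InjOn (fun v => (g j₀ - v) % ((2:ℤ)^(n+1)))
        ((Finset.Ico (0:ℤ) ((2^(n+1):ℕ):ℤ)).filter (P i)) := by
      intro v hv v' hv' heq
      simp only [Finset.coe_filter, Set.mem_setOf_eq] at hv hv'
      have hvm := (mem_Ico.mp hv.1)
      have hvm' := (mem_Ico.mp hv'.1)
      have hsub : ∀ A : ℤ, (g j₀ - A % ((2:ℤ)^(n+1))) % ((2:ℤ)^(n+1))
          = (g j₀ - A) % ((2:ℤ)^(n+1)) := by
        intro A
        conv_rhs => rw [Int.sub_emod]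
        conv_lhs => rw [Int.sub_emod, Int.emod_emod_of_dvd _ dvd_rfl]
      have h1 : (g j₀ - (g j₀ - v) % ((2:ℤ)^(n+1))) % ((2:ℤ)^(n+1))
          = (g j₀ - (g j₀ - v') % ((2:ℤ)^(n+1))) % ((2:ℤ)^(n+1)) := by
        dsimp only at heq
        rw [heq]
      rw [hsub, hsub] at h1
      have hv2 : g j₀ - (g j₀ - v) = v := by ring
      have hv2' : g j₀ - (g j₀ - v') = v' := by ring
      rw [hv2, hv2'] at h1
      rw [Int.emod_eq_of_lt (by omega : (0:ℤ) ≤ v) (by omega),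
        Int.emod_eq_of_lt (by omega : (0:ℤ) ≤ v') (by omega)] at h1
      exact h1
    calc (((Finset.Ico (0:ℤ) ((2^(n+1):ℕ):ℤ)).filter (P i)).card : ℕ)
        ≤ (Finset.Ico lo (lo + 2^n)).card := Finset.card_le_card_of_injOn _ hmap hinj
      _ = 2^n := by
          rw [Int.card_Ico]
          have : lo + 2^n - lo = ((2^n : ℕ) : ℤ) := by push_cast; ring
          rw [this, Int.toNat_natCast]
  -- main computation
  calc ∑ h ∈ boxZ d (2^(n+1)), (Uidx d (n+1) h g γ).card
      = ∑ h ∈ boxZ d (2^(n+1)), ∑ i ∈ Finset.Ico (0:ℤ) ((2:ℤ)^n),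
          (if latticeBase d (n+1) h (g - i • γ) = latticeBase d (n+1) h g ∧
            latticeBase d (n+1) h ((g - i • γ) + ((2:ℤ)^n) • γ) = latticeBase d (n+1) h g
            then 1 else 0) := by
        apply Finset.sum_congr rfl
        intro h _
        rw [hUc h, Finset.card_filter]
    _ = ∑ i ∈ Finset.Ico (0:ℤ) ((2:ℤ)^n), ∑ h ∈ boxZ d (2^(n+1)),
          (if latticeBase d (n+1) h (g - i • γ) = latticeBase d (n+1) h g ∧
            latticeBase d (n+1) h ((g - i • γ) + ((2:ℤ)^n) • γ) = latticeBase d (n+1) h g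
            then 1 else 0) := Finset.sum_comm
    _ ≤ ∑ i ∈ Finset.Ico (0:ℤ) ((2:ℤ)^n), 2^n * (2^(n+1))^(d-1) := by
        apply Finset.sum_le_sum
        intro i hi
        rw [mem_Ico] at hi
        have hstep : ∑ h ∈ boxZ d (2^(n+1)),
            (if latticeBase d (n+1) h (g - i • γ) = latticeBase d (n+1) h g ∧
              latticeBase d (n+1) h ((g - i • γ) + ((2:ℤ)^n) • γ) = latticeBase d (n+1) h g
              then 1 else 0)
            = ((boxZ d (2^(n+1))).filter (fun h =>
              latticeBase d (n+1) h (g - i • γ) = latticeBase d (n+1) h g ∧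
              latticeBase d (n+1) h ((g - i • γ) + ((2:ℤ)^n) • γ) = latticeBase d (n+1) h g)).card
            := (Finset.card_filter _ _).symm
        rw [hstep]
        have hsubset : (boxZ d (2^(n+1))).filter (fun h =>
              latticeBase d (n+1) h (g - i • γ) = latticeBase d (n+1) h g ∧
              latticeBase d (n+1) h ((g - i • γ) + ((2:ℤ)^n) • γ) = latticeBase d (n+1) h g)
            ⊆ (boxZ d (2^(n+1))).filter (fun h => P i (h j₀)) := by
          intro h hh
          rw [mem_filter] at hh ⊢
          obtain ⟨hb, hc1, hc2⟩ := hh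
          refine ⟨hb, ?_, ?_⟩
          · have hq := congrFun hc1 j₀
            simpa [latticeBase, lb1, Pi.sub_apply, Pi.smul_apply, smul_eq_mul] using hq
          · have hq := congrFun hc2 j₀
            simpa [latticeBase, lb1, Pi.sub_apply, Pi.add_apply, Pi.smul_apply, smul_eq_mul]
              using hq
        calc ((boxZ d (2^(n+1))).filter (fun h =>
              latticeBase d (n+1) h (g - i • γ) = latticeBase d (n+1) h g ∧
              latticeBase d (n+1) h ((g - i • γ) + ((2:ℤ)^n) • γ) = latticeBase d (n+1) h g)).card
            ≤ ((boxZ d (2^(n+1))).filter (fun h => P i (h j₀))).card :=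
              Finset.card_le_card hsubset
          _ = (((Finset.Ico (0:ℤ) ((2^(n+1):ℕ):ℤ)).filter (P i)).card) * (2^(n+1))^(d-1) :=
              filter_pi_card d (2^(n+1)) j₀ (P i)
          _ ≤ 2^n * (2^(n+1))^(d-1) := by
              apply Nat.mul_le_mul_right
              exact hPcard i hi.1 hi.2
    _ ≤ 2^n * (2^n * (2^(n+1))^(d-1)) := by
        rw [Finset.sum_const, Int.card_Ico]
        have : ((2:ℤ)^n - 0).toNat = 2^n := by
          have : ((2:ℤ)^n - 0) = ((2^n : ℕ) : ℤ) := by push_cast; ring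
          rw [this, Int.toNat_natCast]
        rw [this, smul_eq_mul]
end

section
variable {X : Type*} (d : ℕ) (a : (Fin d → ℤ) → X → X) (f : X → ℝ) (x : X)

lemma neg_mem_Gamma1 {γ : Fin d → ℤ} (hγ : γ ∈ Gamma1 d) : -γ ∈ Gamma1 d := by
  rw [mem_Gamma1] at hγ ⊢
  obtain ⟨hne, hval⟩ := hγ
  refine ⟨neg_ne_zero.mpr hne, ?_⟩
  intro j
  have := hval j
  simp only [Pi.neg_apply]
  omega

lemma perH (n : ℕ) (h g : Fin d → ℤ) :
    ∑ γ ∈ Gamma1 d, (phiFlow d a f x (n+1) h g γ - phiFlow d a f x (n+1) h (g + γ) (-γ))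
    = (2^d * blockSum d a f x n h g - blockSum d a f x (n+1) h g) / 2^((n+1)*d) := by
  have hval : ∀ γ ∈ Gamma1 d, ∀ j, γ j = -1 ∨ γ j = 0 ∨ γ j = 1 :=
    fun γ hγ => ((mem_Gamma1 d γ).mp hγ).2
  have step1 : ∑ γ ∈ Gamma1 d, phiFlow d a f x (n+1) h (g + γ) (-γ)
      = ∑ γ ∈ Gamma1 d, phiFlow d a f x (n+1) h (g - γ) γ := by
    apply Finset.sum_nbij' (i := fun γ => -γ) (j := fun γ => -γ)
    · intro γ hγ; exact neg_mem_Gamma1 d hγ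
    · intro γ hγ; exact neg_mem_Gamma1 d hγ
    · intro γ _; exact neg_neg γ
    · intro γ _; exact neg_neg γ
    · intro γ _; rw [sub_neg_eq_add]
  rw [Finset.sum_sub_distrib, step1, ← Finset.sum_sub_distrib]
  have step2 : ∀ γ ∈ Gamma1 d,
      phiFlow d a f x (n+1) h g γ - phiFlow d a f x (n+1) h (g - γ) γ
      = ((if latticeBase d (n+1) h (g + ((2:ℤ)^n) • γ) = latticeBase d (n+1) h g
          then blockSum d a f x n h g else 0)
        - (if latticeBase d (n+1) h (g - ((2:ℤ)^n) • γ) = latticeBase d (n+1) h g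
          then blockSum d a f x n h (g - ((2:ℤ)^n) • γ) else 0)) / 2^((n+1)*d) := by
    intro γ hγ
    rw [phiFlow_eq d a f x (hval γ hγ), phiFlow_eq d a f x (hval γ hγ),
      div_sub_div_same, tele]
  rw [Finset.sum_congr rfl step2, ← Finset.sum_div, Finset.sum_sub_distrib]
  have e1sum : ∑ γ ∈ Gamma1 d,
      (if latticeBase d (n+1) h (g + ((2:ℤ)^n) • γ) = latticeBase d (n+1) h g
        then blockSum d a f x n h g else 0)
      = ((2:ℝ)^d - 1) * blockSum d a f x n h g := by
    rw [← Finset.sum_filter, Finset.sum_const, E1, nsmul_eq_mul]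
    have h1 : (1:ℕ) ≤ 2^d := Nat.one_le_two_pow
    push_cast [h1]
    ring
  rw [e1sum, E2]
  ring
end

section
variable {X : Type*} (d : ℕ) (a : (Fin d → ℤ) → X → X) (f : X → ℝ) (x : X) (Φ : ℕ → ℝ)

lemma box_card (N : ℕ) : (boxZ d N).card = N^d := by
  unfold boxZ
  rw [Fintype.card_piFinset]
  have : (Finset.Ico (0:ℤ) (N:ℤ)).card = N := by
    rw [Int.card_Ico]
    simp
  simp [this]

lemma blockSum_abs
    (haadd : ∀ (g g' : Fin d → ℤ) (y : X), a (g + g') y = a g (a g' y))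
    (hΦ : ∀ (y : X) (m : ℕ), |∑ r ∈ boxZ d (2 ^ m), f (a r y)| < Φ (2 ^ m))
    (m : ℕ) (h g : Fin d → ℤ) : |blockSum d a f x m h g| ≤ Φ (2^m) := by
  unfold blockSum
  have he : ∀ r : Fin d → ℤ,
      a (latticeBase d m h g + r) x = a r (a (latticeBase d m h g) x) := by
    intro r
    rw [← haadd]
    congr 1
    funext j
    simp only [Pi.add_apply]
    ring
  calc |∑ r ∈ boxZ d (2^m), f (a (latticeBase d m h g + r) x)|
      = |∑ r ∈ boxZ d (2^m), f (a r (a (latticeBase d m h g) x))| := by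
        congr 1
        exact Finset.sum_congr rfl (fun r _ => by rw [he r])
    _ ≤ Φ (2^m) := (hΦ _ m).le

lemma phi_abs
    (haadd : ∀ (g g' : Fin d → ℤ) (y : X), a (g + g') y = a g (a g' y))
    (hΦ : ∀ (y : X) (m : ℕ), |∑ r ∈ boxZ d (2 ^ m), f (a r y)| < Φ (2 ^ m))
    {n : ℕ} {h g γ : Fin d → ℤ} (hγ : ∀ j, γ j = -1 ∨ γ j = 0 ∨ γ j = 1) :
    |phiFlow d a f x (n+1) h g γ|
      ≤ ((Uidx d (n+1) h g γ).card : ℝ) * Φ (2^n) / 2^((n+1)*d) := by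
  rw [phiFlow_eq d a f x hγ, abs_div, abs_of_pos (by positivity : (0:ℝ) < 2^((n+1)*d))]
  gcongr
  calc |∑ i ∈ Uidx d (n+1) h g γ, blockSum d a f x n h (g - i • γ)|
      ≤ ∑ i ∈ Uidx d (n+1) h g γ, |blockSum d a f x n h (g - i • γ)| :=
        Finset.abs_sum_le_sum_abs _ _
    _ ≤ ∑ _i ∈ Uidx d (n+1) h g γ, Φ (2^n) :=
        Finset.sum_le_sum (fun i _ => blockSum_abs d a f x Φ haadd hΦ n h _)
    _ = ((Uidx d (n+1) h g γ).card : ℝ) * Φ (2^n) := by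
        rw [Finset.sum_const, nsmul_eq_mul]

lemma term_abs (hd : 1 ≤ d)
    (haadd : ∀ (g g' : Fin d → ℤ) (y : X), a (g + g') y = a g (a g' y))
    (hΦ : ∀ (y : X) (m : ℕ), |∑ r ∈ boxZ d (2 ^ m), f (a r y)| < Φ (2 ^ m))
    {γ : Fin d → ℤ} (hγ : γ ∈ Gamma1 d) (n : ℕ) (g : Fin d → ℤ) :
    |(1 / 2^((n+1)*d)) * ∑ h ∈ boxZ d (2^(n+1)),
        (phiFlow d a f x (n+1) h g γ - phiFlow d a f x (n+1) h (g+γ) (-γ))|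
    ≤ Φ (2^n) / (2^(n*(d-1)) * 2^d) := by
  have Φ0 : 0 ≤ Φ (2^n) := le_trans (abs_nonneg _) (hΦ x n).le
  have hval := ((mem_Gamma1 d γ).mp hγ).2
  have hvaln := ((mem_Gamma1 d (-γ)).mp (neg_mem_Gamma1 d hγ)).2
  have hD : (0:ℝ) < 2^((n+1)*d) := by positivity
  have habs : |∑ h ∈ boxZ d (2^(n+1)),
      (phiFlow d a f x (n+1) h g γ - phiFlow d a f x (n+1) h (g+γ) (-γ))|
      ≤ 2 * (2^n * (2^n * (2^(n+1))^(d-1)) : ℕ) * Φ (2^n) / 2^((n+1)*d) := by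
    calc |∑ h ∈ boxZ d (2^(n+1)),
        (phiFlow d a f x (n+1) h g γ - phiFlow d a f x (n+1) h (g+γ) (-γ))|
        ≤ ∑ h ∈ boxZ d (2^(n+1)),
            |phiFlow d a f x (n+1) h g γ - phiFlow d a f x (n+1) h (g+γ) (-γ)| :=
          Finset.abs_sum_le_sum_abs _ _
      _ ≤ ∑ h ∈ boxZ d (2^(n+1)),
            (((Uidx d (n+1) h g γ).card : ℝ) * Φ (2^n) / 2^((n+1)*d)
            + ((Uidx d (n+1) h (g+γ) (-γ)).card : ℝ) * Φ (2^n) / 2^((n+1)*d)) := by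
          apply Finset.sum_le_sum
          intro h _
          calc |phiFlow d a f x (n+1) h g γ - phiFlow d a f x (n+1) h (g+γ) (-γ)|
              ≤ |phiFlow d a f x (n+1) h g γ| + |phiFlow d a f x (n+1) h (g+γ) (-γ)| :=
                abs_sub _ _
            _ ≤ _ := add_le_add (phi_abs d a f x Φ haadd hΦ hval)
                (phi_abs d a f x Φ haadd hΦ hvaln)
      _ ≤ 2 * (2^n * (2^n * (2^(n+1))^(d-1)) : ℕ) * Φ (2^n) / 2^((n+1)*d) := by
          rw [Finset.sum_add_distrib]
          have k1 : ∑ h ∈ boxZ d (2^(n+1)),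
              ((Uidx d (n+1) h g γ).card : ℝ) * Φ (2^n) / 2^((n+1)*d)
              ≤ (2^n * (2^n * (2^(n+1))^(d-1)) : ℕ) * Φ (2^n) / 2^((n+1)*d) := by
            rw [← Finset.sum_div, ← Finset.sum_mul]
            gcongr
            have := count_bound d n g γ hγ
            calc (∑ h ∈ boxZ d (2^(n+1)), ((Uidx d (n+1) h g γ).card : ℝ))
                = ((∑ h ∈ boxZ d (2^(n+1)), (Uidx d (n+1) h g γ).card : ℕ) : ℝ) := by
                  push_cast; rfl
              _ ≤ _ := by exact_mod_cast this
          have k2 : ∑ h ∈ boxZ d (2^(n+1)),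
              ((Uidx d (n+1) h (g+γ) (-γ)).card : ℝ) * Φ (2^n) / 2^((n+1)*d)
              ≤ (2^n * (2^n * (2^(n+1))^(d-1)) : ℕ) * Φ (2^n) / 2^((n+1)*d) := by
            rw [← Finset.sum_div, ← Finset.sum_mul]
            gcongr
            have := count_bound d n (g+γ) (-γ) (neg_mem_Gamma1 d hγ)
            calc (∑ h ∈ boxZ d (2^(n+1)), ((Uidx d (n+1) h (g+γ) (-γ)).card : ℝ))
                = ((∑ h ∈ boxZ d (2^(n+1)), (Uidx d (n+1) h (g+γ) (-γ)).card : ℕ) : ℝ) := by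
                  push_cast; rfl
              _ ≤ _ := by exact_mod_cast this
          calc _ ≤ (2^n * (2^n * (2^(n+1))^(d-1)) : ℕ) * Φ (2^n) / 2^((n+1)*d)
                + (2^n * (2^n * (2^(n+1))^(d-1)) : ℕ) * Φ (2^n) / 2^((n+1)*d) :=
              add_le_add k1 k2
            _ = _ := by ring
  rw [abs_mul, abs_of_pos (by positivity : (0:ℝ) < 1 / 2^((n+1)*d))]
  calc (1 / 2^((n+1)*d)) * |∑ h ∈ boxZ d (2^(n+1)),
        (phiFlow d a f x (n+1) h g γ - phiFlow d a f x (n+1) h (g+γ) (-γ))|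
      ≤ (1 / 2^((n+1)*d)) * (2 * (2^n * (2^n * (2^(n+1))^(d-1)) : ℕ) * Φ (2^n) / 2^((n+1)*d)) := by
        apply mul_le_mul_of_nonneg_left habs (by positivity)
    _ = Φ (2^n) / (2^(n*(d-1)) * 2^d) := by
        obtain ⟨e, rfl⟩ : ∃ e, d = e + 1 := ⟨d - 1, by omega⟩
        have hcast : ((2^n * (2^n * (2^(n+1))^(e+1-1)) : ℕ) : ℝ)
            = 2^n * (2^n * 2^((n+1)*e)) := by
          push_cast
          rw [← pow_mul]
        rw [hcast]
        simp only [Nat.add_sub_cancel]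
        field_simp
        ring

end

/-- **The flow lemma.** Suppose `Φ : ℕ → ℝ` satisfies `|∑_{z ∈ R_{2ⁿ}·y} f(z)| < Φ(2ⁿ)`
for all `y` and `n`, and `c = 2^{−(d−1)} ∑_{n≥0} Φ(2ⁿ)/2^{n(d−1)}` is finite (the series
is summable).  Then `ψ(y,z) = ψ_y(y,z)` is an `f`-flow on `G_a` bounded by `c`: it is
antisymmetric on edges, the net outflow at each vertex `y` is `f(y)`, and `|ψ| ≤ c` on
every edge.  (Here the edge `(y, γ·y)` of `G_a`, `‖γ‖_∞ = 1`, is handled in coordinates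
based at `y`, so `ψ(y, γ·y) = ψ_y(y, γ·y)` is `psiX d a f y 0 γ`.) -/
theorem flow_lemma {X : Type*} (d : ℕ) (hd : 1 ≤ d)
    (a : (Fin d → ℤ) → X → X)
    (ha0 : ∀ x : X, a 0 x = x)
    (haadd : ∀ (g g' : Fin d → ℤ) (x : X), a (g + g') x = a g (a g' x))
    (hfree : ∀ (g : Fin d → ℤ) (x : X), a g x = x → g = 0)
    (f : X → ℝ)
    (Φ : ℕ → ℝ)
    (hΦ : ∀ (y : X) (n : ℕ), |∑ r ∈ boxZ d (2 ^ n), f (a r y)| < Φ (2 ^ n))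
    (hsummable : Summable (fun n : ℕ => Φ (2 ^ n) / 2 ^ (n * (d - 1))))
    (c : ℝ)
    (hc : c = (1 / 2 ^ (d - 1)) * ∑' n : ℕ, Φ (2 ^ n) / 2 ^ (n * (d - 1))) :
    (∀ (y : X), ∀ γ ∈ Gamma1 d, psiX d a f y 0 γ = -psiX d a f (a γ y) 0 (-γ)) ∧
    (∀ y : X, ∑ γ ∈ Gamma1 d, psiX d a f y 0 γ = f y) ∧
    (∀ (y : X), ∀ γ ∈ Gamma1 d, |psiX d a f y 0 γ| ≤ c) := by
  have hbndsum : Summable (fun n : ℕ => Φ (2^n) / (2^(n*(d-1)) * 2^d)) := by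
    apply (hsummable.mul_right ((1:ℝ)/2^d)).congr
    intro n
    rw [div_mul_div_comm, mul_one]
  have hTsum : ∀ (y : X), ∀ γ ∈ Gamma1 d, Summable (fun n : ℕ =>
      (1 / 2 ^ ((n + 1) * d)) * ∑ h ∈ boxZ d (2 ^ (n + 1)),
        (phiFlow d a f y (n + 1) h 0 γ - phiFlow d a f y (n + 1) h (0 + γ) (-γ))) := by
    intro y γ hγ
    apply Summable.of_norm_bounded hbndsum
    intro n
    rw [Real.norm_eq_abs]
    exact term_abs d a f y Φ hd haadd hΦ hγ n 0
  refine ⟨?_, ?_, ?_⟩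
  · -- antisymmetry
    intro y γ hγ
    have hNc : ∀ n : ℕ, ((2^(n+1) : ℕ) : ℤ) = (2:ℤ)^(n+1) := fun n => cast_two_pow (n+1)
    have key : ∀ n : ℕ, (1 / 2 ^ ((n + 1) * d)) * ∑ h ∈ boxZ d (2 ^ (n + 1)),
        (phiFlow d a f (a γ y) (n + 1) h 0 (-γ)
          - phiFlow d a f (a γ y) (n + 1) h (0 + -γ) (-(-γ)))
        = -((1 / 2 ^ ((n + 1) * d)) * ∑ h ∈ boxZ d (2 ^ (n + 1)),
          (phiFlow d a f y (n + 1) h 0 γ - phiFlow d a f y (n + 1) h (0 + γ) (-γ))) := by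
      intro n
      simp only [zero_add, neg_neg]
      have hsh : ∀ h : Fin d → ℤ,
          phiFlow d a f (a γ y) (n+1) h 0 (-γ) - phiFlow d a f (a γ y) (n+1) h (-γ) γ
          = (fun h' => phiFlow d a f y (n+1) h' γ (-γ) - phiFlow d a f y (n+1) h' 0 γ) (h + γ) := by
        intro h
        dsimp only
        rw [phiFlow_shift d a f y haadd (n+1) h 0 γ (-γ),
          phiFlow_shift d a f y haadd (n+1) h (-γ) γ γ, zero_add, neg_add_cancel]
      rw [Finset.sum_congr rfl (fun h _ => hsh h)]
      rw [sum_box_shift d (2^(n+1)) (by positivity)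
        (fun h' => phiFlow d a f y (n+1) h' γ (-γ) - phiFlow d a f y (n+1) h' 0 γ)
        (by
          intro h h' hdvd
          have hdvd' : ∀ j, ((2:ℤ)^(n+1)) ∣ h j - h' j := by
            intro j
            have := hdvd j
            rwa [hNc n] at this
          rw [phiFlow_congr_h d a f y γ (-γ) hdvd', phiFlow_congr_h d a f y 0 γ hdvd']) γ]
      have hflip : ∑ h ∈ boxZ d (2^(n+1)),
          (phiFlow d a f y (n+1) h γ (-γ) - phiFlow d a f y (n+1) h 0 γ)
          = -∑ h ∈ boxZ d (2^(n+1)),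
            (phiFlow d a f y (n+1) h 0 γ - phiFlow d a f y (n+1) h γ (-γ)) := by
        rw [← Finset.sum_neg_distrib]
        exact Finset.sum_congr rfl (fun h _ => (neg_sub _ _).symm)
      rw [hflip]
      ring
    have hpsi : psiX d a f (a γ y) 0 (-γ) = -psiX d a f y 0 γ := by
      unfold psiX
      rw [tsum_congr key, tsum_neg]
    rw [hpsi, neg_neg]
  · -- divergence
    intro y
    have Φ0 : ∀ m : ℕ, 0 ≤ Φ (2^m) := fun m => le_trans (abs_nonneg _) (hΦ y m).le
    set Fb : ℕ → ℝ := fun m =>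
      (∑ h ∈ boxZ d (2^m), blockSum d a f y m h 0) / (2^(m*d) * 2^(m*d)) with hFb
    have hstep : ∀ n : ℕ, ∑ γ ∈ Gamma1 d,
        ((1 / 2 ^ ((n + 1) * d)) * ∑ h ∈ boxZ d (2 ^ (n + 1)),
          (phiFlow d a f y (n + 1) h 0 γ - phiFlow d a f y (n + 1) h (0 + γ) (-γ)))
        = Fb n - Fb (n+1) := by
      intro n
      rw [← Finset.mul_sum, Finset.sum_comm]
      rw [Finset.sum_congr rfl (fun h _ => perH d a f y n h 0)]
      rw [← Finset.sum_div, Finset.sum_sub_distrib, ← Finset.mul_sum]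
      rw [sum_box_period d n (fun h => blockSum d a f y n h 0)
        (fun h h' hdvd => blockSum_congr_h d a f y 0 hdvd)]
      rw [hFb]
      dsimp only
      have hpow : (2:ℝ)^((n+1)*d) = 2^(n*d) * 2^d := by
        rw [← pow_add]
        congr 1
        ring
      rw [hpow]
      have h1 : (0:ℝ) < 2^(n*d) := by positivity
      have h2 : (0:ℝ) < 2^d := by positivity
      field_simp
    have hT := hTsum y
    have hsum2 : Summable (fun n : ℕ => Fb n - Fb (n+1)) := by
      apply Summable.congr (summable_sum hT)
      intro n
      exact hstep n
    have hFbabs : ∀ m : ℕ, |Fb m| ≤ Φ (2^m) / 2^(m*(d-1)) := by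
      intro m
      have hS : |∑ h ∈ boxZ d (2^m), blockSum d a f y m h 0| ≤ 2^(m*d) * Φ (2^m) := by
        calc |∑ h ∈ boxZ d (2^m), blockSum d a f y m h 0|
            ≤ ∑ h ∈ boxZ d (2^m), |blockSum d a f y m h 0| := Finset.abs_sum_le_sum_abs _ _
          _ ≤ ∑ _h ∈ boxZ d (2^m), Φ (2^m) :=
              Finset.sum_le_sum (fun h _ => blockSum_abs d a f y Φ haadd hΦ m h 0)
          _ = ((boxZ d (2^m)).card : ℝ) * Φ (2^m) := by rw [Finset.sum_const, nsmul_eq_mul]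
          _ = 2^(m*d) * Φ (2^m) := by
              rw [box_card]
              congr 1
              push_cast
              rw [← pow_mul]
      rw [hFb]
      dsimp only
      rw [abs_div, abs_of_pos (by positivity : (0:ℝ) < 2^(m*d) * 2^(m*d))]
      calc |∑ h ∈ boxZ d (2^m), blockSum d a f y m h 0| / (2^(m*d) * 2^(m*d))
          ≤ (2^(m*d) * Φ (2^m)) / (2^(m*d) * 2^(m*d)) := by gcongr
        _ = Φ (2^m) / 2^(m*d) := by
            field_simp
        _ ≤ Φ (2^m) / 2^(m*(d-1)) := by
            have hle : (2:ℝ)^(m*(d-1)) ≤ 2^(m*d) := by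
              apply pow_le_pow_right₀ one_le_two
              exact Nat.mul_le_mul_left m (Nat.sub_le d 1)
            have hpos : (0:ℝ) < 2^(m*(d-1)) := by positivity
            apply div_le_div_of_nonneg_left (Φ0 m) hpos hle
    have hFb0 : Filter.Tendsto Fb Filter.atTop (nhds 0) := by
      have hu : Filter.Tendsto (fun m : ℕ => Φ (2^m) / 2^(m*(d-1))) Filter.atTop (nhds 0) :=
        hsummable.tendsto_atTop_zero
      have habs : Filter.Tendsto (fun m => |Fb m|) Filter.atTop (nhds 0) :=
        squeeze_zero (fun m => abs_nonneg _) hFbabs hu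
      have := habs.neg
      rw [neg_zero] at this
      exact tendsto_of_tendsto_of_tendsto_of_le_of_le this habs
        (fun m => neg_abs_le _) (fun m => le_abs_self _)
    have htel : ∑' n : ℕ, (Fb n - Fb (n+1)) = Fb 0 := by
      apply HasSum.tsum_eq
      rw [hsum2.hasSum_iff_tendsto_nat]
      have heq : ∀ N : ℕ, ∑ i ∈ Finset.range N, (Fb i - Fb (i+1)) = Fb 0 - Fb N :=
        fun N => Finset.sum_range_sub' Fb N
      rw [funext heq]
      have := Filter.Tendsto.sub (tendsto_const_nhds : Filter.Tendsto (fun _ : ℕ => Fb 0)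
        Filter.atTop (nhds (Fb 0))) hFb0
      rwa [sub_zero] at this
    have hFbzero : Fb 0 = f y := by
      rw [hFb]
      dsimp only
      have hbox1 : boxZ d (2^0) = {0} := by
        ext r
        rw [Finset.mem_singleton, mem_boxZ' d]
        constructor
        · intro hr
          funext j
          have h1 := hr j
          norm_num at h1
          show r j = 0
          omega
        · intro hr
          subst hr
          intro j
          simp
      rw [hbox1, Finset.sum_singleton]
      unfold blockSum
      rw [hbox1, Finset.sum_singleton]
      have hlb : latticeBase d 0 0 0 = 0 := by
        funext j
        simp [latticeBase]
      rw [hlb, add_zero, ha0]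
      norm_num
    calc ∑ γ ∈ Gamma1 d, psiX d a f y 0 γ
        = ∑' n : ℕ, ∑ γ ∈ Gamma1 d,
            ((1 / 2 ^ ((n + 1) * d)) * ∑ h ∈ boxZ d (2 ^ (n + 1)),
              (phiFlow d a f y (n + 1) h 0 γ - phiFlow d a f y (n + 1) h (0 + γ) (-γ))) := by
          rw [Summable.tsum_finsetSum hT]
          rfl
      _ = ∑' n : ℕ, (Fb n - Fb (n+1)) := tsum_congr hstep
      _ = Fb 0 := htel
      _ = f y := hFbzero
  · -- bound
    intro y γ hγ
    have Φ0 : ∀ m : ℕ, 0 ≤ Φ (2^m) := fun m => le_trans (abs_nonneg _) (hΦ y m).le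
    have hsumT := hTsum y γ hγ
    have habsT : Summable (fun n : ℕ => |(1 / 2 ^ ((n + 1) * d)) * ∑ h ∈ boxZ d (2 ^ (n + 1)),
        (phiFlow d a f y (n + 1) h 0 γ - phiFlow d a f y (n + 1) h (0 + γ) (-γ))|) := hsumT.abs
    have hu0 : 0 ≤ ∑' n : ℕ, Φ (2 ^ n) / 2 ^ (n * (d - 1)) :=
      tsum_nonneg (fun n => div_nonneg (Φ0 n) (by positivity))
    calc |psiX d a f y 0 γ|
        ≤ ∑' n : ℕ, |(1 / 2 ^ ((n + 1) * d)) * ∑ h ∈ boxZ d (2 ^ (n + 1)),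
            (phiFlow d a f y (n + 1) h 0 γ - phiFlow d a f y (n + 1) h (0 + γ) (-γ))| := by
          rw [← Real.norm_eq_abs]
          unfold psiX
          have habsT' : Summable (fun n : ℕ => ‖(1 / 2 ^ ((n + 1) * d)) *
              ∑ h ∈ boxZ d (2 ^ (n + 1)),
              (phiFlow d a f y (n + 1) h 0 γ - phiFlow d a f y (n + 1) h (0 + γ) (-γ))‖) := by
            simpa only [Real.norm_eq_abs] using habsT
          exact (norm_tsum_le_tsum_norm habsT').trans_eq
            (tsum_congr fun n => Real.norm_eq_abs _)
      _ ≤ ∑' n : ℕ, Φ (2^n) / (2^(n*(d-1)) * 2^d) := by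
          apply Summable.tsum_le_tsum ?_ habsT hbndsum
          intro n
          exact term_abs d a f y Φ hd haadd hΦ hγ n 0
      _ = (1/2^d) * ∑' n : ℕ, Φ (2 ^ n) / 2 ^ (n * (d - 1)) := by
          rw [← tsum_mul_left]
          apply tsum_congr
          intro n
          rw [div_mul_div_comm, one_mul, mul_comm ((2:ℝ)^(n*(d-1))) (2^d)]
      _ ≤ (1 / 2 ^ (d - 1)) * ∑' n : ℕ, Φ (2 ^ n) / 2 ^ (n * (d - 1)) := by
          apply mul_le_mul_of_nonneg_right ?_ hu0
          apply one_div_le_one_div_of_le (by positivity)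
          apply pow_le_pow_right₀ one_le_two (Nat.sub_le d 1)
      _ = c := hc.symm
end

section
/- Suppose G is a locally finite graph on vertex set X, c is a capacity function for G taking integer values, and f : X → ℤ takes integer values. If G has an f-flow bounded by c, then G has an integral f-flow bounded by c. -/
open Finset

section IFT
set_option linter.unusedSectionVars false
set_option linter.unusedVariables false
set_option linter.unusedTactic false
open scoped Classical

def NotInt (r : ℝ) : Prop := ¬ ∃ m : ℤ, r = (m : ℝ)

lemma NotInt.neg {r : ℝ} (h : NotInt r) : NotInt (-r) := by
  rintro ⟨m, hm⟩
  exact h ⟨-m, by push_cast; linarith⟩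

lemma NotInt.lt_ceil {r : ℝ} (h : NotInt r) : r < (⌈r⌉ : ℝ) :=
  lt_of_le_of_ne (Int.le_ceil r) (fun he => h ⟨⌈r⌉, he⟩)

lemma NotInt.floor_lt {r : ℝ} (h : NotInt r) : (⌊r⌋ : ℝ) < r :=
  lt_of_le_of_ne (Int.floor_le r) (fun he => h ⟨⌊r⌋, he.symm⟩)

lemma sum_int_of_int {α : Type*} {s : Finset α} {g : α → ℝ}
    (h : ∀ i ∈ s, ∃ m : ℤ, g i = (m : ℝ)) : ∃ m : ℤ, ∑ i ∈ s, g i = (m : ℝ) := by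
  choose m hm using h
  refine ⟨∑ i ∈ s.attach, m i i.2, ?_⟩
  rw [← Finset.sum_attach s g]
  push_cast
  exact Finset.sum_congr rfl fun i _ => hm i i.2

variable {X : Type*} [LinearOrder X] (G : SimpleGraph X) [G.LocallyFinite]
variable (ψ : X → X → ℝ) (S : Finset X)

/-- The finset of (ordered representatives of) edges incident to `S` on which `ψ` is
non-integral. -/
noncomputable def colsF : Finset (X × X) :=
  (S.biUnion fun x => (G.neighborFinset x).biUnion fun y => {(x, y), (y, x)}).filter
    fun p => p.1 < p.2 ∧ NotInt (ψ p.1 p.2)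

/-- The finset of vertices of `S` incident to a non-integral edge. -/
noncomputable def rowsF : Finset X :=
  S.filter fun x => ∃ y, G.Adj x y ∧ NotInt (ψ x y)

lemma mem_colsF {p : X × X} :
    p ∈ colsF G ψ S ↔
      G.Adj p.1 p.2 ∧ p.1 < p.2 ∧ NotInt (ψ p.1 p.2) ∧ (p.1 ∈ S ∨ p.2 ∈ S) := by
  unfold colsF
  simp only [Finset.mem_filter, Finset.mem_biUnion, SimpleGraph.mem_neighborFinset,
    Finset.mem_insert, Finset.mem_singleton]
  constructor
  · rintro ⟨⟨x, hxS, y, hxy, hp | hp⟩, hlt, hni⟩ <;> subst hp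
    · exact ⟨hxy, hlt, hni, Or.inl hxS⟩
    · exact ⟨hxy.symm, hlt, hni, Or.inr hxS⟩
  · rintro ⟨hadj, hlt, hni, hS | hS⟩
    · exact ⟨⟨p.1, hS, p.2, hadj, Or.inl rfl⟩, hlt, hni⟩
    · exact ⟨⟨p.2, hS, p.1, hadj.symm, Or.inr rfl⟩, hlt, hni⟩

lemma mem_rowsF {x : X} :
    x ∈ rowsF G ψ S ↔ x ∈ S ∧ ∃ y, G.Adj x y ∧ NotInt (ψ x y) := by
  unfold rowsF; simp [Finset.mem_filter]


/-- With antisymmetry, non-integrality is symmetric. -/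
lemma notInt_symm (hanti : ∀ x y, G.Adj x y → ψ x y = -ψ y x) {x y : X}
    (hadj : G.Adj x y) (h : NotInt (ψ x y)) : NotInt (ψ y x) := by
  rw [hanti y x hadj.symm]
  exact h.neg

/-- Every vertex of `S` incident to a fractional edge has at least two fractional edges. -/
lemma two_le_fracdeg (hanti : ∀ x y, G.Adj x y → ψ x y = -ψ y x)
    {x : X} (hcons : ∃ k : ℤ, ∑ y ∈ G.neighborFinset x, ψ x y = (k : ℝ))
    (hx : ∃ y, G.Adj x y ∧ NotInt (ψ x y)) :
    2 ≤ ((G.neighborFinset x).filter fun y => NotInt (ψ x y)).card := by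
  set Fr := (G.neighborFinset x).filter fun y => NotInt (ψ x y) with hFr
  obtain ⟨y, hadj, hni⟩ := hx
  have hyFr : y ∈ Fr := by
    rw [hFr, Finset.mem_filter, SimpleGraph.mem_neighborFinset]; exact ⟨hadj, hni⟩
  have hne : Fr.Nonempty := ⟨y, hyFr⟩
  by_contra hlt
  push_neg at hlt
  interval_cases h : Fr.card
  · exact Finset.not_nonempty_empty (Finset.card_eq_zero.mp h ▸ hne)
  · obtain ⟨y₀, hy₀⟩ := Finset.card_eq_one.mp h
    have hsplit := Finset.sum_filter_add_sum_filter_not (G.neighborFinset x)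
      (fun y => NotInt (ψ x y)) (fun y => ψ x y)
    rw [← hFr, hy₀, Finset.sum_singleton] at hsplit
    obtain ⟨k2, hk2⟩ := sum_int_of_int (s := (G.neighborFinset x).filter
        fun y => ¬ NotInt (ψ x y)) (g := fun y => ψ x y)
      (fun i hi => not_not.mp (Finset.mem_filter.mp hi).2)
    obtain ⟨k, hk⟩ := hcons
    have hy₀Fr : y₀ ∈ Fr := hy₀ ▸ Finset.mem_singleton_self y₀
    have : NotInt (ψ x y₀) := (Finset.mem_filter.mp hy₀Fr).2
    exact this ⟨k - k2, by push_cast; linarith⟩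

lemma exists_kernel (hanti : ∀ x y, G.Adj x y → ψ x y = -ψ y x)
    (hcons : ∀ x ∈ S, ∃ k : ℤ, ∑ y ∈ G.neighborFinset x, ψ x y = (k : ℝ))
    (hne : (colsF G ψ S).Nonempty) :
    ∃ δ : X × X → ℝ, (∀ p, p ∉ colsF G ψ S → δ p = 0) ∧
      (∃ p ∈ colsF G ψ S, δ p ≠ 0) ∧
      ∀ x ∈ rowsF G ψ S,
        ∑ p ∈ (colsF G ψ S).filter (fun p => p.1 = x), δ p
          = ∑ p ∈ (colsF G ψ S).filter (fun p => p.2 = x), δ p := by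
  classical
  set C := colsF G ψ S with hC
  set Rw := rowsF G ψ S with hRw
  -- row degrees are at least 2
  have hdeg : ∀ x ∈ Rw, 2 ≤ ((C.filter fun p => p.1 = x ∨ p.2 = x)).card := by
    intro x hx
    rw [mem_rowsF] at hx
    obtain ⟨hxS, hxfr⟩ := hx
    have h2 := two_le_fracdeg G ψ hanti (hcons x hxS) hxfr
    refine le_trans h2 (Finset.card_le_card_of_injOn
      (fun y => if x < y then (x, y) else (y, x)) ?_ ?_)
    · intro y hy
      rw [Finset.mem_coe, Finset.mem_filter, SimpleGraph.mem_neighborFinset] at hy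
      obtain ⟨hadj, hni⟩ := hy
      dsimp only
      by_cases hxy : x < y
      · rw [if_pos hxy, Finset.mem_coe, Finset.mem_filter, hC, mem_colsF]
        exact ⟨⟨hadj, hxy, hni, Or.inl hxS⟩, Or.inl rfl⟩
      · have hyx : y < x := lt_of_le_of_ne (not_lt.mp hxy) hadj.ne'
        rw [if_neg hxy, Finset.mem_coe, Finset.mem_filter, hC, mem_colsF]
        exact ⟨⟨hadj.symm, hyx, notInt_symm G ψ hanti hadj hni, Or.inr hxS⟩, Or.inr rfl⟩
    · intro y₁ h₁ y₂ h₂ hF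
      dsimp only at hF
      by_cases k₁ : x < y₁ <;> by_cases k₂ : x < y₂
      · rw [if_pos k₁, if_pos k₂, Prod.mk.injEq] at hF
        exact hF.2
      · rw [if_pos k₁, if_neg k₂, Prod.mk.injEq] at hF
        exact absurd (hF.2 ▸ k₁) (lt_irrefl x)
      · rw [if_neg k₁, if_pos k₂, Prod.mk.injEq] at hF
        exact absurd (hF.2 ▸ k₂) (lt_irrefl _)
      · rw [if_neg k₁, if_neg k₂, Prod.mk.injEq] at hF
        exact hF.1
  -- column counts are at most 2
  have hcnt_le : ∀ p : X × X, ((Rw.filter fun x => p.1 = x ∨ p.2 = x)).card ≤ 2 := by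
    intro p
    calc ((Rw.filter fun x => p.1 = x ∨ p.2 = x)).card
        ≤ ({p.1, p.2} : Finset X).card := by
          apply Finset.card_le_card
          intro x hx
          rw [Finset.mem_filter] at hx
          rcases hx.2 with h | h <;> simp [h.symm]
      _ ≤ 2 := Finset.card_insert_le _ _ |>.trans (by simp)
  -- double counting
  have hdouble : ∑ x ∈ Rw, ((C.filter fun p => p.1 = x ∨ p.2 = x)).card
      = ∑ p ∈ C, ((Rw.filter fun x => p.1 = x ∨ p.2 = x)).card := by
    simp only [Finset.card_filter]
    rw [Finset.sum_comm]
  have hlow : 2 * Rw.card ≤ ∑ x ∈ Rw, ((C.filter fun p => p.1 = x ∨ p.2 = x)).card := by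
    calc 2 * Rw.card = ∑ _x ∈ Rw, 2 := by rw [Finset.sum_const, smul_eq_mul, mul_comm]
      _ ≤ _ := Finset.sum_le_sum hdeg
  have hhigh : ∑ p ∈ C, ((Rw.filter fun x => p.1 = x ∨ p.2 = x)).card ≤ 2 * C.card := by
    calc ∑ p ∈ C, ((Rw.filter fun x => p.1 = x ∨ p.2 = x)).card
        ≤ ∑ _p ∈ C, 2 := Finset.sum_le_sum fun p _ => hcnt_le p
      _ = 2 * C.card := by rw [Finset.sum_const, smul_eq_mul, mul_comm]
  have hnm : Rw.card ≤ C.card := by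
    have := hlow.trans (hdouble ▸ hhigh)
    omega
  -- incidence matrix
  set Mat : Matrix {x // x ∈ Rw} {p // p ∈ C} ℝ :=
    fun i j => if j.1.1 = i.1 then 1 else if j.1.2 = i.1 then -1 else 0 with hMat
  have hRwne : Rw.Nonempty := by
    obtain ⟨p, hp⟩ := hne
    rw [hC, mem_colsF] at hp
    obtain ⟨hadj, hlt, hni, hS | hS⟩ := hp
    · refine ⟨p.1, ?_⟩
      rw [hRw, mem_rowsF]
      exact ⟨hS, p.2, hadj, hni⟩
    · refine ⟨p.2, ?_⟩
      rw [hRw, mem_rowsF]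
      exact ⟨hS, p.1, hadj.symm, notInt_symm G ψ hanti hadj hni⟩
  have hCcard : Module.finrank ℝ ({p // p ∈ C} → ℝ) = C.card := by
    rw [Module.finrank_fintype_fun_eq_card, Fintype.card_coe]
  have hRcard : Module.finrank ℝ ({x // x ∈ Rw} → ℝ) = Rw.card := by
    rw [Module.finrank_fintype_fun_eq_card, Fintype.card_coe]
  have hkerne : ∃ v : {p // p ∈ C} → ℝ, v ≠ 0 ∧ Mat.mulVec v = 0 := by
    have hker : LinearMap.ker Mat.mulVecLin ≠ ⊥ := by
      intro hbot
      have hinj : Function.Injective Mat.mulVecLin := LinearMap.ker_eq_bot.mp hbot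
      have hinjrank : Mat.rank = C.card := by
        have h1 : Mat.rank = Module.finrank ℝ (LinearMap.range Mat.mulVecLin) := rfl
        rw [h1, LinearMap.finrank_range_of_inj hinj, hCcard]
      by_cases hlt : Rw.card < C.card
      · have := LinearMap.finrank_le_finrank_of_injective hinj
        rw [hCcard, hRcard] at this
        omega
      · have heq : Rw.card = C.card := le_antisymm hnm (not_lt.mp hlt)
        have hsums : 2 * C.card ≤ ∑ p ∈ C, ((Rw.filter fun x => p.1 = x ∨ p.2 = x)).card := by
          have := hlow.trans (le_of_eq hdouble)
          omega
        have hcnt2 : ∀ p ∈ C, ((Rw.filter fun x => p.1 = x ∨ p.2 = x)).card = 2 := by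
          by_contra hcon
          push_neg at hcon
          obtain ⟨p₀, hp₀, hne2⟩ := hcon
          have hlt2 : ((Rw.filter fun x => p₀.1 = x ∨ p₀.2 = x)).card < 2 :=
            lt_of_le_of_ne (hcnt_le p₀) hne2
          have hslt := Finset.sum_lt_sum (fun p (_ : p ∈ C) => hcnt_le p) ⟨p₀, hp₀, hlt2⟩
          rw [Finset.sum_const, smul_eq_mul] at hslt
          omega
        have hends : ∀ j : {p // p ∈ C}, j.1.1 ∈ Rw ∧ j.1.2 ∈ Rw := by
          intro j
          have h2 := hcnt2 j.1 j.2
          have hne12 : j.1.1 ≠ j.1.2 :=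
            ne_of_lt ((mem_colsF G ψ S).mp j.2).2.1
          have hsub : (Rw.filter fun x => j.1.1 = x ∨ j.1.2 = x) ⊆ {j.1.1, j.1.2} := by
            intro x hx
            rcases (Finset.mem_filter.mp hx).2 with h | h <;> simp [← h]
          have hpair : ({j.1.1, j.1.2} : Finset X).card ≤ 2 :=
            (Finset.card_insert_le _ _).trans (by simp)
          have heqf : (Rw.filter fun x => j.1.1 = x ∨ j.1.2 = x) = {j.1.1, j.1.2} :=
            Finset.eq_of_subset_of_card_le hsub (by omega)
          constructor
          · have h1 : j.1.1 ∈ (Rw.filter fun x => j.1.1 = x ∨ j.1.2 = x) := by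
              rw [heqf]; simp
            exact (Finset.mem_filter.mp h1).1
          · have h1 : j.1.2 ∈ (Rw.filter fun x => j.1.1 = x ∨ j.1.2 = x) := by
              rw [heqf]; simp
            exact (Finset.mem_filter.mp h1).1
        set u : {x // x ∈ Rw} → ℝ := fun _ => 1 with hu
        have hune : u ≠ 0 := by
          obtain ⟨x0, hx0⟩ := hRwne
          intro h0
          have := congrFun h0 ⟨x0, hx0⟩
          simp [hu] at this
        have hu0 : Mat.transpose.mulVec u = 0 := by
          funext j
          have hne12 : j.1.1 ≠ j.1.2 :=
            ne_of_lt ((mem_colsF G ψ S).mp j.2).2.1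
          set a : {x // x ∈ Rw} := ⟨j.1.1, (hends j).1⟩ with ha
          set b : {x // x ∈ Rw} := ⟨j.1.2, (hends j).2⟩ with hb
          have hab : a ≠ b := fun h => hne12 (congrArg Subtype.val h)
          have haj : (a : X) = (j : X × X).1 := rfl
          have hbj : (b : X) = (j : X × X).2 := rfl
          have hM : ∀ i : {x // x ∈ Rw},
              Mat i j = (if i = a then (1:ℝ) else 0) + (if i = b then (-1:ℝ) else 0) := by
            intro i
            have e1 : ((j : X × X).1 = (i : X)) ↔ i = a := by
              constructor
              · intro h
                exact Subtype.ext (h.symm.trans haj.symm)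
              · intro h
                subst h
                exact haj.symm
            have e2 : ((j : X × X).2 = (i : X)) ↔ i = b := by
              constructor
              · intro h
                exact Subtype.ext (h.symm.trans hbj.symm)
              · intro h
                subst h
                exact hbj.symm
            simp only [hMat]
            by_cases h1 : i = a
            · rw [if_pos (e1.mpr h1), if_pos h1,
                if_neg (fun h2 : i = b => hab (h1.symm.trans h2))]
              norm_num
            · rw [if_neg (fun h => h1 (e1.mp h)), if_neg h1]
              by_cases h2 : i = b
              · rw [if_pos (e2.mpr h2), if_pos h2]
                norm_num
              · rw [if_neg (fun h => h2 (e2.mp h)), if_neg h2]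
                norm_num
          simp only [Matrix.mulVec, dotProduct, Matrix.transpose_apply, hu, mul_one,
            Pi.zero_apply]
          rw [Finset.sum_congr rfl (fun i _ => hM i)]
          rw [Finset.sum_add_distrib, Finset.sum_ite_eq' Finset.univ a (fun _ => (1:ℝ)),
            Finset.sum_ite_eq' Finset.univ b (fun _ => (-1:ℝ))]
          simp
        -- transpose has a nontrivial left kernel, contradiction with injectivity
        have hker' : u ∈ LinearMap.ker (Mat.transpose.mulVecLin) := by
          rw [LinearMap.mem_ker, Matrix.mulVecLin_apply, hu0]
        have hkt : LinearMap.ker (Mat.transpose.mulVecLin) ≠ ⊥ := by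
          intro hb
          rw [hb, Submodule.mem_bot] at hker'
          exact hune hker'
        have hk1 : Module.finrank ℝ (LinearMap.ker (Mat.transpose.mulVecLin)) ≠ 0 :=
          fun h => hkt (Submodule.finrank_eq_zero.mp h)
        have hrn := LinearMap.finrank_range_add_finrank_ker (Mat.transpose.mulVecLin)
        rw [hRcard] at hrn
        have hrtrk : Mat.transpose.rank
            = Module.finrank ℝ (LinearMap.range (Mat.transpose.mulVecLin)) := rfl
        have hr : Mat.transpose.rank = Mat.rank := Matrix.rank_transpose Mat
        have hCpos : 0 < C.card := Finset.card_pos.mpr hne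
        omega
    obtain ⟨v, hvmem, hv0⟩ := (Submodule.ne_bot_iff _).mp hker
    exact ⟨v, hv0, by rw [← Matrix.mulVecLin_apply]; exact LinearMap.mem_ker.mp hvmem⟩
  obtain ⟨v, hv0, hvker⟩ := hkerne
  refine ⟨fun p => if h : p ∈ C then v ⟨p, h⟩ else 0, ?_, ?_, ?_⟩
  · intro p hp
    exact dif_neg hp
  · obtain ⟨j, hj⟩ := Function.ne_iff.mp hv0
    refine ⟨j.1, j.2, ?_⟩
    show (if h : (j : X × X) ∈ C then v ⟨(j : X × X), h⟩ else 0) ≠ 0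
    rw [dif_pos j.2]
    simpa using hj
  · intro x hx
    have h0 : Mat.mulVec v ⟨x, hx⟩ = 0 := congrFun hvker ⟨x, hx⟩
    simp only [Matrix.mulVec, dotProduct] at h0
    have hterm : ∀ j : {p // p ∈ C}, Mat ⟨x, hx⟩ j * v j
        = (fun p => (if p.1 = x then (if h : p ∈ C then v ⟨p, h⟩ else 0) else 0)
            - (if p.2 = x then (if h : p ∈ C then v ⟨p, h⟩ else 0) else 0)) (j : X × X) := by
      intro j
      have hne12 : (j : X × X).1 ≠ (j : X × X).2 :=
        ne_of_lt ((mem_colsF G ψ S).mp j.2).2.1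
      simp only [hMat]
      rw [dif_pos j.2]
      by_cases h1 : (j : X × X).1 = x
      · rw [if_pos h1, if_pos h1, if_neg (fun h2 => hne12 (h1.trans h2.symm)), one_mul]
        simp
      · rw [if_neg h1, if_neg h1]
        by_cases h2 : (j : X × X).2 = x
        · rw [if_pos h2, if_pos h2]
          simp
        · rw [if_neg h2, if_neg h2]
          simp
    rw [Finset.sum_congr rfl (fun j _ => hterm j)] at h0
    rw [Finset.sum_coe_sort C (fun p => (if p.1 = x then (if h : p ∈ C then v ⟨p, h⟩ else 0) else 0)
      - (if p.2 = x then (if h : p ∈ C then v ⟨p, h⟩ else 0) else 0))] at h0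
    rw [Finset.sum_sub_distrib] at h0
    rw [Finset.sum_filter, Finset.sum_filter]
    have h0' := sub_eq_zero.mp h0
    convert h0' using 2
    all_goals try refine Finset.sum_congr rfl fun p _ => ?_
    all_goals congr 1

/-- The key inductive step: if there are fractional edges at `S`, one can modify the flow,
keeping antisymmetry, conservation on `S`, and each value within the unit interval of the
old value, while strictly decreasing the set of fractional `S`-incident edges. -/
lemma exists_push (hanti : ∀ x y, G.Adj x y → ψ x y = -ψ y x)
    (hcons : ∀ x ∈ S, ∃ k : ℤ, ∑ y ∈ G.neighborFinset x, ψ x y = (k : ℝ))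
    (hne : (colsF G ψ S).Nonempty) :
    ∃ ψ' : X → X → ℝ,
      (∀ x y, G.Adj x y → ψ' x y = -ψ' y x) ∧
      (∀ x ∈ S, ∑ y ∈ G.neighborFinset x, ψ' x y = ∑ y ∈ G.neighborFinset x, ψ x y) ∧
      (∀ x y, ((⌊ψ x y⌋ : ℝ) ≤ ψ' x y ∧ ψ' x y ≤ (⌈ψ x y⌉ : ℝ))) ∧
      colsF G ψ' S ⊂ colsF G ψ S := by
  classical
  obtain ⟨δ, hsupp, ⟨p₀, hp₀C, hp₀⟩, hrows⟩ := exists_kernel G ψ S hanti hcons hne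
  set C := colsF G ψ S with hCdef
  -- the swapped pair of a column is never a column
  have hswap : ∀ p : X × X, p ∈ C → ((p.2, p.1) ∉ C) := by
    intro p hp hq
    have h1 := ((mem_colsF G ψ S).mp hp).2.1
    have h2 := ((mem_colsF G ψ S).mp hq).2.1
    exact absurd (h1.trans h2) (lt_irrefl _)
  -- the push amount
  set T : Finset ℝ := (C.filter fun p => δ p ≠ 0).image fun p =>
    if 0 < δ p then ((⌈ψ p.1 p.2⌉ : ℝ) - ψ p.1 p.2) / δ p
    else ((⌊ψ p.1 p.2⌋ : ℝ) - ψ p.1 p.2) / δ p with hTdef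
  have hTne : T.Nonempty :=
    ⟨_, Finset.mem_image_of_mem _ (Finset.mem_filter.mpr ⟨hp₀C, hp₀⟩)⟩
  set t : ℝ := T.min' hTne with htdef
  have htpos : 0 < t := by
    rw [htdef, Finset.lt_min'_iff]
    intro r hr
    rw [hTdef, Finset.mem_image] at hr
    obtain ⟨p, hpmem, hpr⟩ := hr
    obtain ⟨hpC, hpδ⟩ := Finset.mem_filter.mp hpmem
    have hni : NotInt (ψ p.1 p.2) := ((mem_colsF G ψ S).mp hpC).2.2.1
    subst hpr
    by_cases hsgn : 0 < δ p
    · rw [if_pos hsgn]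
      exact div_pos (sub_pos.mpr hni.lt_ceil) hsgn
    · rw [if_neg hsgn]
      have hneg : δ p < 0 := lt_of_le_of_ne (not_lt.mp hsgn) hpδ
      exact div_pos_of_neg_of_neg (sub_neg.mpr hni.floor_lt) hneg
  -- the per-column bounds
  have hbound : ∀ p ∈ C,
      (⌊ψ p.1 p.2⌋ : ℝ) ≤ ψ p.1 p.2 + t * δ p ∧ ψ p.1 p.2 + t * δ p ≤ (⌈ψ p.1 p.2⌉ : ℝ) := by
    intro p hpC
    by_cases hpδ : δ p = 0
    · rw [hpδ, mul_zero, add_zero]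
      exact ⟨Int.floor_le _, Int.le_ceil _⟩
    by_cases hsgn : 0 < δ p
    · have ht1 : t ≤ ((⌈ψ p.1 p.2⌉ : ℝ) - ψ p.1 p.2) / δ p := by
        apply Finset.min'_le
        rw [hTdef, Finset.mem_image]
        exact ⟨p, Finset.mem_filter.mpr ⟨hpC, hpδ⟩, (if_pos hsgn).symm ▸ rfl⟩
      have ht2 : t * δ p ≤ (⌈ψ p.1 p.2⌉ : ℝ) - ψ p.1 p.2 := by
        have := mul_le_mul_of_nonneg_right ht1 hsgn.le
        rwa [div_mul_cancel₀ _ (ne_of_gt hsgn)] at this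
      constructor
      · have : 0 ≤ t * δ p := mul_nonneg htpos.le hsgn.le
        linarith [Int.floor_le (ψ p.1 p.2)]
      · linarith
    · have hneg : δ p < 0 := lt_of_le_of_ne (not_lt.mp hsgn) hpδ
      have ht1 : t ≤ ((⌊ψ p.1 p.2⌋ : ℝ) - ψ p.1 p.2) / δ p := by
        apply Finset.min'_le
        rw [hTdef, Finset.mem_image]
        exact ⟨p, Finset.mem_filter.mpr ⟨hpC, hpδ⟩, (if_neg hsgn).symm ▸ rfl⟩
      have ht2 : (⌊ψ p.1 p.2⌋ : ℝ) - ψ p.1 p.2 ≤ t * δ p := by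
        have := mul_le_mul_of_nonpos_right ht1 hneg.le
        rwa [div_mul_cancel₀ _ (ne_of_lt hneg)] at this
      constructor
      · linarith
      · have : t * δ p ≤ 0 := mul_nonpos_of_nonneg_of_nonpos htpos.le hneg.le
        linarith [Int.le_ceil (ψ p.1 p.2)]
  -- the new flow
  set ψ' : X → X → ℝ := fun x y => ψ x y + t * (δ (x, y) - δ (y, x)) with hψ'def
  have hψ'unchanged : ∀ x y, (x, y) ∉ C → (y, x) ∉ C → ψ' x y = ψ x y := by
    intro x y h1 h2
    rw [hψ'def]
    simp [hsupp _ h1, hsupp _ h2]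
  have hint : ∀ x y, (⌊ψ x y⌋ : ℝ) ≤ ψ' x y ∧ ψ' x y ≤ (⌈ψ x y⌉ : ℝ) := by
    intro x y
    by_cases h1 : (x, y) ∈ C
    · have h2 : (y, x) ∉ C := hswap _ h1
      have := hbound (x, y) h1
      rw [hψ'def]
      simpa [hsupp _ h2] using this
    · by_cases h2 : (y, x) ∈ C
      · have hb := hbound (y, x) h2
        have hadj : G.Adj y x := ((mem_colsF G ψ S).mp h2).1
        have hxy : ψ x y = -ψ y x := hanti x y hadj.symm
        have hval : ψ' x y = -(ψ y x + t * δ (y, x)) := by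
          rw [hψ'def]
          simp only [hsupp _ h1]
          rw [hxy]
          ring
        constructor
        · rw [hval, hxy, Int.floor_neg]
          push_cast
          simp only [neg_le_neg_iff]
          exact hb.2
        · rw [hval, hxy, Int.ceil_neg]
          push_cast
          simp only [neg_le_neg_iff]
          exact hb.1
      · rw [hψ'unchanged x y h1 h2]
        exact ⟨Int.floor_le _, Int.le_ceil _⟩
  have hsubset : colsF G ψ' S ⊆ C := by
    intro p hp
    rw [mem_colsF] at hp
    obtain ⟨hadj, hlt, hni, hS⟩ := hp
    rw [hCdef, mem_colsF]
    refine ⟨hadj, hlt, ?_, hS⟩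
    by_contra hniψ
    have h1 : (p.1, p.2) ∉ C := by
      intro hmem
      exact hniψ ((mem_colsF G ψ S).mp hmem).2.2.1
    have h2 : (p.2, p.1) ∉ C := by
      intro hmem
      exact absurd (hlt.trans ((mem_colsF G ψ S).mp hmem).2.1) (lt_irrefl _)
    have := hψ'unchanged p.1 p.2 h1 h2
    rw [this] at hni
    exact hniψ hni
  refine ⟨ψ', ?_, ?_, hint, ?_⟩
  · -- antisymmetry
    intro x y hadj
    rw [hψ'def]
    simp only
    rw [hanti x y hadj]
    ring
  · -- conservation on S
    intro x hxS
    have hsum : ∀ y ∈ G.neighborFinset x, ψ' x y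
        = ψ x y + t * δ (x, y) - t * δ (y, x) := by
      intro y _
      rw [hψ'def]
      ring
    rw [Finset.sum_congr rfl hsum]
    have hout : ∑ y ∈ G.neighborFinset x, δ (x, y)
        = ∑ p ∈ C.filter (fun p => p.1 = x), δ p := by
      rw [← Finset.sum_filter_of_ne (p := fun y => (x, y) ∈ C)
        (fun y _ hy => by by_contra hc; exact hy (hsupp _ hc))]
      refine Finset.sum_nbij' (fun y => (x, y)) (fun p => p.2) ?_ ?_ ?_ ?_ ?_
      · intro y hy
        rw [Finset.mem_filter] at hy ⊢
        exact ⟨hy.2, rfl⟩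
      · intro p hp
        rw [Finset.mem_filter] at hp ⊢
        obtain ⟨hpC, hpx⟩ := hp
        have hadj := ((mem_colsF G ψ S).mp hpC).1
        have hpe : (x, p.2) = p := by
          rw [← hpx]
        constructor
        · rw [SimpleGraph.mem_neighborFinset]
          rw [hpx] at hadj
          exact hadj
        · rw [hpe]
          exact hpC
      · intro y _
        rfl
      · intro p hp
        rw [Finset.mem_filter] at hp
        rw [← hp.2]
      · intro y _
        rfl
    have hin : ∑ y ∈ G.neighborFinset x, δ (y, x)
        = ∑ p ∈ C.filter (fun p => p.2 = x), δ p := by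
      rw [← Finset.sum_filter_of_ne (p := fun y => (y, x) ∈ C)
        (fun y _ hy => by by_contra hc; exact hy (hsupp _ hc))]
      refine Finset.sum_nbij' (fun y => (y, x)) (fun p => p.1) ?_ ?_ ?_ ?_ ?_
      · intro y hy
        rw [Finset.mem_filter] at hy ⊢
        exact ⟨hy.2, rfl⟩
      · intro p hp
        rw [Finset.mem_filter] at hp ⊢
        obtain ⟨hpC, hpx⟩ := hp
        have hadj := ((mem_colsF G ψ S).mp hpC).1
        have hpe : (p.1, x) = p := by
          rw [← hpx]
        constructor
        · rw [SimpleGraph.mem_neighborFinset]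
          rw [hpx] at hadj
          exact hadj.symm
        · rw [hpe]
          exact hpC
      · intro y _
        rfl
      · intro p hp
        rw [Finset.mem_filter] at hp
        rw [← hp.2]
      · intro y _
        rfl
    rw [Finset.sum_sub_distrib, Finset.sum_add_distrib, ← Finset.mul_sum, ← Finset.mul_sum,
      hout, hin]
    by_cases hxRw : x ∈ rowsF G ψ S
    · rw [hrows x hxRw]
      ring
    · have hz1 : ∑ p ∈ C.filter (fun p => p.1 = x), δ p = 0 := by
        apply Finset.sum_eq_zero
        intro p hp
        rw [Finset.mem_filter] at hp
        exfalso
        apply hxRw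
        rw [mem_rowsF]
        obtain ⟨hadj, _, hni, _⟩ := (mem_colsF G ψ S).mp hp.1
        rw [hp.2] at hadj hni
        exact ⟨hxS, p.2, hadj, hni⟩
      have hz2 : ∑ p ∈ C.filter (fun p => p.2 = x), δ p = 0 := by
        apply Finset.sum_eq_zero
        intro p hp
        rw [Finset.mem_filter] at hp
        exfalso
        apply hxRw
        rw [mem_rowsF]
        obtain ⟨hadj, _, hni, _⟩ := (mem_colsF G ψ S).mp hp.1
        rw [hp.2] at hadj hni
        exact ⟨hxS, p.1, hadj.symm, notInt_symm G ψ hanti hadj hni⟩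
      rw [hz1, hz2]
      ring
  · -- strict decrease
    rw [Finset.ssubset_iff_of_subset hsubset]
    have htmem : t ∈ T := Finset.min'_mem T hTne
    rw [hTdef, Finset.mem_image] at htmem
    obtain ⟨p, hpmem, hpt⟩ := htmem
    obtain ⟨hpC, hpδ⟩ := Finset.mem_filter.mp hpmem
    refine ⟨p, hpC, ?_⟩
    intro hmem
    rw [mem_colsF] at hmem
    apply hmem.2.2.1
    have h2 : (p.2, p.1) ∉ C := hswap _ hpC
    have hval : ψ' p.1 p.2 = ψ p.1 p.2 + t * δ p := by
      rw [hψ'def]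
      simp [hsupp _ h2]
    by_cases hsgn : 0 < δ p
    · rw [if_pos hsgn] at hpt
      refine ⟨⌈ψ p.1 p.2⌉, ?_⟩
      rw [hval, ← hpt, div_mul_cancel₀ _ (ne_of_gt hsgn)]
      ring
    · rw [if_neg hsgn] at hpt
      refine ⟨⌊ψ p.1 p.2⌋, ?_⟩
      have hneg : δ p < 0 := lt_of_le_of_ne (not_lt.mp hsgn) hpδ
      rw [hval, ← hpt, div_mul_cancel₀ _ (ne_of_lt hneg)]
      ring

/-- Finite rounding: given a flow `φ` (with conservation on `S`), there is a modification
which still satisfies conservation on `S`, stays within the unit interval around `φ`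
on every edge, and is integral on all edges incident to `S`. -/
lemma exists_rounding (φ : X → X → ℝ) (g : X → ℤ)
    (hanti : ∀ x y, G.Adj x y → φ x y = -φ y x)
    (hcons : ∀ x ∈ S, ∑ y ∈ G.neighborFinset x, φ x y = (g x : ℝ)) :
    ∃ ψ : X → X → ℝ,
      (∀ x y, G.Adj x y → ψ x y = -ψ y x) ∧
      (∀ x ∈ S, ∑ y ∈ G.neighborFinset x, ψ x y = (g x : ℝ)) ∧
      (∀ x y, G.Adj x y → ((⌊φ x y⌋ : ℝ) ≤ ψ x y ∧ ψ x y ≤ (⌈φ x y⌉ : ℝ))) ∧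
      (∀ x y, G.Adj x y → (x ∈ S ∨ y ∈ S) → ∃ m : ℤ, ψ x y = (m : ℝ)) := by
  classical
  suffices h : ∀ n : ℕ, ∀ ψ : X → X → ℝ,
      (∀ x y, G.Adj x y → ψ x y = -ψ y x) →
      (∀ x ∈ S, ∑ y ∈ G.neighborFinset x, ψ x y = (g x : ℝ)) →
      (∀ x y, G.Adj x y → ((⌊φ x y⌋ : ℝ) ≤ ψ x y ∧ ψ x y ≤ (⌈φ x y⌉ : ℝ))) →
      (colsF G ψ S).card ≤ n →
      ∃ ψ' : X → X → ℝ,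
        (∀ x y, G.Adj x y → ψ' x y = -ψ' y x) ∧
        (∀ x ∈ S, ∑ y ∈ G.neighborFinset x, ψ' x y = (g x : ℝ)) ∧
        (∀ x y, G.Adj x y → ((⌊φ x y⌋ : ℝ) ≤ ψ' x y ∧ ψ' x y ≤ (⌈φ x y⌉ : ℝ))) ∧
        (∀ x y, G.Adj x y → (x ∈ S ∨ y ∈ S) → ∃ m : ℤ, ψ' x y = (m : ℝ)) by
    exact h (colsF G φ S).card φ hanti hcons
      (fun x y h => ⟨Int.floor_le _, Int.le_ceil _⟩) le_rfl
  intro n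
  induction n with
  | zero =>
    intro ψ hanti1 hcons1 hival hcard
    have hempty : colsF G ψ S = ∅ := Finset.card_eq_zero.mp (Nat.le_zero.mp hcard)
    refine ⟨ψ, hanti1, hcons1, hival, ?_⟩
    intro x y hadj hS
    by_contra hni
    rcases lt_trichotomy x y with hlt | heq | hgt
    · have : (x, y) ∈ colsF G ψ S := (mem_colsF G ψ S).mpr ⟨hadj, hlt, hni, hS⟩
      rw [hempty] at this
      exact absurd this (Finset.notMem_empty _)
    · exact hadj.ne heq
    · have : (y, x) ∈ colsF G ψ S := (mem_colsF G ψ S).mpr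
        ⟨hadj.symm, hgt, notInt_symm G ψ hanti1 hadj hni, hS.symm⟩
      rw [hempty] at this
      exact absurd this (Finset.notMem_empty _)
  | succ n ih =>
    intro ψ hanti1 hcons1 hival hcard
    by_cases hC : (colsF G ψ S).Nonempty
    · obtain ⟨ψ', hanti2, hcons2, hival2, hss⟩ := exists_push G ψ S hanti1
        (fun x hx => ⟨g x, hcons1 x hx⟩) hC
      have hival3 : ∀ x y, G.Adj x y →
          ((⌊φ x y⌋ : ℝ) ≤ ψ' x y ∧ ψ' x y ≤ (⌈φ x y⌉ : ℝ)) := by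
        intro x y hadj
        obtain ⟨hl, hu⟩ := hival x y hadj
        obtain ⟨hl2, hu2⟩ := hival2 x y
        have h1 : (⌊φ x y⌋ : ℝ) ≤ (⌊ψ x y⌋ : ℝ) := by
          exact_mod_cast Int.le_floor.mpr hl
        have h2 : (⌈ψ x y⌉ : ℝ) ≤ (⌈φ x y⌉ : ℝ) := by
          exact_mod_cast Int.ceil_le.mpr hu
        exact ⟨le_trans h1 hl2, le_trans hu2 h2⟩
      have hcons3 : ∀ x ∈ S, ∑ y ∈ G.neighborFinset x, ψ' x y = (g x : ℝ) := by
        intro x hx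
        rw [hcons2 x hx]
        exact hcons1 x hx
      have hcard3 : (colsF G ψ' S).card ≤ n := by
        have := Finset.card_lt_card hss
        omega
      exact ih ψ' hanti2 hcons3 hival3 hcard3
    · refine ⟨ψ, hanti1, hcons1, hival, ?_⟩
      intro x y hadj hS
      by_contra hni
      rw [Finset.not_nonempty_iff_eq_empty] at hC
      rcases lt_trichotomy x y with hlt | heq | hgt
      · have : (x, y) ∈ colsF G ψ S := (mem_colsF G ψ S).mpr ⟨hadj, hlt, hni, hS⟩
        rw [hC] at this
        exact absurd this (Finset.notMem_empty _)
      · exact hadj.ne heq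
      · have : (y, x) ∈ colsF G ψ S := (mem_colsF G ψ S).mpr
          ⟨hadj.symm, hgt, notInt_symm G ψ hanti1 hadj hni, hS.symm⟩
        rw [hC] at this
        exact absurd this (Finset.notMem_empty _)

end IFT

/-- An `f`-flow on a locally finite graph `G`: a function on oriented edges, antisymmetric
on edges, whose net outflow at each vertex `x` equals `f x`. -/
def IsFlow {X : Type*} (G : SimpleGraph X) [G.LocallyFinite] (f : X → ℝ)
    (φ : X → X → ℝ) : Prop :=
  (∀ x y, G.Adj x y → φ x y = -φ y x) ∧
  (∀ x, ∑ y ∈ G.neighborFinset x, φ x y = f x)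

/-- **The integral flow theorem.** If `G` is a locally finite graph, `c` is an
integer-valued capacity function and `f` is integer valued, then the existence of an
`f`-flow bounded by `c` implies the existence of an integral `f`-flow bounded by `c`. -/
theorem integral_flow_theorem {X : Type*} (G : SimpleGraph X) [G.LocallyFinite]
    (c : X → X → ℝ) (hc : ∀ x y, G.Adj x y → 0 ≤ c x y)
    (hcint : ∀ x y, G.Adj x y → ∃ m : ℤ, c x y = (m : ℝ))
    (f : X → ℤ)
    (hflow : ∃ φ : X → X → ℝ, IsFlow G (fun x => (f x : ℝ)) φ ∧
      ∀ x y, G.Adj x y → φ x y ≤ c x y) :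
    ∃ ψ : X → X → ℝ, IsFlow G (fun x => (f x : ℝ)) ψ ∧
      (∀ x y, G.Adj x y → ψ x y ≤ c x y) ∧
      (∀ x y, G.Adj x y → ∃ m : ℤ, ψ x y = (m : ℝ)) := by
  classical
  obtain ⟨φ, ⟨hφanti, hφcons⟩, hφc⟩ := hflow
  letI : LinearOrder X := IsWellOrder.linearOrder WellOrderingRel
  set lo : X × X → ℝ := fun p => if G.Adj p.1 p.2 then (⌊φ p.1 p.2⌋ : ℝ) else 0 with hlo
  set hi : X × X → ℝ := fun p => if G.Adj p.1 p.2 then (⌈φ p.1 p.2⌉ : ℝ) else 0 with hhi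
  set Z : Finset X → Set ((X × X) → ℝ) := fun S =>
    {Ψ | (∀ p, Ψ p ∈ Set.Icc (lo p) (hi p)) ∧
         (∀ x y, G.Adj x y → Ψ (x, y) = -Ψ (y, x)) ∧
         (∀ x ∈ S, ∑ y ∈ G.neighborFinset x, Ψ (x, y) = (f x : ℝ)) ∧
         (∀ p : X × X, G.Adj p.1 p.2 → (p.1 ∈ S ∨ p.2 ∈ S) → ∃ m : ℤ, Ψ p = (m : ℝ))} with hZ
  -- each Z S is nonempty by the finite rounding lemma
  have hZne : ∀ S : Finset X, (Z S).Nonempty := by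
    intro S
    obtain ⟨ψ, h1, h2, h3, h4⟩ := exists_rounding G S φ f hφanti (fun x _ => hφcons x)
    refine ⟨fun p => if G.Adj p.1 p.2 then ψ p.1 p.2 else 0, ?_, ?_, ?_, ?_⟩
    · intro p
      by_cases h : G.Adj p.1 p.2
      · rw [hlo, hhi]
        simp only [if_pos h]
        exact h3 p.1 p.2 h
      · rw [hlo, hhi]
        simp [h]
    · intro x y hadj
      simp only
      rw [if_pos hadj, if_pos hadj.symm]
      exact h1 x y hadj
    · intro x hx
      have he : ∀ y ∈ G.neighborFinset x,
          (if G.Adj x y then ψ x y else 0) = ψ x y := by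
        intro y hy
        rw [SimpleGraph.mem_neighborFinset] at hy
        exact if_pos hy
      rw [Finset.sum_congr rfl he]
      exact h2 x hx
    · intro p hadj hS
      obtain ⟨m, hm⟩ := h4 p.1 p.2 hadj hS
      refine ⟨m, ?_⟩
      simp only
      rw [if_pos hadj]
      exact hm
  -- each Z S is closed
  have hZcl : ∀ S : Finset X, IsClosed (Z S) := by
    intro S
    rw [hZ]
    simp only [Set.setOf_and]
    refine IsClosed.inter ?_ (IsClosed.inter ?_ (IsClosed.inter ?_ ?_))
    · have he : {Ψ : (X × X) → ℝ | ∀ p, Ψ p ∈ Set.Icc (lo p) (hi p)}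
          = ⋂ p, (fun Ψ : (X × X) → ℝ => Ψ p) ⁻¹' (Set.Icc (lo p) (hi p)) := by
        ext Ψ
        simp
      rw [he]
      exact isClosed_iInter fun p => isClosed_Icc.preimage (continuous_apply p)
    · have he : {Ψ : (X × X) → ℝ | ∀ x y, G.Adj x y → Ψ (x, y) = -Ψ (y, x)}
          = ⋂ x, ⋂ y, ⋂ (_ : G.Adj x y), {Ψ : (X × X) → ℝ | Ψ (x, y) = -Ψ (y, x)} := by
        ext Ψ
        simp [Set.mem_iInter]
      rw [he]
      exact isClosed_iInter fun x => isClosed_iInter fun y => isClosed_iInter fun _ =>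
        isClosed_eq (continuous_apply _) (continuous_apply _).neg
    · have he : {Ψ : (X × X) → ℝ | ∀ x ∈ S, ∑ y ∈ G.neighborFinset x, Ψ (x, y) = (f x : ℝ)}
          = ⋂ x, ⋂ (_ : x ∈ S),
              {Ψ : (X × X) → ℝ | ∑ y ∈ G.neighborFinset x, Ψ (x, y) = (f x : ℝ)} := by
        ext Ψ
        simp [Set.mem_iInter]
      rw [he]
      exact isClosed_iInter fun x => isClosed_iInter fun _ =>
        isClosed_eq (continuous_finset_sum _ fun y _ => continuous_apply _) continuous_const
    · have he : {Ψ : (X × X) → ℝ |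
            ∀ p : X × X, G.Adj p.1 p.2 → (p.1 ∈ S ∨ p.2 ∈ S) → ∃ m : ℤ, Ψ p = (m : ℝ)}
          = ⋂ p, ⋂ (_ : G.Adj p.1 p.2), ⋂ (_ : p.1 ∈ S ∨ p.2 ∈ S),
              (fun Ψ : (X × X) → ℝ => Ψ p) ⁻¹' (Set.range ((↑) : ℤ → ℝ)) := by
        ext Ψ
        simp only [Set.mem_iInter, Set.mem_setOf_eq, Set.mem_preimage, Set.mem_range]
        constructor
        · intro h p hadj hS
          obtain ⟨m, hm⟩ := h p hadj hS
          exact ⟨m, hm.symm⟩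
        · intro h p hadj hS
          obtain ⟨m, hm⟩ := h p hadj hS
          exact ⟨m, hm.symm⟩
      rw [he]
      exact isClosed_iInter fun p => isClosed_iInter fun _ => isClosed_iInter fun _ =>
        (Int.isClosedEmbedding_coe_real.isClosed_range).preimage (continuous_apply p)
  -- each Z S is compact
  have hZcpt : ∀ S : Finset X, IsCompact (Z S) := by
    have hKeq : {Ψ : (X × X) → ℝ | ∀ p, Ψ p ∈ Set.Icc (lo p) (hi p)}
        = Set.pi Set.univ fun p => Set.Icc (lo p) (hi p) := by
      ext Ψ
      simp only [Set.mem_setOf_eq, Set.mem_pi]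
      exact ⟨fun h p _ => h p, fun h p => h p (Set.mem_univ p)⟩
    have hK : IsCompact {Ψ : (X × X) → ℝ | ∀ p, Ψ p ∈ Set.Icc (lo p) (hi p)} := by
      rw [hKeq]
      exact isCompact_univ_pi fun p => isCompact_Icc
    intro S
    exact hK.of_isClosed_subset (hZcl S) fun Ψ hΨ => hΨ.1
  -- the family is directed
  have hdir : Directed (· ⊇ ·) Z := by
    intro S T
    refine ⟨S ∪ T, ?_, ?_⟩
    · intro Ψ hΨ
      obtain ⟨h1, h2, h3, h4⟩ := hΨ
      exact ⟨h1, h2, fun x hx => h3 x (Finset.mem_union_left _ hx),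
        fun p hadj hS => h4 p hadj
          (hS.imp (Finset.mem_union_left _) (Finset.mem_union_left _))⟩
    · intro Ψ hΨ
      obtain ⟨h1, h2, h3, h4⟩ := hΨ
      exact ⟨h1, h2, fun x hx => h3 x (Finset.mem_union_right _ hx),
        fun p hadj hS => h4 p hadj
          (hS.imp (Finset.mem_union_right _) (Finset.mem_union_right _))⟩
  -- compactness: a common point
  obtain ⟨Ψ, hΨ⟩ := IsCompact.nonempty_iInter_of_directed_nonempty_isCompact_isClosed
    Z hdir hZne hZcpt hZcl
  rw [Set.mem_iInter] at hΨ
  refine ⟨fun x y => Ψ (x, y), ⟨?_, ?_⟩, ?_, ?_⟩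
  · intro x y hadj
    exact (hΨ ∅).2.1 x y hadj
  · intro x
    exact (hΨ {x}).2.2.1 x (Finset.mem_singleton_self x)
  · intro x y hadj
    have hIcc := (hΨ ∅).1 (x, y)
    obtain ⟨m, hm⟩ := hcint x y hadj
    have hceil : (⌈φ x y⌉ : ℝ) ≤ c x y := by
      rw [hm]
      exact_mod_cast Int.ceil_le.mpr (hm ▸ hφc x y hadj)
    have hup : Ψ (x, y) ≤ hi (x, y) := hIcc.2
    rw [hhi] at hup
    simp only [if_pos hadj] at hup
    exact le_trans hup hceil
  · intro x y hadj
    exact (hΨ {x}).2.2.2 (x, y) hadj (Or.inl (Finset.mem_singleton_self x))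
end

section
/- Suppose G is a locally finite graph on vertex set X and f : X → ℤ takes integer values. If φ is an f-flow on G, then there is an integral f-flow ψ on G such that |φ(x,y) − ψ(x,y)| < 1 for every edge (x,y) of G. -/
open Finset

namespace FlowRounding

/-! ### Integrality of reals -/

def IsInt (r : ℝ) : Prop := ∃ m : ℤ, r = (m : ℝ)

lemma isInt_intCast (m : ℤ) : IsInt (m : ℝ) := ⟨m, rfl⟩

lemma IsInt.neg {r : ℝ} (h : IsInt r) : IsInt (-r) := by
  obtain ⟨m, rfl⟩ := h; exact ⟨-m, by push_cast; ring⟩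

lemma isInt_neg_iff {r : ℝ} : IsInt (-r) ↔ IsInt r :=
  ⟨fun h => by simpa using h.neg, IsInt.neg⟩

lemma IsInt.add {r s : ℝ} (h : IsInt r) (h' : IsInt s) : IsInt (r + s) := by
  obtain ⟨m, rfl⟩ := h; obtain ⟨n, rfl⟩ := h'; exact ⟨m + n, by push_cast; ring⟩

lemma IsInt.sub {r s : ℝ} (h : IsInt r) (h' : IsInt s) : IsInt (r - s) := by
  simpa [sub_eq_add_neg] using h.add h'.neg

lemma isInt_sum {α : Type*} (s : Finset α) (g : α → ℝ) (h : ∀ i ∈ s, IsInt (g i)) :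
    IsInt (∑ i ∈ s, g i) :=
  Finset.sum_induction g IsInt (fun _ _ ha hb => ha.add hb) ⟨0, by simp⟩ h

lemma lt_ceil_of_not_isInt {r : ℝ} (h : ¬ IsInt r) : r < (⌈r⌉ : ℝ) :=
  lt_of_le_of_ne (Int.le_ceil r) fun he => h ⟨⌈r⌉, he⟩

lemma eq_floor_or_ceil {t : ℝ} {m : ℤ} (h1 : (⌊t⌋ : ℝ) ≤ (m : ℝ)) (h2 : (m : ℝ) ≤ (⌈t⌉ : ℝ)) :
    (m : ℝ) = (⌊t⌋ : ℝ) ∨ (m : ℝ) = (⌈t⌉ : ℝ) := by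
  have h1' : ⌊t⌋ ≤ m := by exact_mod_cast h1
  have h2' : m ≤ ⌈t⌉ := by exact_mod_cast h2
  have h3 := Int.ceil_le_floor_add_one t
  have : m = ⌊t⌋ ∨ m = ⌈t⌉ := by omega
  rcases this with h | h <;> [left; right] <;> exact_mod_cast congrArg (fun z : ℤ => (z : ℝ)) h

/-! ### List lemmas about `l.zip l.tail` -/

section ListLemmas

variable {α : Type*}

lemma map_fst_zip_tail : ∀ (l : List α), (l.zip l.tail).map Prod.fst = l.dropLast
  | [] => rfl
  | [_] => rfl
  | a :: b :: t => by
      have ih := map_fst_zip_tail (b :: t)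
      simpa using ih

lemma map_snd_zip_tail (l : List α) : (l.zip l.tail).map Prod.snd = l.tail :=
  List.map_snd_zip (by cases l <;> simp)

lemma mem_zip_tail {l : List α} {p : α × α} :
    p ∈ l.zip l.tail ↔ ∃ i, ∃ _ : i + 1 < l.length, l[i] = p.1 ∧ l[i + 1] = p.2 := by
  obtain ⟨p1, p2⟩ := p
  rw [List.mem_iff_getElem]
  constructor
  · rintro ⟨i, h, hp⟩
    have hlen : i + 1 < l.length := by
      simp only [List.length_zip, List.length_tail] at h; omega
    have htl : i < l.tail.length := by simp only [List.length_tail]; omega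
    rw [List.getElem_zip, List.getElem_tail, Prod.mk.injEq] at hp
    exact ⟨i, hlen, hp.1, hp.2⟩
  · rintro ⟨i, h, h1, h2⟩
    refine ⟨i, by simp only [List.length_zip, List.length_tail]; omega, ?_⟩
    rw [List.getElem_zip, List.getElem_tail, Prod.mk.injEq]
    exact ⟨h1, h2⟩

lemma zip_tail_nodup {l : List α} (h : l.Nodup) : (l.zip l.tail).Nodup := by
  have h1 : ((l.zip l.tail).map Prod.fst).Nodup := by
    rw [map_fst_zip_tail]; exact h.sublist (List.dropLast_sublist l)
  exact h1.of_map

lemma not_rev_mem_zip_tail {l : List α} (h : l.Nodup) {x y : α}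
    (h1 : (x, y) ∈ l.zip l.tail) (h2 : (y, x) ∈ l.zip l.tail) : False := by
  rw [mem_zip_tail] at h1 h2
  obtain ⟨i, hi, hi1, hi2⟩ := h1
  obtain ⟨j, hj, hj1, hj2⟩ := h2
  have e1 : i = j + 1 := by
    have : l[i] = l[j + 1] := by rw [hi1, hj2]
    exact (h.getElem_inj_iff).mp this
  have e2 : i + 1 = j := by
    have : l[i + 1] = l[j] := by rw [hi2, hj1]
    exact (h.getElem_inj_iff).mp this
  omega

lemma chain'_pairs {R : α → α → Prop} {l : List α} (h : l.Chain' R) :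
    ∀ p ∈ l.zip l.tail, R p.1 p.2 := by
  intro p hp
  rw [mem_zip_tail] at hp
  obtain ⟨i, hi, h1, h2⟩ := hp
  replace h := List.isChain_iff_getElem.mp h
  have := h i (by omega)
  simpa [List.get_eq_getElem, h1, h2] using this

lemma count_filter_fst {α β : Type*} [DecidableEq α] [DecidableEq β] :
    ∀ (P : List (α × β)), P.Nodup → ∀ (x : α) (s : Finset β), (∀ p ∈ P, p.1 = x → p.2 ∈ s) →
    (s.filter fun y => (x, y) ∈ P).card = (P.map Prod.fst).count x := by
  intro P
  induction P with
  | nil => intro _ x s _; simp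
  | cons p P ih =>
    intro hnd x s hs
    obtain ⟨hpP, hndP⟩ := List.nodup_cons.mp hnd
    by_cases hpx : p.1 = x
    · have hset : s.filter (fun y => (x, y) ∈ p :: P) =
          insert p.2 (s.filter fun y => (x, y) ∈ P) := by
        ext y
        simp only [Finset.mem_filter, Finset.mem_insert, List.mem_cons]
        constructor
        · rintro ⟨hy, h | h⟩
          · left; rw [← h]
          · right; exact ⟨hy, h⟩
        · rintro (h | ⟨hy, h⟩)
          · subst h
            exact ⟨hs p (List.mem_cons_self) hpx, Or.inl (by rw [← hpx])⟩
          · exact ⟨hy, Or.inr h⟩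
      rw [hset, Finset.card_insert_of_notMem]
      · rw [ih hndP x s (fun q hq hq1 => hs q (List.mem_cons_of_mem _ hq) hq1)]
        simp [hpx, List.count_cons]
      · intro hmem
        rw [Finset.mem_filter] at hmem
        apply hpP
        have : (x, p.2) = p := by rw [← hpx]
        rw [← this]; exact hmem.2
    · have hset : s.filter (fun y => (x, y) ∈ p :: P) = s.filter fun y => (x, y) ∈ P := by
        ext y
        simp only [Finset.mem_filter, List.mem_cons, and_congr_right_iff]
        intro _
        constructor
        · rintro (h | h)
          · exact absurd (congrArg Prod.fst h).symm hpx
          · exact h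
        · exact Or.inr
      rw [hset, ih hndP x s (fun q hq hq1 => hs q (List.mem_cons_of_mem _ hq) hq1)]
      simp [List.count_cons, hpx]

end ListLemmas

/-! ### Main development -/

section Main

variable {X : Type*} [DecidableEq X] (G : SimpleGraph X) [G.LocallyFinite] (S : Finset X)
  (f : X → ℤ) (φ : X → X → ℝ)

def Anti (ψ : X → X → ℝ) : Prop := ∀ x y, G.Adj x y → ψ x y = -ψ y x

def Win (ψ : X → X → ℝ) : Prop :=
  ∀ x y, G.Adj x y → (⌊φ x y⌋ : ℝ) ≤ ψ x y ∧ ψ x y ≤ (⌈φ x y⌉ : ℝ)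

def Con (ψ : X → X → ℝ) : Prop := ∀ x ∈ S, ∑ y ∈ G.neighborFinset x, ψ x y = (f x : ℝ)

def touchPairs : Finset (X × X) :=
  S.biUnion fun x => ((G.neighborFinset x).image fun y => (x, y)) ∪
    ((G.neighborFinset x).image fun y => (y, x))

lemma mem_touchPairs {p : X × X} :
    p ∈ touchPairs G S ↔ G.Adj p.1 p.2 ∧ (p.1 ∈ S ∨ p.2 ∈ S) := by
  obtain ⟨x, y⟩ := p
  simp only [touchPairs, Finset.mem_biUnion, Finset.mem_union, Finset.mem_image,
    SimpleGraph.mem_neighborFinset, Prod.mk.injEq]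
  constructor
  · rintro ⟨z, hz, (⟨w, hw, h1, h2⟩ | ⟨w, hw, h1, h2⟩)⟩
    · subst h1; subst h2; exact ⟨hw, Or.inl hz⟩
    · subst h1; subst h2; exact ⟨hw.symm, Or.inr hz⟩
  · rintro ⟨hadj, (hx | hy)⟩
    · exact ⟨x, hx, Or.inl ⟨y, hadj, rfl, rfl⟩⟩
    · exact ⟨y, hy, Or.inr ⟨x, hadj.symm, rfl, rfl⟩⟩

open scoped Classical in
noncomputable def badPairs (ψ : X → X → ℝ) : Finset (X × X) :=
  (touchPairs G S).filter fun p => ¬ IsInt (ψ p.1 p.2)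

lemma mem_badPairs {ψ : X → X → ℝ} {p : X × X} :
    p ∈ badPairs G S ψ ↔ G.Adj p.1 p.2 ∧ (p.1 ∈ S ∨ p.2 ∈ S) ∧ ¬ IsInt (ψ p.1 p.2) := by
  classical
  simp only [badPairs, Finset.mem_filter, mem_touchPairs, and_assoc]

/-- The "good list" of directed edges along which we can push flow. -/
def GoodL (ψ : X → X → ℝ) (P : List (X × X)) : Prop :=
  P ≠ [] ∧ (∀ p ∈ P, G.Adj p.1 p.2 ∧ ¬ IsInt (ψ p.1 p.2) ∧ (p.1 ∈ S ∨ p.2 ∈ S)) ∧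
    P.Nodup ∧ (∀ x y, (x, y) ∈ P → (y, x) ∉ P) ∧
    (∀ x ∈ S, (P.map Prod.fst).count x = (P.map Prod.snd).count x)

/-- Pushing flow along a good list of edges strictly decreases the number of bad pairs. -/
lemma push (ψ : X → X → ℝ) (hA : Anti G ψ) (hW : Win G φ ψ) (hC : Con G S f ψ)
    (P : List (X × X)) (hgood : GoodL G S ψ P) :
    ∃ ψ', Anti G ψ' ∧ Win G φ ψ' ∧ Con G S f ψ' ∧
      (badPairs G S ψ').card < (badPairs G S ψ).card := by
  classical
  obtain ⟨hne, h1, h2, h2', h3⟩ := hgood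
  have hQ : P.toFinset.Nonempty := by
    obtain ⟨p, hp⟩ := List.exists_mem_of_ne_nil P hne
    exact ⟨p, List.mem_toFinset.mpr hp⟩
  set g : X × X → ℝ := fun p => (⌈ψ p.1 p.2⌉ : ℝ) - ψ p.1 p.2 with hg
  set δ := P.toFinset.inf' hQ g with hδ
  have hδle : ∀ p ∈ P, δ ≤ g p := fun p hp => Finset.inf'_le _ (List.mem_toFinset.mpr hp)
  have hgpos : ∀ p ∈ P, 0 < g p := by
    intro p hp
    have hni := (h1 p hp).2.1
    exact sub_pos.mpr (lt_ceil_of_not_isInt hni)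
  have hδpos : 0 < δ := by
    rw [hδ, Finset.lt_inf'_iff]
    exact fun p hp => hgpos p (List.mem_toFinset.mp hp)
  set ψ' : X → X → ℝ := fun x y =>
    ψ x y + δ * ((if (x, y) ∈ P then (1 : ℝ) else 0) - (if (y, x) ∈ P then (1 : ℝ) else 0))
    with hψ'
  have hA' : Anti G ψ' := by
    intro x y hadj
    have := hA x y hadj
    simp only [hψ']
    rw [this]; ring
  have hWnew : Win G φ ψ' := by
    intro x y hadj
    obtain ⟨hw1, hw2⟩ := hW x y hadj
    by_cases hp : (x, y) ∈ P
    · have hq : (y, x) ∉ P := h2' x y hp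
      have hval : ψ' x y = ψ x y + δ := by simp [hψ', hp, hq]
      have hle : δ ≤ (⌈ψ x y⌉ : ℝ) - ψ x y := hδle (x, y) hp
      have hceil : (⌈ψ x y⌉ : ℝ) ≤ (⌈φ x y⌉ : ℝ) := by
        exact_mod_cast Int.ceil_le.mpr hw2
      constructor
      · rw [hval]; nlinarith
      · rw [hval]; linarith
    · by_cases hq : (y, x) ∈ P
      · have hval : ψ' x y = ψ x y - δ := by simp [hψ', hp, hq]; ring
        have hle : δ ≤ (⌈ψ y x⌉ : ℝ) - ψ y x := hδle (y, x) hq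
        have hyx : ψ y x = -ψ x y := hA y x hadj.symm
        rw [hyx, Int.ceil_neg] at hle
        push_cast at hle
        have hfloor : (⌊φ x y⌋ : ℝ) ≤ (⌊ψ x y⌋ : ℝ) := by
          exact_mod_cast Int.le_floor.mpr hw1
        have hfl : (⌊ψ x y⌋ : ℝ) ≤ ψ x y := Int.floor_le _
        constructor
        · rw [hval]; linarith
        · rw [hval]; linarith
      · have hval : ψ' x y = ψ x y := by simp [hψ', hp, hq]
        rw [hval]; exact ⟨hw1, hw2⟩
  have hCnew : Con G S f ψ' := by
    intro x hx
    have hsplit : ∑ y ∈ G.neighborFinset x, ψ' x y =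
        (∑ y ∈ G.neighborFinset x, ψ x y) +
        δ * ((∑ y ∈ G.neighborFinset x, (if (x, y) ∈ P then (1 : ℝ) else 0)) -
             (∑ y ∈ G.neighborFinset x, (if (y, x) ∈ P then (1 : ℝ) else 0))) := by
      rw [mul_sub, Finset.mul_sum, Finset.mul_sum, ← Finset.sum_sub_distrib,
        ← Finset.sum_add_distrib]
      exact Finset.sum_congr rfl fun y _ => by simp only [hψ']; ring
    have hc1 : (∑ y ∈ G.neighborFinset x, (if (x, y) ∈ P then (1 : ℝ) else 0)) =
        ((P.map Prod.fst).count x : ℝ) := by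
      rw [Finset.sum_boole]
      exact_mod_cast count_filter_fst P h2 x (G.neighborFinset x)
        (fun p hp hp1 => by rw [← hp1]; exact (SimpleGraph.mem_neighborFinset _ _ _).mpr (h1 p hp).1)
    have hc2 : (∑ y ∈ G.neighborFinset x, (if (y, x) ∈ P then (1 : ℝ) else 0)) =
        ((P.map Prod.snd).count x : ℝ) := by
      have hswap : ∀ y, ((y, x) ∈ P ↔ (x, y) ∈ P.map Prod.swap) := by
        intro y
        rw [List.mem_map]
        constructor
        · intro h; exact ⟨(y, x), h, rfl⟩
        · rintro ⟨q, hq, hqe⟩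
          have : q = (y, x) := by
            obtain ⟨q1, q2⟩ := q
            simp [Prod.swap, Prod.ext_iff] at hqe
            simp [hqe.1, hqe.2]
          rwa [this] at hq
      have hnd' : (P.map Prod.swap).Nodup :=
        h2.map fun a b hab => by
          obtain ⟨a1, a2⟩ := a; obtain ⟨b1, b2⟩ := b
          simpa [Prod.ext_iff, and_comm] using hab
      have hside : ∀ p ∈ P.map Prod.swap, p.1 = x → p.2 ∈ G.neighborFinset x := by
        rintro p hp hp1
        rw [List.mem_map] at hp
        obtain ⟨q, hq, rfl⟩ := hp
        have hadj := (h1 q hq).1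
        rw [SimpleGraph.mem_neighborFinset]
        simp only [Prod.fst_swap] at hp1
        simp only [Prod.snd_swap]
        rw [← hp1]
        exact hadj.symm
      have hsum2 : (∑ y ∈ G.neighborFinset x, (if (y, x) ∈ P then (1 : ℝ) else 0)) =
          (∑ y ∈ G.neighborFinset x, (if (x, y) ∈ P.map Prod.swap then (1 : ℝ) else 0)) :=
        Finset.sum_congr rfl fun y _ => if_congr (hswap y) rfl rfl
      have hcf := count_filter_fst (P.map Prod.swap) hnd' x (G.neighborFinset x) hside
      rw [List.map_map] at hcf
      have hcomp : (Prod.fst ∘ Prod.swap : X × X → X) = Prod.snd := rfl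
      rw [hcomp] at hcf
      rw [hsum2, Finset.sum_boole]
      exact_mod_cast hcf
    rw [hsplit, hc1, hc2, h3 x hx, hC x hx]
    simp
  refine ⟨ψ', hA', hWnew, hCnew, ?_⟩
  have hsub : badPairs G S ψ' ⊆ badPairs G S ψ := by
    intro p hp
    rw [mem_badPairs] at hp ⊢
    obtain ⟨hadj, htouch, hni⟩ := hp
    refine ⟨hadj, htouch, ?_⟩
    by_cases hmem : (p.1, p.2) ∈ P
    · exact (h1 _ hmem).2.1
    · by_cases hmem' : (p.2, p.1) ∈ P
      · have := (h1 _ hmem').2.1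
        intro hint
        apply this
        have : ψ p.2 p.1 = -ψ p.1 p.2 := hA _ _ hadj.symm
        rw [this]
        exact hint.neg
      · intro hint
        apply hni
        have : ψ' p.1 p.2 = ψ p.1 p.2 := by simp [hψ', hmem, hmem']
        rwa [this]
  obtain ⟨p₀, hp₀Q, hp₀⟩ := Finset.exists_mem_eq_inf' hQ g
  have hp₀P : p₀ ∈ P := List.mem_toFinset.mp hp₀Q
  have hp₀bad : p₀ ∈ badPairs G S ψ := by
    rw [mem_badPairs]
    exact ⟨(h1 _ hp₀P).1, (h1 _ hp₀P).2.2, (h1 _ hp₀P).2.1⟩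
  have hp₀good : p₀ ∉ badPairs G S ψ' := by
    rw [mem_badPairs]
    rintro ⟨_, _, hni⟩
    apply hni
    have hq : (p₀.2, p₀.1) ∉ P := h2' _ _ (by rwa [Prod.mk.eta])
    have : ψ' p₀.1 p₀.2 = ψ p₀.1 p₀.2 + δ := by
      simp only [hψ']
      rw [if_pos (by rwa [Prod.mk.eta]), if_neg hq]
      ring
    have hδval : δ = g p₀ := by rw [hδ, hp₀]
    rw [this, hδval]
    simp only [hg]
    exact ⟨⌈ψ p₀.1 p₀.2⌉, by ring⟩
  exact Finset.card_lt_card ⟨hsub, fun hcon => hp₀good (hcon hp₀bad)⟩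

/-! ### Finding a good list (augmenting path / cycle) -/

/-- A growing path: `a :: (l ++ [b])` with distinct vertices, consecutive bad edges,
interior vertices in `S`. -/
def Seed (ψ : X → X → ℝ) (a b : X) (l : List X) : Prop :=
  (a :: (l ++ [b])).Nodup ∧
    (a :: (l ++ [b])).Chain' (fun x y => G.Adj x y ∧ ¬ IsInt (ψ x y)) ∧
    (∀ v ∈ l, v ∈ S) ∧ (l = [] → a ∈ S ∨ b ∈ S)

lemma exists_other (ψ : X → X → ℝ) (hC : Con G S f ψ) {x y : X} (hx : x ∈ S)
    (hR : G.Adj x y ∧ ¬ IsInt (ψ x y)) :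
    ∃ z, (G.Adj x z ∧ ¬ IsInt (ψ x z)) ∧ z ≠ y := by
  by_contra hcon
  push_neg at hcon
  have hy : y ∈ G.neighborFinset x := (SimpleGraph.mem_neighborFinset _ _ _).mpr hR.1
  have hsum := hC x hx
  rw [← Finset.add_sum_erase _ _ hy] at hsum
  have hInt : IsInt (∑ z ∈ (G.neighborFinset x).erase y, ψ x z) := by
    apply isInt_sum
    intro z hz
    have hzy : z ≠ y := (Finset.mem_erase.mp hz).1
    have hadj : G.Adj x z :=
      (SimpleGraph.mem_neighborFinset _ _ _).mp (Finset.mem_erase.mp hz).2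
    by_contra hni
    exact hzy (hcon z ⟨hadj, hni⟩)
  apply hR.2
  have heq : ψ x y = (f x : ℝ) - ∑ z ∈ (G.neighborFinset x).erase y, ψ x z := by
    linarith
  rw [heq]
  exact (isInt_intCast (f x)).sub hInt

lemma seed_rev (ψ : X → X → ℝ) (hA : Anti G ψ) {a b : X} {l : List X}
    (hs : Seed G S ψ a b l) : Seed G S ψ b a l.reverse := by
  have hrev : (b :: (l.reverse ++ [a])) = (a :: (l ++ [b])).reverse := by simp
  refine ⟨?_, ?_, ?_, ?_⟩
  · rw [hrev]; exact List.nodup_reverse.mpr hs.1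
  · rw [hrev]; refine List.isChain_reverse.mpr ?_
    refine List.IsChain.imp ?_ hs.2.1
    rintro x y ⟨hadj, hni⟩
    refine ⟨hadj.symm, ?_⟩
    rw [hA y x hadj.symm]
    intro h
    exact hni (isInt_neg_iff.mp h)
  · intro v hv; exact hs.2.2.1 v (List.mem_reverse.mp hv)
  · intro h
    have hl : l = [] := by simpa using congrArg List.reverse h
    exact (hs.2.2.2 hl).symm

lemma finish_path (ψ : X → X → ℝ) {a b : X} {l : List X} (hs : Seed G S ψ a b l)
    (ha : a ∉ S) (hb : b ∉ S) :
    ∃ P, GoodL G S ψ P := by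
  obtain ⟨hnd, hch, hlS, hne⟩ := hs
  obtain ⟨c, l', rfl⟩ : ∃ c l', l = c :: l' := by
    cases l with
    | nil => exact absurd (hne rfl) (by rintro (h | h) <;> [exact ha h; exact hb h])
    | cons c l' => exact ⟨c, l', rfl⟩
  set w : List X := a :: ((c :: l') ++ [b]) with hw
  have hweq : w = (a :: c :: l') ++ [b] := by simp [hw]
  have hdrop : w.dropLast = a :: c :: l' := by rw [hweq, List.dropLast_concat]
  have hmapfst : (w.zip w.tail).map Prod.fst = a :: c :: l' := by
    rw [map_fst_zip_tail, hdrop]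
  have hwnd : w.Nodup := hnd
  have hfstnd : ((w.zip w.tail).map Prod.fst).Nodup := by
    rw [map_fst_zip_tail]
    exact hwnd.sublist (List.dropLast_sublist w)
  have hmemac : (a, c) ∈ w.zip w.tail := by
    show (a, c) ∈ (a :: c :: (l' ++ [b])).zip (c :: (l' ++ [b]))
    rw [List.zip_cons_cons]
    exact List.mem_cons_self
  refine ⟨w.zip w.tail, ?_, ?_, zip_tail_nodup hwnd, ?_, ?_⟩
  · exact List.ne_nil_of_mem hmemac
  · intro p hp
    have hR := chain'_pairs hch p hp
    refine ⟨hR.1, hR.2, ?_⟩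
    have hfst : p.1 ∈ (w.zip w.tail).map Prod.fst := List.mem_map_of_mem hp
    rw [hmapfst] at hfst
    rcases List.mem_cons.mp hfst with h | hfst'
    · -- p.1 = a, so p = (a, c) by nodup of fsts
      have : p = (a, c) := by
        apply List.inj_on_of_nodup_map hfstnd hp hmemac
        simp [h]
      right
      rw [this]
      exact hlS c (List.mem_cons_self)
    · left
      exact hlS _ hfst'
  · intro x y hxy hyx
    exact not_rev_mem_zip_tail hwnd hxy hyx
  · intro x hx
    have hxa : x ≠ a := fun h => ha (h ▸ hx)
    have hxb : x ≠ b := fun h => hb (h ▸ hx)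
    rw [hmapfst, map_snd_zip_tail]
    show List.count x (a :: (c :: l')) = List.count x ((c :: l') ++ [b])
    rw [List.count_cons_of_ne (Ne.symm hxa), List.count_append]
    have : List.count x [b] = 0 := by
      rw [List.count_eq_zero]
      simp only [List.mem_singleton]
      exact hxb
    omega

lemma growstep (ψ : X → X → ℝ) (hA : Anti G ψ) (hC : Con G S f ψ) {a b : X} {l : List X}
    (hs : Seed G S ψ a b l) (ha : a ∈ S) :
    (∃ P, GoodL G S ψ P) ∨ ∃ z, z ∉ (a :: (l ++ [b])) ∧ Seed G S ψ z b (a :: l) := by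
  obtain ⟨hnd, hch, hlS, -⟩ := hs
  obtain ⟨h0, rest, hrest⟩ : ∃ h0 rest, l ++ [b] = h0 :: rest := by
    cases l with
    | nil => exact ⟨b, [], rfl⟩
    | cons c l' => exact ⟨c, l' ++ [b], rfl⟩
  have hch' := hch
  rw [hrest] at hch'
  replace hch' := List.isChain_cons_cons.mp hch'
  obtain ⟨hRah, hchrest⟩ := hch'
  obtain ⟨z, hRaz, hzne⟩ := exists_other G S f ψ hC ha hRah
  by_cases hzw : z ∈ a :: (l ++ [b])
  · -- cycle case
    left
    have hza : z ≠ a := hRaz.1.ne'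
    have hzlb : z ∈ l ++ [b] := by
      rcases List.mem_cons.mp hzw with h | h
      · exact absurd h hza
      · exact h
    obtain ⟨l₁, l₂, hsplit⟩ := List.append_of_mem hzlb
    have hl₁ne : l₁ ≠ [] := by
      intro h
      rw [h, List.nil_append, hrest] at hsplit
      exact hzne (by injection hsplit with h1 _; exact h1.symm)
    have hlen : l₁.length ≤ l.length := by
      have := congrArg List.length hsplit
      simp at this
      omega
    have hl₁pre : List.IsPrefix l₁ l := by
      refine List.prefix_of_prefix_length_le ⟨z :: l₂, hsplit.symm⟩ ⟨[b], rfl⟩ hlen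
    have hl₁S : ∀ v ∈ l₁, v ∈ S := fun v hv => hlS v (hl₁pre.sublist.mem hv)
    set c' : List X := a :: (l₁ ++ [z]) with hc'
    have hwc : a :: (l ++ [b]) = c' ++ l₂ := by
      rw [hsplit, hc']; simp
    have hndc' : c'.Nodup := by
      rw [hwc] at hnd
      exact hnd.sublist (List.sublist_append_left c' l₂)
    have hchc' : c'.Chain' (fun x y => G.Adj x y ∧ ¬ IsInt (ψ x y)) := by
      have := hch
      rw [hwc] at this
      exact (List.isChain_append.mp this).1
    have hznl₁ : z ∉ l₁ := by
      have hnd2 : (l₁ ++ z :: l₂).Nodup := by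
        rw [← hsplit]
        exact (List.nodup_cons.mp hnd).2
      have := (List.nodup_append.mp hnd2).2.2
      intro hmem
      exact this _ hmem _ List.mem_cons_self rfl
    obtain ⟨e, l₁', rfl⟩ : ∃ e l₁', l₁ = e :: l₁' := by
      cases l₁ with
      | nil => exact absurd rfl hl₁ne
      | cons e l₁' => exact ⟨e, l₁', rfl⟩
    have hdropc' : c'.dropLast = a :: (e :: l₁') := by
      rw [hc']
      show ((a :: (e :: l₁')) ++ [z]).dropLast = _
      rw [List.dropLast_concat]
    have hmapfstc' : (c'.zip c'.tail).map Prod.fst = a :: (e :: l₁') := by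
      rw [map_fst_zip_tail, hdropc']
    have hfstndc' : ((c'.zip c'.tail).map Prod.fst).Nodup := by
      rw [hmapfstc', ← hdropc']
      exact hndc'.sublist (List.dropLast_sublist _)
    have hmemae : (a, e) ∈ c'.zip c'.tail := by
      show (a, e) ∈ (a :: e :: (l₁' ++ [z])).zip (e :: (l₁' ++ [z]))
      rw [List.zip_cons_cons]
      exact List.mem_cons_self
    have haznotzip : (a, z) ∉ c'.zip c'.tail := by
      intro hmem
      have : (a, z) = (a, e) := List.inj_on_of_nodup_map hfstndc' hmem hmemae rfl
      have hze : z = e := by injection this with _ h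
      exact hznl₁ (hze ▸ List.mem_cons_self)
    refine ⟨(z, a) :: (c'.zip c'.tail), by simp, ?_, ?_, ?_, ?_⟩
    · intro p hp
      rcases List.mem_cons.mp hp with h | h
      · subst h
        refine ⟨hRaz.1.symm, ?_, Or.inr ha⟩
        rw [hA z a hRaz.1.symm]
        intro hi
        exact hRaz.2 (isInt_neg_iff.mp hi)
      · have hR := chain'_pairs hchc' p h
        refine ⟨hR.1, hR.2, ?_⟩
        left
        have hfst : p.1 ∈ (c'.zip c'.tail).map Prod.fst := List.mem_map_of_mem h
        rw [hmapfstc'] at hfst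
        rcases List.mem_cons.mp hfst with h' | h'
        · exact h' ▸ ha
        · exact hl₁S _ h'
    · rw [List.nodup_cons]
      refine ⟨?_, zip_tail_nodup hndc'⟩
      intro hmem
      have hfst : (z : X) ∈ (c'.zip c'.tail).map Prod.fst := List.mem_map_of_mem hmem
      rw [hmapfstc'] at hfst
      rcases List.mem_cons.mp hfst with h | h
      · exact hza h
      · exact hznl₁ h
    · intro x y hxy hyx
      rcases List.mem_cons.mp hxy with h | h
      · injection h with h1 h2
        subst h1; subst h2
        rcases List.mem_cons.mp hyx with h' | h'
        · injection h' with h3 _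
          exact hza h3.symm
        · exact haznotzip h'
      · rcases List.mem_cons.mp hyx with h' | h'
        · injection h' with h3 h4
          subst h3; subst h4
          exact haznotzip h
        · exact not_rev_mem_zip_tail hndc' h h'
    · intro x hx
      have hmapfst : (((z, a) :: (c'.zip c'.tail)).map Prod.fst) = z :: (a :: (e :: l₁')) := by
        simp [hmapfstc']
      have htlc' : c'.tail = (e :: l₁') ++ [z] := rfl
      have hmapsnd : (((z, a) :: (c'.zip c'.tail)).map Prod.snd) = a :: ((e :: l₁') ++ [z]) := by
        rw [List.map_cons, map_snd_zip_tail, htlc']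
      rw [hmapfst, hmapsnd]
      refine List.Perm.count_eq ?_ x
      have hp1 : (z :: a :: (e :: l₁')).Perm (a :: z :: (e :: l₁')) := List.Perm.swap a z _
      have hp2 : (z :: (e :: l₁')).Perm ((e :: l₁') ++ [z]) :=
        (List.perm_append_singleton z (e :: l₁')).symm
      exact hp1.trans (hp2.cons a)
  · -- grow case
    right
    refine ⟨z, hzw, ?_, ?_, ?_, ?_⟩
    · show (z :: ((a :: l) ++ [b])).Nodup
      rw [List.nodup_cons]
      exact ⟨by simpa using hzw, hnd⟩
    · show (z :: ((a :: l) ++ [b])).Chain' _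
      have : (a :: l) ++ [b] = a :: (l ++ [b]) := by simp
      rw [this]; refine List.isChain_cons_cons.mpr ?_
      refine ⟨⟨hRaz.1.symm, ?_⟩, hch⟩
      rw [hA z a hRaz.1.symm]
      intro hi
      exact hRaz.2 (isInt_neg_iff.mp hi)
    · intro v hv
      rcases List.mem_cons.mp hv with h | h
      · exact h ▸ ha
      · exact hlS v h
    · intro h; exact absurd h (by simp)

lemma grow (ψ : X → X → ℝ) (hA : Anti G ψ) (hC : Con G S f ψ) :
    ∀ (n : ℕ) (a b : X) (l : List X), Seed G S ψ a b l → S.card ≤ n + l.length →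
    ∃ P, GoodL G S ψ P := by
  intro n
  induction n with
  | zero =>
    intro a b l hs hcard
    have hndl : l.Nodup := by
      have h1 : List.Sublist l (l ++ [b]) := List.sublist_append_left _ _
      have h2 : List.Sublist (l ++ [b]) (a :: (l ++ [b])) := List.sublist_cons_self _ _
      exact hs.1.sublist (h1.trans h2)
    have hsub : l.toFinset ⊆ S := fun v hv => hs.2.2.1 v (List.mem_toFinset.mp hv)
    have hScard : S.card ≤ l.toFinset.card := by
      rw [List.toFinset_card_of_nodup hndl]; simpa using hcard
    have hSeq : l.toFinset = S := Finset.eq_of_subset_of_card_le hsub hScard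
    have hanl : a ∉ l ++ [b] := (List.nodup_cons.mp hs.1).1
    have hbnl : b ∉ l := by
      have := (List.nodup_cons.mp hs.1).2
      have := (List.nodup_append.mp this).2.2
      intro hmem
      exact this _ hmem _ (List.mem_singleton_self _) rfl
    have ha : a ∉ S := by
      intro h
      rw [← hSeq] at h
      exact hanl (List.mem_append_left _ (List.mem_toFinset.mp h))
    have hb : b ∉ S := by
      intro h
      rw [← hSeq] at h
      exact hbnl (List.mem_toFinset.mp h)
    exact finish_path G S ψ hs ha hb
  | succ n ih =>
    intro a b l hs hcard
    by_cases ha : a ∈ S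
    · rcases growstep G S f ψ hA hC hs ha with ⟨P, hP⟩ | ⟨z, _, hs'⟩
      · exact ⟨P, hP⟩
      · exact ih z b (a :: l) hs' (by simp only [List.length_cons]; omega)
    · by_cases hb : b ∈ S
      · have hs' := seed_rev G S ψ hA hs
        rcases growstep G S f ψ hA hC hs' hb with ⟨P, hP⟩ | ⟨z, _, hs''⟩
        · exact ⟨P, hP⟩
        · exact ih z a (b :: l.reverse)  hs''
            (by simp only [List.length_cons, List.length_reverse]; omega)
      · exact finish_path G S ψ hs ha hb

lemma walk_exists (ψ : X → X → ℝ) (hA : Anti G ψ) (hC : Con G S f ψ)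
    (hne : (badPairs G S ψ).Nonempty) : ∃ P, GoodL G S ψ P := by
  obtain ⟨p, hp⟩ := hne
  rw [mem_badPairs] at hp
  obtain ⟨hadj, htouch, hni⟩ := hp
  have hseed : Seed G S ψ p.1 p.2 [] := by
    refine ⟨?_, ?_, ?_, ?_⟩
    · simp [hadj.ne]
    · simp only [List.nil_append]
      refine List.isChain_cons_cons.mpr ?_
      exact ⟨⟨hadj, hni⟩, List.isChain_singleton _⟩
    · simp
    · intro _; exact htouch
  exact grow G S f ψ hA hC S.card p.1 p.2 [] hseed (by simp)

lemma round_finite :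
    ∀ (n : ℕ) (ψ : X → X → ℝ), Anti G ψ → Win G φ ψ → Con G S f ψ →
      (badPairs G S ψ).card ≤ n →
    ∃ ψ', Anti G ψ' ∧ Win G φ ψ' ∧ Con G S f ψ' ∧ badPairs G S ψ' = ∅ := by
  intro n
  induction n with
  | zero =>
    intro ψ hA hW hC hcard
    exact ⟨ψ, hA, hW, hC, Finset.card_eq_zero.mp (Nat.le_zero.mp hcard)⟩
  | succ n ih =>
    intro ψ hA hW hC hcard
    by_cases hemp : badPairs G S ψ = ∅
    · exact ⟨ψ, hA, hW, hC, hemp⟩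
    · obtain ⟨P, hP⟩ := walk_exists G S f ψ hA hC (Finset.nonempty_iff_ne_empty.mpr hemp)
      obtain ⟨ψ', h1, h2, h3, h4⟩ := push G S f φ ψ hA hW hC P hP
      exact ih ψ' h1 h2 h3 (by omega)

/-- For each finite `S`, there is an everywhere-rounded `f`-quasi-flow that conserves
flow at every vertex of `S`. -/
lemma exists_rounding (hA0 : ∀ x y, G.Adj x y → φ x y = -φ y x)
    (hC0 : ∀ x, ∑ y ∈ G.neighborFinset x, φ x y = (f x : ℝ)) :
    ∃ ψ : X → X → ℝ, (∀ x y, G.Adj x y → ψ x y = -ψ y x) ∧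
      (∀ x ∈ S, ∑ y ∈ G.neighborFinset x, ψ x y = (f x : ℝ)) ∧
      (∀ x y, G.Adj x y → ψ x y = (⌊φ x y⌋ : ℝ) ∨ ψ x y = (⌈φ x y⌉ : ℝ)) := by
  classical
  have hW0 : Win G φ φ := fun x y _ => ⟨Int.floor_le _, Int.le_ceil _⟩
  have hC0' : Con G S f φ := fun x _ => hC0 x
  obtain ⟨ψ', hA', hW', hC', hbad⟩ :=
    round_finite G S f φ (badPairs G S φ).card φ hA0 hW0 hC0' le_rfl
  letI : LinearOrder X := IsWellOrder.linearOrder WellOrderingRel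
  set d : X → X → ℝ := fun x y => if x < y then (⌊φ x y⌋ : ℝ) else (⌈φ x y⌉ : ℝ) with hd
  set ψS : X → X → ℝ := fun x y => if x ∈ S ∨ y ∈ S then ψ' x y else d x y with hψS
  have hdanti : ∀ x y, G.Adj x y → d x y = -d y x := by
    intro x y hadj
    have hne : x ≠ y := hadj.ne
    rcases lt_or_gt_of_ne hne with h | h
    · have e1 : d x y = (⌊φ x y⌋ : ℝ) := by simp only [hd]; rw [if_pos h]
      have e2 : d y x = (⌈φ y x⌉ : ℝ) := by simp only [hd]; rw [if_neg (not_lt_of_gt h)]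
      rw [e1, e2, hA0 y x hadj.symm, Int.ceil_neg]
      push_cast
      ring
    · have e1 : d x y = (⌈φ x y⌉ : ℝ) := by simp only [hd]; rw [if_neg (not_lt_of_gt h)]
      have e2 : d y x = (⌊φ y x⌋ : ℝ) := by simp only [hd]; rw [if_pos h]
      rw [e1, e2, hA0 y x hadj.symm, Int.floor_neg]
      push_cast
      ring
  refine ⟨ψS, ?_, ?_, ?_⟩
  · intro x y hadj
    by_cases ht : x ∈ S ∨ y ∈ S
    · have e1 : ψS x y = ψ' x y := by simp only [hψS]; rw [if_pos ht]
      have e2 : ψS y x = ψ' y x := by simp only [hψS]; rw [if_pos (Or.symm ht)]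
      rw [e1, e2]
      exact hA' x y hadj
    · have ht' : ¬ (y ∈ S ∨ x ∈ S) := fun h => ht (Or.symm h)
      have e1 : ψS x y = d x y := by simp only [hψS]; rw [if_neg ht]
      have e2 : ψS y x = d y x := by simp only [hψS]; rw [if_neg ht']
      rw [e1, e2]
      exact hdanti x y hadj
  · intro x hx
    have : ∀ y ∈ G.neighborFinset x, ψS x y = ψ' x y := by
      intro y _
      simp only [hψS]
      rw [if_pos (Or.inl hx)]
    rw [Finset.sum_congr rfl this]
    exact hC' x hx
  · intro x y hadj
    by_cases ht : x ∈ S ∨ y ∈ S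
    · have hmem : (x, y) ∉ badPairs G S ψ' := by rw [hbad]; exact Finset.notMem_empty _
      rw [mem_badPairs] at hmem
      push_neg at hmem
      have hint : IsInt (ψ' x y) := hmem hadj ht
      obtain ⟨m, hm⟩ := hint
      obtain ⟨hw1, hw2⟩ := hW' x y hadj
      rw [hm] at hw1 hw2
      have hSv : ψS x y = ψ' x y := by simp only [hψS]; rw [if_pos ht]
      rw [hSv, hm]
      exact eq_floor_or_ceil hw1 hw2
    · have e1 : ψS x y = d x y := by simp only [hψS]; rw [if_neg ht]
      rw [e1]
      simp only [hd]
      by_cases h : x < y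
      · left; rw [if_pos h]
      · right; rw [if_neg h]

end Main

end FlowRounding

/-- **Rounding flows.** If `G` is a locally finite graph, `f` is integer valued, and `φ`
is an `f`-flow, then there is an integral `f`-flow `ψ` with `|φ(x,y) − ψ(x,y)| < 1` on
every edge. -/
theorem integral_flow_rounding {X : Type*} (G : SimpleGraph X) [G.LocallyFinite]
    (f : X → ℤ) (φ : X → X → ℝ) (hφ : IsFlow G (fun x => (f x : ℝ)) φ) :
    ∃ ψ : X → X → ℝ, IsFlow G (fun x => (f x : ℝ)) ψ ∧
      (∀ x y, G.Adj x y → ∃ m : ℤ, ψ x y = (m : ℝ)) ∧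
      (∀ x y, G.Adj x y → |φ x y - ψ x y| < 1) := by
  classical
  obtain ⟨hA0, hC0⟩ := hφ
  have hex : ∀ S : Finset X, ∃ ψS : X → X → ℝ,
      (∀ x y, G.Adj x y → ψS x y = -ψS y x) ∧
      (∀ x ∈ S, ∑ y ∈ G.neighborFinset x, ψS x y = (f x : ℝ)) ∧
      (∀ x y, G.Adj x y → ψS x y = (⌊φ x y⌋ : ℝ) ∨ ψS x y = (⌈φ x y⌉ : ℝ)) :=
    fun S => FlowRounding.exists_rounding G S f φ hA0 hC0
  choose Ψ hΨ1 hΨ2 hΨ3 using hex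
  haveI : Nonempty (Finset X) := ⟨∅⟩
  haveI : (Filter.atTop : Filter (Finset X)).NeBot := Filter.atTop_neBot
  let U : Ultrafilter (Finset X) := Ultrafilter.of Filter.atTop
  have hUle : (U : Filter (Finset X)) ≤ (Filter.atTop : Filter (Finset X)) :=
    Ultrafilter.of_le _
  set ψ : X → X → ℝ := fun x y =>
    if G.Adj x y then
      (if {S : Finset X | Ψ S x y = (⌈φ x y⌉ : ℝ)} ∈ U then (⌈φ x y⌉ : ℝ) else (⌊φ x y⌋ : ℝ))
    else 0 with hψdef
  have hval : ∀ x y, G.Adj x y → ψ x y = (⌊φ x y⌋ : ℝ) ∨ ψ x y = (⌈φ x y⌉ : ℝ) := by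
    intro x y hadj
    rw [hψdef]
    by_cases hm : {S : Finset X | Ψ S x y = (⌈φ x y⌉ : ℝ)} ∈ U
    · right; simp [hadj, hm]
    · left; simp [hadj, hm]
  have hag : ∀ x y, G.Adj x y → {S : Finset X | Ψ S x y = ψ x y} ∈ U := by
    intro x y hadj
    by_cases hm : {S : Finset X | Ψ S x y = (⌈φ x y⌉ : ℝ)} ∈ U
    · have hv : ψ x y = (⌈φ x y⌉ : ℝ) := by rw [hψdef]; simp [hadj, hm]
      rw [hv]; exact hm
    · have hv : ψ x y = (⌊φ x y⌋ : ℝ) := by rw [hψdef]; simp [hadj, hm]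
      have hcompl : {S : Finset X | Ψ S x y = (⌈φ x y⌉ : ℝ)}ᶜ ∈ U :=
        Ultrafilter.compl_mem_iff_notMem.mpr hm
      refine (U : Filter (Finset X)).mem_of_superset hcompl ?_
      intro S hS
      rcases hΨ3 S x y hadj with h | h
      · rw [hv]; exact h
      · exact absurd h hS
  have hxmem : ∀ x : X, {S : Finset X | x ∈ S} ∈ U := by
    intro x
    apply hUle
    rw [Filter.mem_atTop_sets]
    exact ⟨{x}, fun b hb => Finset.singleton_subset_iff.mp hb⟩
  refine ⟨ψ, ⟨?_, ?_⟩, ?_, ?_⟩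
  · -- antisymmetry
    intro x y hadj
    have h1 := hag x y hadj
    have h2 := hag y x hadj.symm
    obtain ⟨S₀, hS₁, hS₂⟩ := Filter.nonempty_of_mem (Filter.inter_mem h1 h2)
    rw [Set.mem_setOf_eq] at hS₁ hS₂
    rw [← hS₁, ← hS₂]
    exact hΨ1 S₀ x y hadj
  · -- conservation
    intro x
    have hbig : ((⋂ y ∈ G.neighborFinset x, {S : Finset X | Ψ S x y = ψ x y}) ∩
        {S : Finset X | x ∈ S}) ∈ U := by
      refine Filter.inter_mem ?_ (hxmem x)
      rw [Filter.biInter_finset_mem]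
      intro y hy
      exact hag x y ((SimpleGraph.mem_neighborFinset _ _ _).mp hy)
    obtain ⟨S₀, hS₀i, hS₀x⟩ := Filter.nonempty_of_mem hbig
    have hsum : ∑ y ∈ G.neighborFinset x, ψ x y = ∑ y ∈ G.neighborFinset x, Ψ S₀ x y := by
      refine Finset.sum_congr rfl fun y hy => ?_
      have := Set.mem_iInter₂.mp hS₀i y hy
      exact this.symm
    rw [hsum]
    exact hΨ2 S₀ x hS₀x
  · -- integrality
    intro x y hadj
    rcases hval x y hadj with h | h
    · exact ⟨⌊φ x y⌋, h⟩
    · exact ⟨⌈φ x y⌉, h⟩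
  · -- closeness
    intro x y hadj
    rcases hval x y hadj with h | h
    · rw [h, abs_sub_lt_iff]
      constructor
      · have := Int.sub_one_lt_floor (φ x y)
        linarith
      · have := Int.floor_le (φ x y)
        linarith
    · rw [h, abs_sub_lt_iff]
      constructor
      · have := Int.le_ceil (φ x y)
        linarith
      · have := Int.ceil_lt_add_one (φ x y)
        linarith
end

section
/- There exist a 2-regular acyclic Borel graph G on a standard Borel space X and a Borel function f : X → ℤ such that G has a Borel f-flow but G has no integral Borel f-flow. -/
open Finset

/-- An `f`-flow on a graph `G`: a function on oriented edges, antisymmetric on edges,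
whose net outflow at each vertex with finitely many neighbors equals `f` there. -/
def IsFlowS {X : Type*} (G : SimpleGraph X) (f : X → ℝ) (φ : X → X → ℝ) : Prop :=
  (∀ x y, G.Adj x y → φ x y = -φ y x) ∧
  (∀ (x : X) (hfin : (G.neighborSet x).Finite), ∑ y ∈ hfin.toFinset, φ x y = f x)

/-- The content of Statement 10, for a fixed measurable space `X`: there is a 2-regular
acyclic Borel graph `G` on the standard Borel space `X` and a Borel `f : X → ℤ` such that
`G` has a Borel `f`-flow but no integral Borel `f`-flow (Borel-ness of a flow means it is
Borel as a function on the Borel edge set). -/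
def HasLaczkovichExample (X : Type) [MeasurableSpace X] : Prop :=
  StandardBorelSpace X ∧
  ∃ (G : SimpleGraph X) (f : X → ℤ),
    MeasurableSet {p : X × X | G.Adj p.1 p.2} ∧
    (∀ x : X, (G.neighborSet x).ncard = 2) ∧
    G.IsAcyclic ∧
    Measurable f ∧
    (∃ φ : X → X → ℝ,
      Measurable (fun p : {p : X × X // G.Adj p.1 p.2} => φ p.val.1 p.val.2) ∧
      IsFlowS G (fun x => (f x : ℝ)) φ) ∧
    ¬(∃ ψ : X → X → ℝ,
      Measurable (fun p : {p : X × X // G.Adj p.1 p.2} => ψ p.val.1 p.val.2) ∧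
      IsFlowS G (fun x => (f x : ℝ)) ψ ∧
      ∀ x y, G.Adj x y → ∃ m : ℤ, ψ x y = (m : ℝ))


open MeasureTheory Set

namespace Lacz

noncomputable section

abbrev C := AddCircle (1:ℝ)

def th : ℝ := Real.sqrt 2

lemma th_irr : Irrational th := by unfold th; exact irrational_sqrt_two

def aa : C := ((th : ℝ) : C)
def cc : C := ((th/2 : ℝ) : C)

lemma two_cc : cc + cc = aa := by
  rw [cc, aa, ← AddCircle.coe_add]; norm_num

lemma key : ∀ n : ℤ, n • aa = 0 → n = 0 := by
  intro n hn
  by_contra h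
  rw [aa, ← AddCircle.coe_zsmul, AddCircle.coe_eq_zero_iff] at hn
  obtain ⟨m, hm⟩ := hn
  have hm' : (m : ℝ) = n * th := by
    have h2 : ((m:ℤ) • (1:ℝ)) = (n:ℤ) • th := hm
    push_cast [zsmul_eq_mul] at h2; linarith
  have hn0 : (n:ℝ) ≠ 0 := by exact_mod_cast h
  exact th_irr ⟨(m : ℚ)/(n : ℚ), by push_cast; rw [div_eq_iff hn0]; linarith⟩

lemma aa_ne_zero : aa ≠ 0 := fun h => by simpa using key 1 (by simpa using h)

/-- The countable "bad" set of points fixed by some reflection in the group. -/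
def D : Set C := {z | ∃ n : ℤ, (2:ℤ) • z = n • aa}

lemma D_countable : D.Countable := by
  have hsub : D ⊆ Set.range (fun nm : ℤ × ℤ => (((nm.1 * th + nm.2)/2 : ℝ) : C)) := by
    rintro z ⟨n, hn⟩
    obtain ⟨t, rfl⟩ := QuotientAddGroup.mk_surjective z
    rw [show ((t : C)) = ((t:ℝ) : C) from rfl] at hn
    rw [← AddCircle.coe_zsmul, aa, ← AddCircle.coe_zsmul, ← sub_eq_zero, ← AddCircle.coe_sub,
      AddCircle.coe_eq_zero_iff] at hn
    obtain ⟨m, hm⟩ := hn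
    refine ⟨(n, m), ?_⟩
    have h1 : ((m:ℤ) • (1:ℝ)) = (2:ℤ) • t - (n:ℤ) • th := hm
    push_cast [zsmul_eq_mul] at h1
    have h2 : ((n:ℝ) * th + ((m : ℤ):ℝ))/2 = t := by push_cast; linarith
    show ((((n:ℝ) * th + ((m : ℤ):ℝ))/2 : ℝ) : C) = (t : C)
    rw [h2]
  exact Set.Countable.mono hsub (Set.countable_range _)

lemma D_measurable : MeasurableSet D := D_countable.measurableSet

lemma D_neg {z : C} (hz : z ∉ D) : -z ∉ D := by
  rintro ⟨n, hn⟩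
  exact hz ⟨-n, by rw [neg_zsmul, ← hn]; abel⟩

lemma D_sub {z : C} (hz : z ∉ D) : aa - z ∉ D := by
  rintro ⟨n, hn⟩
  refine hz ⟨2 - n, ?_⟩
  rw [sub_zsmul, ← hn]; abel

lemma D_add {z : C} (hz : z ∉ D) : z + aa ∉ D := by
  rintro ⟨n, hn⟩
  refine hz ⟨n - 2, ?_⟩
  rw [sub_zsmul, ← hn]; abel

/-- The standard Borel space on which the example graph lives. -/
abbrev XX : Type := {z : C // z ∉ D}

def sA : XX → XX := fun x => ⟨aa - x.1, D_sub x.2⟩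
def sB : XX → XX := fun x => ⟨-x.1, D_neg x.2⟩
def tt : XX → XX := fun x => ⟨x.1 + aa, D_add x.2⟩

lemma sA_val (x : XX) : (sA x).1 = aa - x.1 := rfl
lemma sB_val (x : XX) : (sB x).1 = -x.1 := rfl
lemma tt_val (x : XX) : (tt x).1 = x.1 + aa := rfl

lemma sA_sA (x : XX) : sA (sA x) = x := Subtype.ext (by rw [sA_val, sA_val]; abel)
lemma sB_sB (x : XX) : sB (sB x) = x := Subtype.ext (by rw [sB_val, sB_val]; abel)
lemma sA_sB (x : XX) : sA (sB x) = tt x := Subtype.ext (by rw [sA_val, sB_val, tt_val]; abel)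

lemma not_mem_D_iff (x : XX) : ∀ n : ℤ, (2:ℤ) • x.1 ≠ n • aa := by
  intro n h; exact x.2 ⟨n, h⟩

lemma sA_ne (x : XX) : sA x ≠ x := by
  intro h
  apply not_mem_D_iff x 1
  have h1 : aa - x.1 = x.1 := congrArg Subtype.val h
  have h2 : aa = x.1 + x.1 := by
    have h3 := congrArg (fun z => z + x.1) h1
    simpa using h3
  rw [two_zsmul, one_zsmul]; exact h2.symm

lemma sB_ne (x : XX) : sB x ≠ x := by
  intro h
  apply not_mem_D_iff x 0
  have h1 : -x.1 = x.1 := congrArg Subtype.val h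
  have h2 : x.1 + x.1 = 0 := by
    have h3 := congrArg (fun z => z + x.1) h1
    simpa using h3.symm
  rw [two_zsmul, zero_zsmul]; exact h2

lemma sA_ne_sB (x : XX) : sA x ≠ sB x := by
  intro h
  have h1 : aa - x.1 = -x.1 := congrArg Subtype.val h
  have h2 := congrArg (fun z => z + x.1) h1
  simp only [sub_add_cancel, neg_add_cancel] at h2
  exact aa_ne_zero h2

lemma tt_ne (x : XX) : tt x ≠ x := by
  intro h
  have h1 : x.1 + aa = x.1 := congrArg Subtype.val h
  have h2 := congrArg (fun z => z - x.1) h1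
  simp only [add_sub_cancel_left, sub_self] at h2
  exact aa_ne_zero h2

/-- The graph: `x` is adjacent to its two reflections. -/
def G : SimpleGraph XX where
  Adj := fun x y => y = sA x ∨ y = sB x
  symm := by
    constructor
    rintro x y (rfl | rfl)
    · exact Or.inl (sA_sA x).symm
    · exact Or.inr (sB_sB x).symm
  loopless := by
    constructor
    rintro x (h | h)
    · exact sA_ne x h.symm
    · exact sB_ne x h.symm

lemma adjA (x : XX) : G.Adj x (sA x) := Or.inl rfl
lemma adjB (x : XX) : G.Adj x (sB x) := Or.inr rfl

lemma neighborSet_eq (x : XX) : G.neighborSet x = {sA x, sB x} := by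
  ext y; simp [SimpleGraph.mem_neighborSet, G, Set.mem_insert_iff]

lemma degree_two (x : XX) : (G.neighborSet x).ncard = 2 := by
  rw [neighborSet_eq]
  exact Set.ncard_pair (sA_ne_sB x)

/-! ### Acyclicity via infinite dihedral word combinatorics -/

def tau : Bool → ℤ := fun t => if t then 1 else 0

def word : List Bool → ℤ × Bool
  | [] => (0, false)
  | t :: l =>
    let w := word l
    (w.1 + (if w.2 then -(tau t) else tau t), !w.2)

def act (w : ℤ × Bool) (v : C) : C := w.1 • aa + (if w.2 then -v else v)

def sval (t : Bool) (v : C) : C := if t then aa - v else -v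

lemma word_cons (t : Bool) (l : List Bool) :
    word (t :: l) = ((word l).1 + (if (word l).2 then -(tau t) else tau t), !(word l).2) := rfl

lemma act_cons (t : Bool) (l : List Bool) (v : C) :
    act (word (t :: l)) v = act (word l) (sval t v) := by
  rcases hw : word l with ⟨k, e⟩
  rw [word_cons, hw]
  cases e <;> cases t <;>
    simp [act, sval, tau, add_zsmul, one_zsmul, zero_zsmul] <;> abel

open Classical in
def dtype (d : G.Dart) : Bool := if d.toProd.2 = sA d.toProd.1 then true else false

lemma walk_eval {x y : XX} (p : G.Walk x y) :
    y.1 = act (word (p.darts.map dtype)) x.1 := by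
  induction p with
  | nil => simp [act, word, zero_zsmul]
  | @cons u v w h p ih =>
    rw [SimpleGraph.Walk.darts_cons, List.map_cons, act_cons]
    have hs : sval (dtype ⟨(u, v), h⟩) u.1 = v.1 := by
      by_cases hA : v = sA u
      · simp only [dtype, hA, if_pos rfl, sval, if_pos]
        rw [sA_val]
      · have hB : v = sB u := h.resolve_left hA
        simp only [dtype]
        rw [if_neg (by exact hA), sval, if_neg (by simp), hB, sB_val]
    rw [hs]; exact ih

lemma word_spec : ∀ (l : List Bool) (t : Bool), (t :: l).Chain' (· ≠ ·) →
    ∃ m : ℕ, ((t::l).length = 2*m+1 ∧ word (t::l) = ((if t then (m:ℤ)+1 else -(m:ℤ)), true)) ∨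
      ((t::l).length = 2*m+2 ∧ word (t::l) = ((if t then -((m:ℤ)+1) else (m:ℤ)+1), false)) := by
  intro l
  induction l with
  | nil =>
    intro t _
    refine ⟨0, Or.inl ⟨rfl, ?_⟩⟩
    cases t <;> simp [word, tau]
  | cons t₂ l₂ ih =>
    intro t hch
    have hne : t ≠ t₂ := (List.isChain_cons_cons.mp hch).1
    have ht₂ : t₂ = !t := by cases t <;> cases t₂ <;> simp_all
    obtain ⟨m, hm | hm⟩ := ih t₂ (List.isChain_cons_cons.mp hch).2
    · refine ⟨m, Or.inr ⟨by simp only [List.length_cons] at hm ⊢; omega, ?_⟩⟩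
      rw [word_cons, hm.2]
      subst ht₂
      cases t <;> simp [tau, Prod.ext_iff] <;> ring
    · refine ⟨m + 1, Or.inl ⟨by simp only [List.length_cons] at hm ⊢; omega, ?_⟩⟩
      rw [word_cons, hm.2]
      subst ht₂
      cases t <;> simp [tau, Prod.ext_iff] <;> push_cast <;> ring

lemma acyclic : G.IsAcyclic := by
  intro v c hc
  have hlen : 3 ≤ c.length := hc.three_le_length
  have hchain : List.IsChain (fun d d' : G.Dart => dtype d ≠ dtype d') c.darts := by
    have hA := c.isChain_dartAdj_darts
    have hB : List.IsChain (fun d d' : G.Dart => d.edge ≠ d'.edge) c.darts := by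
      rw [← List.isChain_map]
      exact (hc.edges_nodup).isChain
    rw [List.isChain_iff_getElem] at hA hB ⊢
    intro i hi
    have hadj := hA i hi
    have hedge := hB i hi
    set d := c.darts[i]'(by omega) with hd
    set d' := c.darts[i+1]'(by omega) with hd'
    intro heq
    apply hedge
    have hfst : d'.toProd.1 = d.toProd.2 := hadj.symm
    have hsnd : d'.toProd.2 = d.toProd.1 := by
      by_cases hA' : d.toProd.2 = sA d.toProd.1
      · have h1 : dtype d = true := by simp [dtype, hA']
        have h2 : dtype d' = true := by rw [← heq, h1]
        have h3 : d'.toProd.2 = sA d'.toProd.1 := by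
          by_contra hcon; simp [dtype, hcon] at h2
        rw [h3, hfst, hA', sA_sA]
      · have hB' : d.toProd.2 = sB d.toProd.1 := d.adj.resolve_left hA'
        have h1 : dtype d = false := by simp [dtype, hA']
        have h2 : dtype d' = false := by rw [← heq, h1]
        have h3 : d'.toProd.2 ≠ sA d'.toProd.1 := by
          intro hcon; simp [dtype, hcon] at h2
        have hB'' : d'.toProd.2 = sB d'.toProd.1 := d'.adj.resolve_left h3
        rw [hB'', hfst, hB', sB_sB]
    show d.edge = d'.edge
    have hpr : d'.toProd = (d.toProd.2, d.toProd.1) := Prod.ext hfst hsnd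
    rw [SimpleGraph.Dart.edge, SimpleGraph.Dart.edge, hpr]
    conv_lhs => rw [← Prod.mk.eta (p := d.toProd)]
    rw [Sym2.eq_swap]
  have hchainL : (c.darts.map dtype).IsChain (· ≠ ·) := by
    rw [List.isChain_map]; exact hchain
  have hlenL : (c.darts.map dtype).length = c.length := by
    rw [List.length_map, SimpleGraph.Walk.length_darts]
  have hne : c.darts.map dtype ≠ [] := by
    intro h; rw [h] at hlenL; simp at hlenL; omega
  obtain ⟨t, l, hL⟩ := List.exists_cons_of_ne_nil hne
  obtain ⟨m, hm | hm⟩ := word_spec l t (hL ▸ hchainL)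
  · have heval := walk_eval c
    rw [hL, hm.2] at heval
    simp only [act, if_pos] at heval
    rw [← sub_eq_add_neg] at heval
    have h2 := eq_sub_iff_add_eq.mp heval
    apply not_mem_D_iff v (if t then (m:ℤ)+1 else -(m:ℤ))
    rw [two_zsmul, ← h2]
  · have heval := walk_eval c
    rw [hL, hm.2] at heval
    simp only [act, Bool.false_eq_true, if_false] at heval
    have hzero := right_eq_add.mp heval
    have h0 := key _ hzero
    cases t <;> simp at h0 <;> omega

end
end Lacz

-- continuation: representative function and flow
namespace Lacz
noncomputable section
open MeasureTheory Set

def rr : C → ℝ := fun z => ((AddCircle.equivIco 1 0 z : ℝ))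

lemma rr_coe (t : ℝ) : rr ((t : ℝ) : C) = Int.fract t := by
  have h := AddCircle.coe_equivIco_mk_apply (1:ℝ) t
  simp only [div_one, mul_one] at h
  simpa [rr] using h

lemma measurable_rr : Measurable rr := by
  have h := (AddCircle.measurableEquivIco (T := 1) 0).measurable
  exact measurable_subtype_coe.comp h

lemma rr_mem (z : C) : rr z ∈ Set.Ico (0:ℝ) 1 := by
  have := (AddCircle.equivIco 1 0 z).2
  simpa [rr] using this

lemma rr_rep (z : C) : ((rr z : ℝ) : C) = z := by
  exact (AddCircle.equivIco 1 0).symm_apply_apply z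

/-- Main dichotomy: for `2 • z ≠ 0`, negation flips the `< 1/2` test of the representative. -/
lemma rr_neg_flip {z : C} (hz : (2:ℤ) • z ≠ 0) : (rr (-z) < 1/2 ↔ ¬ (rr z < 1/2)) := by
  obtain ⟨t, rfl⟩ := QuotientAddGroup.mk_surjective z
  rw [show ((t : C)) = ((t:ℝ) : C) from rfl] at hz ⊢
  have hf0 : Int.fract t ≠ 0 := by
    intro h0
    apply hz
    rw [← AddCircle.coe_zsmul, AddCircle.coe_eq_zero_iff]
    refine ⟨2 * ⌊t⌋, ?_⟩
    have ht : t = (⌊t⌋ : ℝ) := by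
      have := Int.fract_add_floor t
      rw [h0] at this; linarith [this]
    push_cast [zsmul_eq_mul]
    linarith [ht]
  have hfh : Int.fract t ≠ 1/2 := by
    intro h0
    apply hz
    rw [← AddCircle.coe_zsmul, AddCircle.coe_eq_zero_iff]
    refine ⟨2 * ⌊t⌋ + 1, ?_⟩
    have ht : t = (⌊t⌋ : ℝ) + 1/2 := by
      have := Int.fract_add_floor t
      rw [h0] at this; linarith [this]
    push_cast [zsmul_eq_mul]
    linarith [ht]
  rw [show (-((t:ℝ) : C)) = (((-t : ℝ)) : C) from (AddCircle.coe_neg _).symm]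
  rw [rr_coe, rr_coe, Int.fract_neg hf0]
  have h1 := Int.fract_lt_one t
  have h0 := Int.fract_nonneg t
  constructor
  · intro h hlt; linarith
  · intro h
    rcases lt_or_ge (Int.fract t) (1/2) with hc | hc
    · exact absurd hc h
    · have : Int.fract t > 1/2 := lt_of_le_of_ne hc (Ne.symm hfh)
      linarith

lemma two_smul_sub_cc (x : XX) : (2:ℤ) • (x.1 - cc) ≠ 0 := by
  intro h
  apply not_mem_D_iff x 1
  rw [smul_sub] at h
  have h2 : (2:ℤ) • x.1 = (2:ℤ) • cc := by
    have := sub_eq_zero.mp h; exact this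
  rw [h2, one_zsmul, two_zsmul, two_cc]

lemma two_smul_add_cc (x : XX) : (2:ℤ) • (x.1 + cc) ≠ 0 := by
  intro h
  apply not_mem_D_iff x (-1)
  rw [smul_add] at h
  have h2 : (2:ℤ) • x.1 = -((2:ℤ) • cc) := by
    have := add_eq_zero_iff_eq_neg.mp h; exact this
  rw [h2, neg_zsmul, one_zsmul, two_zsmul, two_cc]

lemma two_smul_self (x : XX) : (2:ℤ) • x.1 ≠ 0 := by
  intro h
  apply not_mem_D_iff x 0
  rw [h, zero_zsmul]

def n0 : XX → ℤ := fun x => if rr (x.1 - cc) < 1/2 then 0 else -1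
def p0 : XX → ℝ := fun x => (n0 x : ℝ) + 1/2
def ff : XX → ℤ := fun x => if rr x.1 < 1/2 then n0 x - n0 (tt x) else 0

lemma arg_sA (x : XX) : (sA x).1 - cc = -(x.1 - cc) := by
  rw [sA_val, ← two_cc]; abel

lemma arg_sB (x : XX) : (sB x).1 - cc = -(x.1 + cc) := by
  rw [sB_val]; abel

lemma arg_tt (x : XX) : (tt x).1 - cc = x.1 + cc := by
  rw [tt_val, ← two_cc]; abel

lemma n0_sA (x : XX) : n0 (sA x) = -1 - n0 x := by
  rw [n0, n0, arg_sA]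
  rcases (rr_neg_flip (two_smul_sub_cc x)) with ⟨h1, h2⟩
  by_cases hc : rr (x.1 - cc) < 1/2
  · rw [if_pos hc, if_neg (fun hcon => (h1 hcon) hc)]; ring
  · rw [if_neg hc, if_pos (by by_contra hcon; exact hc (by_contra fun hc2 => hcon (h2 hc2)))]; ring

lemma n0_sB (x : XX) : n0 (sB x) = -1 - n0 (tt x) := by
  rw [n0, n0, arg_sB, arg_tt]
  rcases (rr_neg_flip (two_smul_add_cc x)) with ⟨h1, h2⟩
  by_cases hc : rr (x.1 + cc) < 1/2
  · rw [if_pos hc, if_neg (fun hcon => (h1 hcon) hc)]; ring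
  · rw [if_neg hc, if_pos (by by_contra hcon; exact hc (by_contra fun hc2 => hcon (h2 hc2)))]; ring

lemma p0_sA (x : XX) : p0 (sA x) = -p0 x := by
  rw [p0, p0, n0_sA]; push_cast; ring

lemma p0_sB (x : XX) : p0 (sB x) = -p0 (tt x) := by
  rw [p0, p0, n0_sB]; push_cast; ring

lemma FF_eq (x : XX) : (ff x : ℤ) + ff (sB x) = n0 x - n0 (tt x) := by
  have hflip := rr_neg_flip (two_smul_self x)
  have hFsb : n0 (sB x) - n0 (tt (sB x)) = n0 x - n0 (tt x) := by
    have h1 : tt (sB x) = sA x := by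
      apply Subtype.ext; rw [tt_val, sB_val, sA_val]; abel
    rw [h1, n0_sB, n0_sA]; ring
  rw [ff, ff, sB_val]
  by_cases hc : rr x.1 < 1/2
  · rw [if_pos hc, if_neg (fun hcon => (hflip.1 hcon) hc)]
    ring
  · rw [if_neg hc, if_pos (by by_contra hcon; exact hc (by_contra fun hc2 => hcon (hflip.2 hc2))),
      hFsb]
    ring

lemma p0_T (x : XX) : p0 x - p0 (tt x) = ((ff x : ℝ) + (ff (sB x) : ℝ)) := by
  have := FF_eq x
  have h2 : ((n0 x - n0 (tt x) : ℤ) : ℝ) = ((ff x + ff (sB x) : ℤ) : ℝ) := by rw [this]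
  push_cast at h2
  rw [p0, p0]; push_cast; linarith

/-- The Borel real-valued flow. -/
def phi : XX → XX → ℝ := fun x y =>
  if y = sA x then p0 x else if y = sB x then (ff x : ℝ) - p0 x else 0

lemma phi_A (x : XX) : phi x (sA x) = p0 x := by rw [phi, if_pos rfl]

lemma phi_B (x : XX) : phi x (sB x) = (ff x : ℝ) - p0 x := by
  rw [phi, if_neg (fun h => sA_ne_sB x h.symm), if_pos rfl]

lemma phi_antisym {x y : XX} (h : G.Adj x y) : phi x y = -phi y x := by
  rcases h with rfl | rfl
  · rw [phi_A]
    have h1 := phi_A (sA x)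
    rw [sA_sA] at h1
    rw [h1, p0_sA]; ring
  · rw [phi_B]
    have h1 := phi_B (sB x)
    rw [sB_sB] at h1
    rw [h1, p0_sB]
    have h2 := p0_T x
    have h3 : (ff (sB x) : ℝ) = (p0 x - p0 (tt x)) - ff x := by linarith
    rw [h3]; ring

end
end Lacz

-- continuation: measurability and ergodicity
namespace Lacz
noncomputable section
open MeasureTheory Set AddCircle

lemma measurable_val : Measurable (fun x : XX => x.1) := measurable_subtype_coe

lemma measurable_sA : Measurable sA :=
  Measurable.subtype_mk ((continuous_const.sub continuous_id).measurable.comp measurable_val)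

lemma measurable_sB : Measurable sB :=
  Measurable.subtype_mk (continuous_neg.measurable.comp measurable_val)

lemma measurable_tt : Measurable tt :=
  Measurable.subtype_mk ((continuous_id.add continuous_const).measurable.comp measurable_val)

lemma measurable_cond_p0 : MeasurableSet {x : XX | rr (x.1 - cc) < 1/2} := by
  have h1 : Measurable fun x : XX => rr (x.1 - cc) :=
    measurable_rr.comp ((continuous_id.sub continuous_const).measurable.comp measurable_val)
  exact measurableSet_lt h1 measurable_const

lemma measurable_cond_s (x : Unit) : MeasurableSet {x : XX | rr x.1 < 1/2} := by
  have h1 : Measurable fun x : XX => rr x.1 := measurable_rr.comp measurable_val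
  exact measurableSet_lt h1 measurable_const

lemma measurable_n0 : Measurable n0 := Measurable.ite measurable_cond_p0
  measurable_const measurable_const

lemma measurable_p0 : Measurable p0 := by
  have : Measurable fun x : XX => ((n0 x : ℝ)) :=
    Measurable.comp Measurable.of_discrete measurable_n0
  exact this.add measurable_const

lemma measurable_ff : Measurable ff := Measurable.ite (measurable_cond_s ())
  (measurable_n0.sub (measurable_n0.comp measurable_tt)) measurable_const

lemma measurable_eq_pair {f g : XX × XX → XX} (hf : Measurable f) (hg : Measurable g) :
    MeasurableSet {q : XX × XX | f q = g q} := by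
  have h1 : {q : XX × XX | f q = g q} = {q | (f q).1 = (g q).1} := by
    ext q
    exact ⟨fun h => (congrArg Subtype.val h : _), fun h => Subtype.ext h⟩
  rw [h1]
  exact measurableSet_eq_fun (measurable_val.comp hf) (measurable_val.comp hg)

lemma measurable_phi_pair : Measurable (fun q : XX × XX => phi q.1 q.2) := by
  have hA : MeasurableSet {q : XX × XX | q.2 = sA q.1} :=
    measurable_eq_pair measurable_snd (measurable_sA.comp measurable_fst)
  have hB : MeasurableSet {q : XX × XX | q.2 = sB q.1} :=
    measurable_eq_pair measurable_snd (measurable_sB.comp measurable_fst)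
  have hp0 : Measurable fun q : XX × XX => p0 q.1 := measurable_p0.comp measurable_fst
  have hff : Measurable fun q : XX × XX => ((ff q.1 : ℝ)) :=
    Measurable.of_discrete.comp (measurable_ff.comp measurable_fst)
  exact Measurable.ite hA hp0 (Measurable.ite hB (hff.sub hp0) measurable_const)

lemma edge_measurable : MeasurableSet {q : XX × XX | G.Adj q.1 q.2} := by
  have hA : MeasurableSet {q : XX × XX | q.2 = sA q.1} :=
    measurable_eq_pair measurable_snd (measurable_sA.comp measurable_fst)
  have hB : MeasurableSet {q : XX × XX | q.2 = sB q.1} :=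
    measurable_eq_pair measurable_snd (measurable_sB.comp measurable_fst)
  have : {q : XX × XX | G.Adj q.1 q.2} =
      {q : XX × XX | q.2 = sA q.1} ∪ {q : XX × XX | q.2 = sB q.1} := rfl
  rw [this]; exact hA.union hB

/-! ### Ergodicity of the irrational rotation, via Fourier coefficients -/

lemma vol_eq_haar : (volume : Measure C) = haarAddCircle := by
  rw [AddCircle.volume_eq_smul_haarAddCircle]; simp

lemma fourier_mul_shift (m : ℤ) (x : C) :
    (fourier m (x + aa) : ℂ) = fourier m aa * fourier m x := by
  rw [fourier_apply, fourier_apply, fourier_apply, smul_add, AddCircle.toCircle_add]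
  push_cast; ring

lemma fourier_aa_ne_one {m : ℤ} (hm : m ≠ 0) : (fourier m aa : ℂ) ≠ 1 := by
  rw [fourier_apply]
  intro h
  have h1 : AddCircle.toCircle (m • aa) = 1 := Circle.coe_injective (by rw [h]; simp)
  have h2 : m • aa = 0 :=
    AddCircle.injective_toCircle one_ne_zero (h1.trans (AddCircle.toCircle_zero).symm)
  exact hm (key m h2)

lemma integrable_fourier (m : ℤ) :
    Integrable (fun x : C => (fourier m x : ℂ)) haarAddCircle := by
  apply Continuous.integrable_of_hasCompactSupport (map_continuous (fourier m))
  exact HasCompactSupport.of_compactSpace _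

lemma integral_fourier_eq_zero {m : ℤ} (hm : m ≠ 0) :
    ∫ x : C, (fourier m x : ℂ) ∂haarAddCircle = 0 := by
  have h1 := integral_add_right_eq_self (μ := haarAddCircle) (fun x : C => (fourier m x : ℂ)) aa
  have h2 : (∫ x : C, (fourier m (x + aa) : ℂ) ∂haarAddCircle) =
      fourier m aa * ∫ x : C, (fourier m x : ℂ) ∂haarAddCircle := by
    simp_rw [fourier_mul_shift m]
    exact integral_const_mul _ _
  rw [h2] at h1
  have h3 : ((fourier m aa : ℂ) - 1) * (∫ x : C, (fourier m x : ℂ) ∂haarAddCircle) = 0 := by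
    rw [sub_mul, one_mul, h1, sub_self]
  rcases mul_eq_zero.mp h3 with h | h
  · exact absurd (by linear_combination h) (fourier_aa_ne_one hm)
  · exact h

lemma coeff_invariant_vanish {s : Set C} (hs : MeasurableSet s)
    (hinv : (fun z : C => z + aa) ⁻¹' s =ᵐ[haarAddCircle] s) {n : ℤ} (hn : n ≠ 0) :
    fourierCoeff (s.indicator (fun _ => (1:ℂ))) n = 0 := by
  set g : C → ℂ := s.indicator (fun _ => (1:ℂ)) with hg
  have hind : ∀ x : C, (fourier (-n) x : ℂ) • g x = s.indicator (fun y => (fourier (-n) y : ℂ)) x := by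
    intro x
    by_cases hx : x ∈ s <;> simp [hg, Set.indicator_of_mem, Set.indicator_of_notMem, hx]
  have hJ : fourierCoeff g n = ∫ x : C, s.indicator (fun y => (fourier (-n) y : ℂ)) x ∂haarAddCircle := by
    have hdef : fourierCoeff g n = ∫ x : C, (fourier (-n) x : ℂ) • g x ∂haarAddCircle := rfl
    rw [hdef]
    exact integral_congr_ae (Filter.Eventually.of_forall hind)
  set J := fourierCoeff g n with hJdef
  have htrans := integral_add_right_eq_self (μ := haarAddCircle)
    (fun x : C => s.indicator (fun y => (fourier (-n) y : ℂ)) x) aa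
  have hpt : ∀ x : C, s.indicator (fun y => (fourier (-n) y : ℂ)) (x + aa) =
      fourier (-n) aa * ((fun z : C => z + aa) ⁻¹' s).indicator (fun y => (fourier (-n) y : ℂ)) x := by
    intro x
    by_cases hx : x + aa ∈ s
    · rw [Set.indicator_of_mem hx, Set.indicator_of_mem (by exact hx), fourier_mul_shift]
    · rw [Set.indicator_of_notMem hx, Set.indicator_of_notMem (by exact hx), mul_zero]
  have hae : (fun x : C => ((fun z : C => z + aa) ⁻¹' s).indicator (fun y => (fourier (-n) y : ℂ)) x)
      =ᵐ[haarAddCircle] (fun x : C => s.indicator (fun y => (fourier (-n) y : ℂ)) x) := by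
    have h4 : ∀ᵐ x ∂haarAddCircle, (x ∈ (fun z : C => z + aa) ⁻¹' s ↔ x ∈ s) :=
      Filter.eventuallyEq_set.mp hinv
    filter_upwards [h4] with x hx
    by_cases hmem : x ∈ s
    · rw [Set.indicator_of_mem hmem, Set.indicator_of_mem (hx.mpr hmem)]
    · rw [Set.indicator_of_notMem hmem, Set.indicator_of_notMem (fun hcon => hmem (hx.mp hcon))]
  have h5 : (∫ x : C, s.indicator (fun y => (fourier (-n) y : ℂ)) (x + aa) ∂haarAddCircle) =
      fourier (-n) aa * J := by
    simp_rw [hpt]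
    rw [integral_const_mul]
    rw [integral_congr_ae hae, ← hJ]
  rw [h5, ← hJ] at htrans
  have h6 : ((fourier (-n) aa : ℂ) - 1) * J = 0 := by
    rw [sub_mul, one_mul, htrans, sub_self]
  rcases mul_eq_zero.mp h6 with h | h
  · exact absurd (by linear_combination h) (fourier_aa_ne_one (neg_ne_zero.mpr hn))
  · exact h

/-- Ergodicity of rotation by `aa` on the circle. -/
lemma erg {s : Set C} (hs : MeasurableSet s)
    (hinv : (fun z : C => z + aa) ⁻¹' s =ᵐ[volume] s) :
    volume s = 0 ∨ volume sᶜ = 0 := by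
  rw [vol_eq_haar] at hinv ⊢
  set μ := (haarAddCircle : Measure C)
  set g : C → ℂ := s.indicator (fun _ => (1:ℂ)) with hg
  set c₀ : ℂ := fourierCoeff g 0 with hc₀
  have hint_g : Integrable g μ := (integrable_const (1:ℂ)).indicator hs
  have hcoeff_g0 : fourierCoeff g 0 = ∫ x : C, g x ∂μ := by
    have hdef : fourierCoeff g 0 = ∫ x : C, (fourier (-(0:ℤ)) x : ℂ) • g x ∂μ := rfl
    rw [hdef]; congr 1; funext x; rw [neg_zero, fourier_zero, one_smul]
  -- the function h = g - c₀ has all Fourier coefficients zero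
  set h : C → ℂ := fun x => g x - c₀ with hh
  have hint_fg : ∀ m : ℤ, Integrable (fun x : C => (fourier m x : ℂ) * g x) μ := by
    intro m
    have heq : (fun x : C => (fourier m x : ℂ) * g x) =
        s.indicator (fun y => (fourier m y : ℂ)) := by
      funext x
      by_cases hx : x ∈ s <;>
        simp [hg, Set.indicator_of_mem, Set.indicator_of_notMem, hx]
    rw [heq]
    exact (integrable_fourier m).indicator hs
  have hcoeff_h : ∀ n : ℤ, fourierCoeff h n = 0 := by
    intro n
    have hsplit : fourierCoeff h n =
        fourierCoeff g n - (∫ x : C, (fourier (-n) x : ℂ) ∂μ) * c₀ := by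
      have hdef : fourierCoeff h n = ∫ x : C, (fourier (-n) x : ℂ) • h x ∂μ := rfl
      have hdef2 : fourierCoeff g n = ∫ x : C, (fourier (-n) x : ℂ) • g x ∂μ := rfl
      rw [hdef, hdef2]
      have hfun : (fun x : C => (fourier (-n) x : ℂ) • h x) =
          fun x : C => (fourier (-n) x : ℂ) * g x - (fourier (-n) x : ℂ) * c₀ := by
        funext x; rw [hh]; simp [smul_eq_mul, mul_sub]
      rw [hfun, integral_sub (hint_fg (-n)) ((integrable_fourier (-n)).mul_const c₀)]
      have hmr := integral_mul_const (μ := μ) c₀ (fun x : C => (fourier (-n) x : ℂ))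
      have hsg : (∫ x : C, (fourier (-n) x : ℂ) • g x ∂μ) = ∫ x : C, (fourier (-n) x : ℂ) * g x ∂μ := by
        apply integral_congr_ae
        exact Filter.Eventually.of_forall fun x => by simp [smul_eq_mul]
      rw [hsg, hmr]
    by_cases hn : n = 0
    · subst hn
      rw [hsplit, hcoeff_g0]
      have h1 : (∫ x : C, (fourier (-(0:ℤ)) x : ℂ) ∂μ) = 1 := by
        simp only [neg_zero, fourier_zero]
        rw [integral_const]
        simp [measure_univ]
      rw [h1, one_mul, hc₀, hcoeff_g0]
      exact sub_self _
    · rw [hsplit, coeff_invariant_vanish hs hinv hn,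
        integral_fourier_eq_zero (neg_ne_zero.mpr hn), zero_mul, sub_zero]
  -- conclude h = 0 a.e. via the Fourier Hilbert basis
  have hmem_g : MemLp g 2 μ := memLp_indicator_const 2 hs 1 (Or.inr (measure_ne_top μ s))
  have hmem_h : MemLp h 2 μ := hmem_g.sub (memLp_const c₀)
  set H := hmem_h.toLp h with hH
  have hcoeff_H : ∀ n : ℤ, fourierCoeff (H : C → ℂ) n = 0 := by
    intro n
    rw [← hcoeff_h n]
    have hdef : fourierCoeff ((H : C → ℂ)) n = ∫ x : C, (fourier (-n) x : ℂ) • (H : C → ℂ) x ∂μ := rfl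
    have hdef2 : fourierCoeff h n = ∫ x : C, (fourier (-n) x : ℂ) • h x ∂μ := rfl
    rw [hdef, hdef2]
    apply integral_congr_ae
    filter_upwards [hmem_h.coeFn_toLp] with x hx
    rw [hx]
  have hrepr : fourierBasis.repr H = 0 := by
    ext n
    rw [fourierBasis_repr]
    simp [hcoeff_H n]
  have hH0 : H = 0 := by
    have := fourierBasis.repr.map_eq_zero_iff (x := H)
    exact this.mp hrepr
  have hae0 : h =ᵐ[μ] 0 := by
    have h1 : h =ᵐ[μ] (H : C → ℂ) := (hmem_h.coeFn_toLp).symm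
    have h2 : ((H : C → ℂ)) =ᵐ[μ] 0 := by rw [hH0]; exact Lp.coeFn_zero _ _ _
    exact h1.trans h2
  have hgc : ∀ᵐ x ∂μ, g x = c₀ := by
    filter_upwards [hae0] with x hx
    have h1 : g x - c₀ = 0 := hx
    exact sub_eq_zero.mp h1
  by_contra hcon
  push_neg at hcon
  obtain ⟨hs0, hsc0⟩ := hcon
  have hEc : μ {x | ¬ (g x = c₀)} = 0 := by
    rw [← MeasureTheory.ae_iff]; exact hgc
  have hone : c₀ = 1 := by
    have hne : (s ∩ {x | g x = c₀}).Nonempty := by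
      apply nonempty_of_measure_ne_zero (μ := μ)
      intro h0
      apply hs0
      have hsub : s ⊆ (s ∩ {x | g x = c₀}) ∪ {x | ¬ (g x = c₀)} := by
        intro x hx
        by_cases hgx : g x = c₀
        · exact Or.inl ⟨hx, hgx⟩
        · exact Or.inr hgx
      have := (measure_mono (μ := μ) hsub).trans (measure_union_le _ _)
      rw [h0, hEc] at this
      simpa using this
    obtain ⟨x, hxs, hxg⟩ := hne
    rw [← hxg, hg, Set.indicator_of_mem hxs]
  have hzero : c₀ = 0 := by
    have hne : (sᶜ ∩ {x | g x = c₀}).Nonempty := by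
      apply nonempty_of_measure_ne_zero (μ := μ)
      intro h0
      apply hsc0
      have hsub : sᶜ ⊆ (sᶜ ∩ {x | g x = c₀}) ∪ {x | ¬ (g x = c₀)} := by
        intro x hx
        by_cases hgx : g x = c₀
        · exact Or.inl ⟨hx, hgx⟩
        · exact Or.inr hgx
      have := (measure_mono (μ := μ) hsub).trans (measure_union_le _ _)
      rw [h0, hEc] at this
      simpa using this
    obtain ⟨x, hxs, hxg⟩ := hne
    rw [← hxg, hg, Set.indicator_of_notMem hxs]
  exact one_ne_zero (hone.symm.trans hzero)

end
end Lacz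

-- continuation: null sets and the measure-theoretic contradiction
namespace Lacz
noncomputable section
open MeasureTheory Set

lemma singleton_null (z : C) : volume ({z} : Set C) = 0 := by
  rw [← Metric.closedBall_zero, AddCircle.volume_closedBall]
  norm_num

lemma D_null : volume D = 0 := by
  have h1 : D = ⋃ z ∈ D, {z} := (Set.biUnion_of_singleton D).symm
  rw [h1]
  exact (measure_biUnion_null_iff D_countable).mpr fun z _ => singleton_null z

lemma hDae : ∀ᵐ z ∂(volume : Measure C), z ∉ D := by
  rw [MeasureTheory.ae_iff]
  have h1 : {z : C | ¬ z ∉ D} = D := by ext z; simp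
  rw [h1]; exact D_null

lemma univ_measure_ne_zero : (volume : Measure C) Set.univ ≠ 0 := by
  rw [AddCircle.measure_univ]
  simp

end
end Lacz

-- continuation: the negative side and the main assembly
namespace Lacz
noncomputable section
open MeasureTheory Set

lemma neighbor_finite (x : XX) : (G.neighborSet x).Finite := by
  rw [neighborSet_eq]; exact (Set.finite_singleton _).insert _

lemma toFinset_neighbors (x : XX) (hfin : (G.neighborSet x).Finite) :
    hfin.toFinset = {sA x, sB x} := by
  classical
  ext y
  simp only [Set.Finite.mem_toFinset, neighborSet_eq, Set.mem_insert_iff, Set.mem_singleton_iff,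
    Finset.mem_insert, Finset.mem_singleton]

lemma no_integral_flow :
    ¬(∃ ψ : XX → XX → ℝ,
      Measurable (fun p : {p : XX × XX // G.Adj p.1 p.2} => ψ p.val.1 p.val.2) ∧
      IsFlowS G (fun x => (ff x : ℝ)) ψ ∧
      ∀ x y, G.Adj x y → ∃ m : ℤ, ψ x y = (m : ℝ)) := by
  classical
  rintro ⟨ψ, hmeas, ⟨hanti, hsum⟩, hint⟩
  set p : XX → ℝ := fun x => ψ x (sA x) with hp
  set q : XX → ℝ := fun x => ψ x (sB x) with hq
  have hpq : ∀ x, p x + q x = ff x := by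
    intro x
    have hs := hsum x (neighbor_finite x)
    rw [toFinset_neighbors x (neighbor_finite x), Finset.sum_pair (sA_ne_sB x)] at hs
    exact hs
  have hpa : ∀ x, p (sA x) = -p x := by
    intro x
    have h1 := hanti x (sA x) (adjA x)
    have h2 : p (sA x) = ψ (sA x) x := by
      show ψ (sA x) (sA (sA x)) = ψ (sA x) x
      rw [sA_sA]
    rw [h2]; linarith [h1]
  have hqb : ∀ x, q (sB x) = -q x := by
    intro x
    have h1 := hanti x (sB x) (adjB x)
    have h2 : q (sB x) = ψ (sB x) x := by
      show ψ (sB x) (sB (sB x)) = ψ (sB x) x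
      rw [sB_sB]
    rw [h2]; linarith [h1]
  have hpt : ∀ x, p (tt x) = p x - ff x - ff (sB x) := by
    intro x
    have h1 : p (tt x) = -p (sB x) := by
      rw [← sA_sB x]; exact hpa (sB x)
    have h2 := hpq (sB x)
    have h3 := hqb x
    have h4 := hpq x
    rw [h1]; linarith
  set d : XX → ℝ := fun x => p x - p0 x with hd
  have hp0t : ∀ x, p0 (tt x) = p0 x - ff x - ff (sB x) := by
    intro x
    have := p0_T x
    linarith
  have hdT : ∀ x, d (tt x) = d x := by
    intro x
    have h1 := hpt x
    have h2 := hp0t x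
    simp only [hd]
    rw [h1, h2]; ring
  have hdB : ∀ x, d (sB x) = -d x := by
    intro x
    have h1 : p (sB x) = ff (sB x) + ff x - p x := by
      have h2 := hpq (sB x)
      have h3 := hqb x
      have h4 := hpq x
      linarith
    have h5 : p0 (sB x) = (ff x : ℝ) + ff (sB x) - p0 x := by
      have h6 := p0_sB x
      have h7 := hp0t x
      rw [h6, h7]; ring
    simp only [hd]
    rw [h1, h5]; ring
  have hd0 : ∀ x, d x ≠ 0 := by
    intro x h0
    obtain ⟨m, hm⟩ := hint x (sA x) (adjA x)
    have h1 : p x = p0 x := by simpa [hd, sub_eq_zero] using h0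
    have h2 : (m : ℝ) = (n0 x : ℝ) + 1/2 := by
      rw [← hm]
      show ψ x (sA x) = _
      have : ψ x (sA x) = p x := rfl
      rw [this, h1, p0]
    have h3 : ((2*m - 2*n0 x : ℤ) : ℝ) = 1 := by push_cast; linarith
    have h4 : (2*m - 2*n0 x : ℤ) = 1 := by exact_mod_cast h3
    omega
  have hdmeas : Measurable d := by
    have hmap : Measurable (fun x : XX => (⟨(x, sA x), adjA x⟩ : {p : XX × XX // G.Adj p.1 p.2})) :=
      Measurable.subtype_mk (measurable_id.prodMk measurable_sA)
    have hpmeas : Measurable p := hmeas.comp hmap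
    exact hpmeas.sub measurable_p0
  set P : Set XX := {x | 0 < d x} with hP
  have hPmeas : MeasurableSet P := measurableSet_lt measurable_const hdmeas
  set QQ : Set C := Subtype.val '' P with hQQ
  have hQmeas : MeasurableSet QQ := D_measurable.compl.subtype_image hPmeas
  have mem_QQ : ∀ z (hz : z ∉ D), (z ∈ QQ ↔ 0 < d ⟨z, hz⟩) := by
    intro z hz
    constructor
    · rintro ⟨x, hx, hxz⟩
      have : x = ⟨z, hz⟩ := Subtype.ext hxz
      rwa [this] at hx
    · intro h
      exact ⟨⟨z, hz⟩, h, rfl⟩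
  have hinvQ : (fun z : C => z + aa) ⁻¹' QQ =ᵐ[volume] QQ := by
    rw [Filter.eventuallyEq_set]
    filter_upwards [hDae] with z hz
    have hz' : z + aa ∉ D := D_add hz
    rw [Set.mem_preimage, mem_QQ _ hz', mem_QQ _ hz]
    have : (⟨z + aa, hz'⟩ : XX) = tt ⟨z, hz⟩ := rfl
    rw [this, hdT]
  have hnegQ : (Neg.neg ⁻¹' QQ : Set C) =ᵐ[volume] (QQᶜ : Set C) := by
    rw [Filter.eventuallyEq_set]
    filter_upwards [hDae] with z hz
    have hz' : -z ∉ D := D_neg hz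
    rw [Set.mem_preimage, mem_QQ _ hz', Set.mem_compl_iff, mem_QQ _ hz]
    have h1 : (⟨-z, hz'⟩ : XX) = sB ⟨z, hz⟩ := rfl
    rw [h1, hdB]
    constructor
    · intro h hcon; linarith
    · intro h
      rcases lt_trichotomy (d ⟨z, hz⟩) 0 with hlt | heq | hgt
      · linarith
      · exact absurd heq (hd0 _)
      · exact absurd hgt h
  have hQc : volume QQᶜ = volume QQ := by
    rw [← measure_congr hnegQ]
    exact MeasureTheory.Measure.measure_preimage_neg volume QQ
  have hcontra : volume (Set.univ : Set C) = 0 := by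
    have h1 : volume QQ = 0 := by
      rcases erg hQmeas hinvQ with h | h
      · exact h
      · rw [hQc] at h; exact h
    have h2 : volume QQᶜ = 0 := by rw [hQc]; exact h1
    have h3 : (Set.univ : Set C) = QQ ∪ QQᶜ := (Set.union_compl_self QQ).symm
    rw [h3]
    have := measure_union_le (μ := (volume : Measure C)) QQ QQᶜ
    rw [h1, h2] at this
    simpa using this
  exact univ_measure_ne_zero hcontra

/-- The positive side: `phi` is a Borel flow for `ff`. -/
lemma phi_is_flow : IsFlowS G (fun x => (ff x : ℝ)) phi := by
  constructor
  · intro x y h; exact phi_antisym h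
  · intro x hfin
    classical
    rw [toFinset_neighbors x hfin, Finset.sum_pair (sA_ne_sB x), phi_A, phi_B]
    ring

lemma phi_measurable :
    Measurable (fun p : {p : XX × XX // G.Adj p.1 p.2} => phi p.val.1 p.val.2) :=
  measurable_phi_pair.comp measurable_subtype_coe

end
end Lacz


/-- **(Laczkovich).** There are a 2-regular acyclic Borel graph `G` on a standard Borel
space `X` and a Borel function `f : X → ℤ` such that `G` has a Borel `f`-flow but no
integral Borel `f`-flow. -/
theorem exists_no_integral_borel_flow :
    ∃ (X : Type) (m : MeasurableSpace X), HasLaczkovichExample X := by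
  refine ⟨Lacz.XX, inferInstance, ?_⟩
  unfold HasLaczkovichExample
  exact ⟨Lacz.D_measurable.compl.standardBorel, Lacz.G, Lacz.ff,
    Lacz.edge_measurable, Lacz.degree_two, Lacz.acyclic, Lacz.measurable_ff,
    ⟨Lacz.phi, Lacz.phi_measurable, Lacz.phi_is_flow⟩, Lacz.no_integral_flow⟩
end
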